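/- arXiv:1003.3950 — 9 statements merged into one kernel-verified Lean document; each statement's English description precedes it below -/
import Mathlib

section
/- For every integer D ≥ 2 and every p < 1, P_p-almost surely there exists no 1-Lipschitz injection from Z^2 into the set W_p(Z^D) of open sites of site percolation on Z^D. (Equivalently, p_c(2, D, 1) = 1.) -/
open MeasureTheory

/-- The ℓ¹-norm of an integer vector. -/
def norm1 {n : ℕ} (x : Fin n → ℤ) : ℤ := ∑ i, |x i|

/-- `μ` is a product Bernoulli(`p`) measure on site configurations: a probability
measure under which the states of finitely many sites are independent, each site
being open (`true`) with probability `p`. -/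
def IsBernoulli {S : Type*} (p : ℝ) (μ : Measure (S → Bool)) : Prop :=
  IsProbabilityMeasure μ ∧
    ∀ (A : Finset S) (b : S → Bool),
      μ {ω | ∀ s ∈ A, ω s = b s} = ∏ s ∈ A, ENNReal.ofReal (if b s then p else 1 - p)

/-- `f : ℤ^d → ℤ^D` is `M`-Lipschitz: images of ℓ¹-neighbours are at ℓ¹-distance
at most `M`. -/
def IsLip {d D : ℕ} (M : ℕ) (f : (Fin d → ℤ) → (Fin D → ℤ)) : Prop :=
  ∀ x y, norm1 (x - y) = 1 → norm1 (f x - f y) ≤ (M : ℤ)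
namespace NoLip

variable {D : ℕ}

lemma norm1_nonneg (x : Fin D → ℤ) : 0 ≤ norm1 x :=
  Finset.sum_nonneg fun i _ => abs_nonneg _

lemma norm1_eq_zero {x : Fin D → ℤ} (h : norm1 x = 0) : x = 0 := by
  have := (Finset.sum_eq_zero_iff_of_nonneg (fun i _ => abs_nonneg (x i))).1 h
  funext i
  simpa using abs_eq_zero.1 (this i (Finset.mem_univ i))

lemma norm1_add_le (x y : Fin D → ℤ) : norm1 (x + y) ≤ norm1 x + norm1 y := by
  show (∑ i, |(x + y) i|) ≤ _
  rw [norm1, norm1, ← Finset.sum_add_distrib]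
  exact Finset.sum_le_sum fun i _ => abs_add_le _ _

lemma norm1_parity (x : Fin D → ℤ) : (2 : ℤ) ∣ norm1 x - ∑ i, x i := by
  rw [norm1, ← Finset.sum_sub_distrib]
  refine Finset.dvd_sum fun i _ => ?_
  rcases abs_choice (x i) with h | h <;> rw [h] <;> ring_nf <;> simp [dvd_mul_right]

/-- structure of ℓ¹-unit vectors -/
lemma unit_struct {x : Fin D → ℤ} (h : norm1 x = 1) :
    ∃ i, |x i| = 1 ∧ ∀ j, j ≠ i → x j = 0 := by
  have hx : x ≠ 0 := by
    intro h0; rw [h0] at h; simp [norm1] at h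
  have : ∃ i, x i ≠ 0 := by
    by_contra hc; push_neg at hc; exact hx (funext fun i => hc i)
  obtain ⟨i, hi⟩ := this
  have h1 : 1 ≤ |x i| := by
    have hnn := abs_nonneg (x i)
    rcases abs_choice (x i) with h' | h' <;> omega
  have hsplit : |x i| + ∑ j ∈ Finset.univ.erase i, |x j| = 1 := by
    rw [← h]
    exact Finset.add_sum_erase _ (fun j => |x j|) (Finset.mem_univ i)
  have hrest : ∑ j ∈ Finset.univ.erase i, |x j| = 0 := by
    have := Finset.sum_nonneg (fun j (_ : j ∈ Finset.univ.erase i) => abs_nonneg (x j))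
    omega
  refine ⟨i, by omega, fun j hj => ?_⟩
  have := (Finset.sum_eq_zero_iff_of_nonneg
    (fun j _ => abs_nonneg (x j))).1 hrest j (Finset.mem_erase.2 ⟨hj, Finset.mem_univ j⟩)
  have := abs_choice (x j)
  omega

/-- The square lemma: a non-degenerate 4-cycle in ℤ^D is a unit square. -/
lemma square {a b g : Fin D → ℤ} (ha : norm1 a = 1) (hb : norm1 b = 1)
    (hga : norm1 (g - a) = 1) (hgb : norm1 (g - b) = 1)
    (hab : a ≠ b) (hg : g ≠ 0) : g = a + b := by
  have hg2 : norm1 g = 2 := by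
    have hle : norm1 g ≤ 2 := by
      have := norm1_add_le a (g - a)
      simp only [add_sub_cancel] at this
      omega
    have hpos : norm1 g ≠ 0 := fun h0 => hg (norm1_eq_zero h0)
    have hnn := norm1_nonneg g
    have d1 := norm1_parity g
    have d2 := norm1_parity a
    have d3 := norm1_parity (g - a)
    have hs : ∑ i, (g - a) i = (∑ i, g i) - ∑ i, a i := by
      rw [← Finset.sum_sub_distrib]; rfl
    rw [hs] at d3
    rw [ha] at d2; rw [hga] at d3
    omega
  -- pointwise equality in triangle inequality
  have key : ∀ (u : Fin D → ℤ), norm1 u = 1 → norm1 (g - u) = 1 →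
      ∀ m, |g m| = |u m| + |(g - u) m| := by
    intro u hu hgu
    have hsum : ∑ m, |g m| = ∑ m, (|u m| + |(g - u) m|) := by
      rw [Finset.sum_add_distrib]
      show norm1 g = norm1 u + norm1 (g - u)
      omega
    have hle : ∀ m ∈ Finset.univ, |g m| ≤ |u m| + |(g - u) m| := by
      intro m _
      have : g m = u m + (g - u) m := by simp
      rw [this]; exact abs_add_le _ _
    intro m
    exact (Finset.sum_eq_sum_iff_of_le hle).1 hsum m (Finset.mem_univ m)
  have keya := key a ha hga
  have keyb := key b hb hgb
  obtain ⟨ia, hia1, hia0⟩ := unit_struct ha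
  obtain ⟨ib, hib1, hib0⟩ := unit_struct hb
  by_cases hii : ia = ib
  · exfalso
    apply hab
    funext j
    by_cases hj : j = ia
    · subst hj; subst hii
      have e1 := keya j
      have e2 := keyb j
      have f1 := abs_choice (g j); have f2 := abs_choice (a j)
      have f3 := abs_choice ((g - a) j); have f4 := abs_choice (b j)
      have f5 := abs_choice ((g - b) j)
      have g1 : (g - a) j = g j - a j := rfl
      have g2 : (g - b) j = g j - b j := rfl
      have n1 := abs_nonneg (g j); have n2 := abs_nonneg ((g-a) j)
      have n3 := abs_nonneg ((g-b) j)
      omega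
    · rw [hia0 j hj, hib0 j (hii ▸ hj)]
  · -- ia ≠ ib
    have hgia : 1 ≤ |g ia| := by have := keya ia; have := abs_nonneg ((g-a) ia); omega
    have hgib : 1 ≤ |g ib| := by have := keyb ib; have := abs_nonneg ((g-b) ib); omega
    have hpair : |g ia| + |g ib| ≤ 2 := by
      have hsub : ({ia, ib} : Finset (Fin D)) ⊆ Finset.univ := Finset.subset_univ _
      have := Finset.sum_le_sum_of_subset_of_nonneg hsub
        (fun j _ _ => abs_nonneg (g j))
      rw [Finset.sum_pair hii] at this
      calc |g ia| + |g ib| ≤ ∑ m, |g m| := this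
        _ = 2 := hg2
    have hone : |g ia| = 1 ∧ |g ib| = 1 := by omega
    have hrest : ∀ m, m ≠ ia → m ≠ ib → g m = 0 := by
      intro m hma hmb
      have hsub : ({ia, ib} : Finset (Fin D)) ⊆ Finset.univ := Finset.subset_univ _
      have hsd := Finset.sum_sdiff hsub (f := fun j => |g j|)
      rw [Finset.sum_pair hii] at hsd
      have hz : ∑ j ∈ Finset.univ \ {ia, ib}, |g j| = 0 := by
        have : (∑ j ∈ Finset.univ \ {ia, ib}, |g j|) + (|g ia| + |g ib|) = 2 := by
          rw [hsd]; exact hg2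
        omega
      have := (Finset.sum_eq_zero_iff_of_nonneg
        (fun j _ => abs_nonneg (g j))).1 hz m
        (by simp [Finset.mem_sdiff, hma, hmb])
      have := abs_choice (g m)
      omega
    funext m
    by_cases hma : m = ia
    · subst hma
      have e1 := keya m
      have g1 : (g - a) m = g m - a m := rfl
      have hbm : b m = 0 := hib0 m hii
      have f1 := abs_choice (g m); have f2 := abs_choice (a m)
      have f3 := abs_choice ((g - a) m)
      have : |g m| = 1 := hone.1
      simp only [Pi.add_apply]
      omega
    · by_cases hmb : m = ib
      · subst hmb
        have e1 := keyb m
        have g1 : (g - b) m = g m - b m := rfl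
        have ham : a m = 0 := hia0 m hma
        have f1 := abs_choice (g m); have f2 := abs_choice (b m)
        have f3 := abs_choice ((g - b) m)
        have : |g m| = 1 := hone.2
        simp only [Pi.add_apply]
        omega
      · simp only [Pi.add_apply]
        rw [hrest m hma hmb, hia0 m hma, hib0 m hmb]
        ring


/-- signed unit step vectors -/
def st (D : ℕ) (z : Fin D × Bool) : Fin D → ℤ :=
  fun j => if j = z.1 then (if z.2 then 1 else -1) else 0

lemma exists_st {u : Fin D → ℤ} (h : norm1 u = 1) : ∃ z : Fin D × Bool, u = st D z := by
  obtain ⟨i, hi1, hi0⟩ := unit_struct h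
  refine ⟨(i, decide (u i = 1)), funext fun j => ?_⟩
  unfold st
  by_cases hj : j = i
  · subst hj
    rcases abs_choice (u j) with h' | h' <;> simp_all <;> omega
  · simp [hj, hi0 j hj]

def v2 (i j : ℤ) : Fin 2 → ℤ := fun k => if k = 0 then i else j

lemma v2_sub (a b c d : ℤ) : v2 a b - v2 c d = v2 (a - c) (b - d) := by
  funext k; simp only [Pi.sub_apply, v2]; split <;> ring

lemma norm1_v2 (a b : ℤ) : norm1 (v2 a b) = |a| + |b| := by
  show ∑ k : Fin 2, |v2 a b k| = _
  rw [Fin.sum_univ_two]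
  simp [v2]

lemma v2_inj {a b c d : ℤ} (h : v2 a b = v2 c d) : a = c ∧ b = d := by
  constructor
  · have := congrFun h 0; simpa [v2] using this
  · have := congrFun h 1; simpa [v2] using this

section f
variable {f : (Fin 2 → ℤ) → (Fin D → ℤ)} (hfi : Function.Injective f)
  (hfl : IsLip 1 f)

include hfi hfl in
lemma step_unit {x y : Fin 2 → ℤ} (h : norm1 (x - y) = 1) : norm1 (f x - f y) = 1 := by
  have hle := hfl x y h
  have hne : x ≠ y := by
    intro he; rw [he] at h; simp [norm1] at h
  have : f x - f y ≠ 0 := sub_ne_zero.2 (fun he => hne (hfi he))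
  have h0 : norm1 (f x - f y) ≠ 0 := fun hc => this (norm1_eq_zero hc)
  have := norm1_nonneg (f x - f y)
  omega

include hfi hfl in
lemma square_f (i j : ℤ) :
    f (v2 (i+1) (j+1)) = f (v2 (i+1) j) + f (v2 i (j+1)) - f (v2 i j) := by
  set F00 := f (v2 i j)
  have ha : norm1 (f (v2 (i+1) j) - F00) = 1 := by
    apply step_unit hfi hfl; rw [v2_sub]; simp [norm1_v2]
  have hb : norm1 (f (v2 i (j+1)) - F00) = 1 := by
    apply step_unit hfi hfl; rw [v2_sub]; simp [norm1_v2]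
  have hga : norm1 ((f (v2 (i+1) (j+1)) - F00) - (f (v2 (i+1) j) - F00)) = 1 := by
    have : (f (v2 (i+1) (j+1)) - F00) - (f (v2 (i+1) j) - F00)
        = f (v2 (i+1) (j+1)) - f (v2 (i+1) j) := by abel
    rw [this]
    apply step_unit hfi hfl; rw [v2_sub]; simp [norm1_v2]
  have hgb : norm1 ((f (v2 (i+1) (j+1)) - F00) - (f (v2 i (j+1)) - F00)) = 1 := by
    have : (f (v2 (i+1) (j+1)) - F00) - (f (v2 i (j+1)) - F00)
        = f (v2 (i+1) (j+1)) - f (v2 i (j+1)) := by abel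
    rw [this]
    apply step_unit hfi hfl; rw [v2_sub]; simp [norm1_v2]
  have hab : f (v2 (i+1) j) - F00 ≠ f (v2 i (j+1)) - F00 := by
    intro hc
    have h2 := hfi (sub_left_inj.mp hc)
    have := (v2_inj h2).1
    omega
  have hgne : f (v2 (i+1) (j+1)) - F00 ≠ 0 := by
    intro hc
    have : f (v2 (i+1) (j+1)) = F00 := by
      have := sub_eq_zero.mp hc; exact this
    have h2 := hfi this
    have := (v2_inj h2).1
    omega
  have := square ha hb hga hgb hab hgne
  have h3 : f (v2 (i+1) (j+1)) - F00
      = (f (v2 (i+1) j) - F00) + (f (v2 i (j+1)) - F00) := this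
  have : f (v2 (i+1) (j+1)) = F00 + ((f (v2 (i+1) j) - F00) + (f (v2 i (j+1)) - F00)) := by
    rw [← h3]; abel
  rw [this]; abel

include hfi hfl in
lemma grid_decomp : ∀ (j i : ℕ),
    f (v2 i j) = f (v2 i 0) + f (v2 0 j) - f (v2 0 0) := by
  intro j
  induction j with
  | zero =>
    intro i; simp
  | succ j ihj =>
    intro i
    induction i with
    | zero => simp
    | succ i ihi =>
      have hsq := square_f hfi hfl (i : ℤ) (j : ℤ)
      have h1 := ihj (i + 1)
      have h2 := ihj i
      push_cast at hsq ihi h1 h2 ⊢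
      rw [hsq, ihi, h1, h2]
      abel

end f

/-- telescoping sums of increments -/
lemma telescope {n : ℕ} (u : ℕ → Fin D → ℤ) (α : Fin n → Fin D × Bool)
    (hα : ∀ k : Fin n, u (k + 1) - u k = st D (α k)) :
    ∀ i, i ≤ n → u i = u 0 + ∑ k : Fin n, (if (k : ℕ) < i then st D (α k) else 0) := by
  intro i
  induction i with
  | zero =>
    intro _
    have : ∀ k : Fin n, (if (k : ℕ) < 0 then st D (α k) else 0) = 0 := by
      intro k; simp
    rw [Finset.sum_congr rfl (fun k _ => this k), Finset.sum_const, smul_zero, add_zero]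
  | succ i ih =>
    intro hi
    have hi' : i < n := hi
    have split : ∀ k : Fin n, (if (k : ℕ) < i + 1 then st D (α k) else 0)
        = (if (k : ℕ) < i then st D (α k) else 0)
          + (if k = ⟨i, hi'⟩ then st D (α k) else 0) := by
      intro k
      have : k = ⟨i, hi'⟩ ↔ (k : ℕ) = i := by
        constructor
        · intro h; rw [h]
        · intro h; exact Fin.ext h
      split_ifs with h1 h2 h3 h4 h5 <;> simp_all <;> omega
    rw [Finset.sum_congr rfl (fun k _ => split k), Finset.sum_add_distrib,
      Finset.sum_ite_eq' Finset.univ (⟨i, hi'⟩ : Fin n) (fun k => st D (α k))]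
    simp only [Finset.mem_univ, if_true]
    have hu := hα ⟨i, hi'⟩
    have : u (i + 1) = u i + st D (α ⟨i, hi'⟩) := by
      rw [← hu]; abel
    rw [this, ih (le_of_lt hi')]
    abel

def pt (c : Fin D → ℤ) {n : ℕ} (α β : Fin n → Fin D × Bool) (i j : ℕ) : Fin D → ℤ :=
  c + ∑ k : Fin n, (if (k : ℕ) < i then st D (α k) else 0)
    + ∑ k : Fin n, (if (k : ℕ) < j then st D (β k) else 0)

lemma matching {f : (Fin 2 → ℤ) → (Fin D → ℤ)} (hfi : Function.Injective f)
    (hfl : IsLip 1 f) (n : ℕ) :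
    ∃ α β : Fin n → Fin D × Bool, ∀ i j : ℕ, i ≤ n → j ≤ n →
      f (v2 i j) = pt (f (v2 0 0)) α β i j := by
  have hrow : ∀ k : ℕ, norm1 (f (v2 ((k : ℤ) + 1) 0) - f (v2 (k : ℤ) 0)) = 1 := by
    intro k
    apply step_unit hfi hfl
    rw [v2_sub]
    simp [norm1_v2]
  have hcol : ∀ k : ℕ, norm1 (f (v2 0 ((k : ℤ) + 1)) - f (v2 0 (k : ℤ))) = 1 := by
    intro k
    apply step_unit hfi hfl
    rw [v2_sub]
    simp [norm1_v2]
  have hex1 : ∀ k : Fin n, ∃ z, f (v2 (((k : ℕ) : ℤ) + 1) 0) - f (v2 ((k : ℕ) : ℤ) 0) = st D z :=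
    fun k => exists_st (hrow k)
  have hex2 : ∀ k : Fin n, ∃ z, f (v2 0 (((k : ℕ) : ℤ) + 1)) - f (v2 0 ((k : ℕ) : ℤ)) = st D z :=
    fun k => exists_st (hcol k)
  choose α hα using hex1
  choose β hβ using hex2
  refine ⟨α, β, fun i j hi hj => ?_⟩
  have hu := telescope (D := D) (fun m => f (v2 m 0)) α (fun k => by push_cast; exact hα k) i hi
  have hw := telescope (D := D) (fun m => f (v2 0 m)) β (fun k => by push_cast; exact hβ k) j hj
  have hg := grid_decomp hfi hfl j i
  have h0 : ((0 : ℕ) : ℤ) = (0 : ℤ) := rfl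
  rw [h0] at hu hw
  rw [hg, hu, hw]
  unfold pt
  abel

open scoped ENNReal

lemma key_bound {D : ℕ} (p : ℝ) (μ : Measure ((Fin D → ℤ) → Bool))
    (hμ2 : ∀ (A : Finset (Fin D → ℤ)) (b : (Fin D → ℤ) → Bool),
      μ {ω | ∀ s ∈ A, ω s = b s} = ∏ s ∈ A, ENNReal.ofReal (if b s then p else 1 - p))
    (c : Fin D → ℤ) (n : ℕ) :
    μ {ω | ∃ f : (Fin 2 → ℤ) → (Fin D → ℤ),
        Function.Injective f ∧ IsLip 1 f ∧ (∀ x, ω (f x) = true) ∧ f (v2 0 0) = c}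
      ≤ (((2 * D) ^ (2 * n) : ℕ) : ℝ≥0∞) * (ENNReal.ofReal p) ^ ((n + 1) ^ 2) := by
  classical
  set q := ENNReal.ofReal p with hq
  set P : ((Fin n → Fin D × Bool) × (Fin n → Fin D × Bool)) → Prop := fun v =>
    Function.Injective fun ij : Fin (n + 1) × Fin (n + 1) =>
      pt c v.1 v.2 (ij.1 : ℕ) (ij.2 : ℕ) with hP
  set E : ((Fin n → Fin D × Bool) × (Fin n → Fin D × Bool)) → Set ((Fin D → ℤ) → Bool) :=
    fun v => {ω | ∀ ij : Fin (n + 1) × Fin (n + 1),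
      ω (pt c v.1 v.2 (ij.1 : ℕ) (ij.2 : ℕ)) = true} with hE
  have hsub : {ω | ∃ f : (Fin 2 → ℤ) → (Fin D → ℤ),
        Function.Injective f ∧ IsLip 1 f ∧ (∀ x, ω (f x) = true) ∧ f (v2 0 0) = c}
      ⊆ ⋃ v ∈ Finset.univ.filter P, E v := by
    rintro ω ⟨f, hfi, hfl, hop, hc⟩
    obtain ⟨α, β, hmatch⟩ := matching hfi hfl n
    rw [hc] at hmatch
    have heq : ∀ ij : Fin (n + 1) × Fin (n + 1),
        pt c α β (ij.1 : ℕ) (ij.2 : ℕ) = f (v2 (ij.1 : ℕ) (ij.2 : ℕ)) := by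
      intro ij
      exact (hmatch ij.1 ij.2 (Nat.lt_succ_iff.mp ij.1.isLt) (Nat.lt_succ_iff.mp ij.2.isLt)).symm
    refine Set.mem_iUnion₂.2 ⟨(α, β), ?_, ?_⟩
    · rw [Finset.mem_filter]
      refine ⟨Finset.mem_univ _, ?_⟩
      intro ij kl h
      simp only at h
      rw [heq ij, heq kl] at h
      have h2 := v2_inj (hfi h)
      have e1 : (ij.1 : ℕ) = (kl.1 : ℕ) := by exact_mod_cast h2.1
      have e2 : (ij.2 : ℕ) = (kl.2 : ℕ) := by exact_mod_cast h2.2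
      exact Prod.ext (Fin.ext e1) (Fin.ext e2)
    · intro ij
      rw [heq ij]
      exact hop _
  have hcount : (Finset.univ.filter P).card ≤ (2 * D) ^ (2 * n) := by
    calc (Finset.univ.filter P).card ≤ Finset.univ.card := Finset.card_filter_le _ _
      _ = (2 * D) ^ (2 * n) := by
        rw [Finset.card_univ]
        rw [Fintype.card_prod, Fintype.card_fun, Fintype.card_prod, Fintype.card_fin,
          Fintype.card_fin, Fintype.card_bool]
        ring
  have hev : ∀ v ∈ Finset.univ.filter P, μ (E v) ≤ q ^ ((n + 1) ^ 2) := by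
    intro v hv
    have hPv : P v := (Finset.mem_filter.mp hv).2
    set A : Finset (Fin D → ℤ) := Finset.image
      (fun ij : Fin (n + 1) × Fin (n + 1) => pt c v.1 v.2 (ij.1 : ℕ) (ij.2 : ℕ))
      Finset.univ with hA
    have hEA : E v = {ω | ∀ s ∈ A, ω s = (fun _ => true) s} := by
      ext ω
      simp only [hE, hA, Set.mem_setOf_eq, Finset.mem_image, Finset.mem_univ, true_and]
      constructor
      · rintro h s ⟨ij, rfl⟩
        exact h ij
      · intro h ij
        exact h _ ⟨ij, rfl⟩
    rw [hEA, hμ2 A (fun _ => true)]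
    have : ∀ s ∈ A, ENNReal.ofReal (if (fun _ => true) s then p else 1 - p) = q := by
      intro s _; simp [hq]
    rw [Finset.prod_congr rfl this, Finset.prod_const]
    have hcard : A.card = (n + 1) ^ 2 := by
      rw [hA, Finset.card_image_of_injective _ hPv, Finset.card_univ, Fintype.card_prod,
        Fintype.card_fin]
      ring
    rw [hcard]
  calc μ _ ≤ μ (⋃ v ∈ Finset.univ.filter P, E v) := measure_mono hsub
    _ ≤ ∑ v ∈ Finset.univ.filter P, μ (E v) := measure_biUnion_finset_le _ _
    _ ≤ ∑ _v ∈ Finset.univ.filter P, q ^ ((n + 1) ^ 2) := Finset.sum_le_sum hev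
    _ = ((Finset.univ.filter P).card : ℝ≥0∞) * q ^ ((n + 1) ^ 2) := by
        rw [Finset.sum_const, nsmul_eq_mul]
    _ ≤ (((2 * D) ^ (2 * n) : ℕ) : ℝ≥0∞) * q ^ ((n + 1) ^ 2) := by
        exact mul_le_mul_left (by exact_mod_cast hcount) _

lemma null_c {D : ℕ} (p : ℝ) (hp : p < 1) (μ : Measure ((Fin D → ℤ) → Bool))
    (hμ2 : ∀ (A : Finset (Fin D → ℤ)) (b : (Fin D → ℤ) → Bool),
      μ {ω | ∀ s ∈ A, ω s = b s} = ∏ s ∈ A, ENNReal.ofReal (if b s then p else 1 - p))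
    (c : Fin D → ℤ) :
    μ {ω | ∃ f : (Fin 2 → ℤ) → (Fin D → ℤ),
        Function.Injective f ∧ IsLip 1 f ∧ (∀ x, ω (f x) = true) ∧ f (v2 0 0) = c} = 0 := by
  set q := ENNReal.ofReal p with hqdef
  have hq1 : q < 1 := ENNReal.ofReal_lt_one.2 hp
  have hqle : q ≤ 1 := le_of_lt hq1
  set K : ℝ≥0∞ := ((2 * D : ℕ) : ℝ≥0∞) with hKdef
  have hKtop : K ^ 2 ≠ ⊤ := by
    rw [hKdef]
    exact ENNReal.pow_ne_top (ENNReal.natCast_ne_top _)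
  have hbound : ∀ n : ℕ, μ {ω | ∃ f : (Fin 2 → ℤ) → (Fin D → ℤ),
      Function.Injective f ∧ IsLip 1 f ∧ (∀ x, ω (f x) = true) ∧ f (v2 0 0) = c}
      ≤ (K ^ 2 * q ^ n) ^ n := by
    intro n
    refine le_trans (key_bound p μ hμ2 c n) ?_
    have h1 : (((2 * D) ^ (2 * n) : ℕ) : ℝ≥0∞) = (K ^ 2) ^ n := by
      rw [hKdef, Nat.cast_pow, pow_mul]
    rw [h1]
    have h2 : q ^ ((n + 1) ^ 2) ≤ (q ^ n) ^ n := by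
      rw [← pow_mul]
      exact pow_le_pow_of_le_one (zero_le) hqle (by nlinarith)
    calc (K ^ 2) ^ n * q ^ ((n + 1) ^ 2) ≤ (K ^ 2) ^ n * (q ^ n) ^ n :=
          mul_le_mul_right h2 _
      _ = (K ^ 2 * q ^ n) ^ n := (mul_pow _ _ _).symm
  have htend : Filter.Tendsto (fun n : ℕ => K ^ 2 * q ^ n) Filter.atTop (nhds 0) := by
    have h0 : Filter.Tendsto (fun n : ℕ => q ^ n) Filter.atTop (nhds 0) :=
      ENNReal.tendsto_pow_atTop_nhds_zero_of_lt_one hq1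
    have := ENNReal.Tendsto.const_mul h0 (Or.inr hKtop)
    simpa using this
  obtain ⟨n0, hn0⟩ : ∃ n0, K ^ 2 * q ^ n0 ≤ 2⁻¹ := by
    have := (htend.eventually (eventually_le_nhds (by norm_num : (0 : ℝ≥0∞) < 2⁻¹)))
    exact this.exists
  have hfinal : ∀ n, n0 ≤ n → μ {ω | ∃ f : (Fin 2 → ℤ) → (Fin D → ℤ),
      Function.Injective f ∧ IsLip 1 f ∧ (∀ x, ω (f x) = true) ∧ f (v2 0 0) = c}
      ≤ (2 : ℝ≥0∞)⁻¹ ^ n := by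
    intro n hn
    refine le_trans (hbound n) (pow_le_pow_left' ?_ n)
    calc K ^ 2 * q ^ n ≤ K ^ 2 * q ^ n0 :=
          mul_le_mul_right (pow_le_pow_of_le_one (zero_le) hqle hn) _
      _ ≤ 2⁻¹ := hn0
  have htend2 : Filter.Tendsto (fun n : ℕ => (2 : ℝ≥0∞)⁻¹ ^ n) Filter.atTop (nhds 0) :=
    ENNReal.tendsto_pow_atTop_nhds_zero_of_lt_one (by norm_num)
  have hle0 := ge_of_tendsto htend2 (Filter.eventually_atTop.2 ⟨n0, hfinal⟩)
  simpa using hle0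

end NoLip


/-- For every `D ≥ 2` and every `p < 1`, `P_p`-a.s. there is no 1-Lipschitz
injection from `ℤ^2` into the open sites of `ℤ^D`. -/
theorem no_one_lipschitz_injection (D : ℕ) (hD : 2 ≤ D) (p : ℝ) (hp : p < 1)
    (μ : Measure ((Fin D → ℤ) → Bool)) (hμ : IsBernoulli p μ) :
    ∀ᵐ ω ∂μ, ¬ ∃ f : (Fin 2 → ℤ) → (Fin D → ℤ),
      Function.Injective f ∧ IsLip 1 f ∧ ∀ x, ω (f x) = true := by
  obtain ⟨hprob, hprod⟩ := hμ
  rw [ae_iff]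
  simp only [not_not]
  have hsub : {ω : (Fin D → ℤ) → Bool | ∃ f : (Fin 2 → ℤ) → (Fin D → ℤ),
        Function.Injective f ∧ IsLip 1 f ∧ ∀ x, ω (f x) = true}
      ⊆ ⋃ c : Fin D → ℤ, {ω | ∃ f : (Fin 2 → ℤ) → (Fin D → ℤ),
        Function.Injective f ∧ IsLip 1 f ∧ (∀ x, ω (f x) = true) ∧ f (NoLip.v2 0 0) = c} := by
    rintro ω ⟨f, h1, h2, h3⟩
    exact Set.mem_iUnion.2 ⟨f (NoLip.v2 0 0), f, h1, h2, h3, rfl⟩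
  have hzero : μ (⋃ c : Fin D → ℤ, {ω | ∃ f : (Fin 2 → ℤ) → (Fin D → ℤ),
      Function.Injective f ∧ IsLip 1 f ∧ (∀ x, ω (f x) = true) ∧ f (NoLip.v2 0 0) = c}) = 0 := by
    refine le_antisymm (le_trans (measure_iUnion_le _) ?_) (zero_le)
    simp [NoLip.null_c p hp μ hprod]
  exact le_antisymm (le_trans (measure_mono hsub) hzero.le) (zero_le)
end

section
/- (Lipschitz percolation.) Let d ≥ 2 and p > 1 − (2d)^{−2}. Then P_p-almost surely there exists a function F : Z^{d−1} → Z_+ (the positive integers) such that |F(x) − F(y)| ≤ 1 whenever ‖x − y‖₁ = 1, and for every x ∈ Z^{d−1} the site (x, F(x)) ∈ Z^d is open. -/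
open MeasureTheory
open ENNReal

namespace LP

variable {e : ℕ}

abbrev Pt (e : ℕ) := (Fin e → ℤ) × ℤ

abbrev Step (e : ℕ) := Option (Fin e × Bool)

def site (u : Pt e) : Fin (e + 1) → ℤ := Fin.snoc u.1 u.2

lemma site_inj : Function.Injective (site (e := e)) := by
  intro u v h
  have h2 : u.2 = v.2 := by
    have := congrFun h (Fin.last e)
    simpa [site] using this
  have h1 : u.1 = v.1 := by
    funext i
    have := congrFun h i.castSucc
    simpa [site] using this
  exact Prod.ext h1 h2

def unitv (j : Fin e) (b : Bool) : Fin e → ℤ :=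
  fun i => if i = j then (if b then 1 else -1) else 0

lemma norm1_neg (v : Fin e → ℤ) : norm1 (-v) = norm1 v := by
  simp [norm1]

lemma norm1_eq_one {v : Fin e → ℤ} (h : norm1 v = 1) : ∃ j b, v = unitv j b := by
  classical
  have hj : ∃ j, v j ≠ 0 := by
    by_contra hc
    push_neg at hc
    simp [norm1, hc] at h
  obtain ⟨j, hj⟩ := hj
  have h1j : 1 ≤ |v j| := Int.one_le_abs hj
  have hsplit : |v j| + ∑ i ∈ Finset.univ.erase j, |v i| = 1 := by
    rw [Finset.add_sum_erase Finset.univ (fun i => |v i|) (Finset.mem_univ j)]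
    exact h
  have hnn : ∀ i ∈ Finset.univ.erase j, 0 ≤ |v i| := fun i _ => abs_nonneg _
  have hz : ∑ i ∈ Finset.univ.erase j, |v i| = 0 :=
    le_antisymm (by linarith) (Finset.sum_nonneg hnn)
  have hre : ∀ i ∈ Finset.univ.erase j, |v i| = 0 :=
    (Finset.sum_eq_zero_iff_of_nonneg hnn).mp hz
  have hvj : |v j| = 1 := by linarith
  have hval : v j = 1 ∨ v j = -1 := by
    rcases (abs_eq (by norm_num : (0:ℤ) ≤ 1)).mp hvj with h' | h' <;> tauto
  refine ⟨j, if v j = 1 then true else false, ?_⟩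
  funext i
  by_cases hi : i = j
  · subst hi
    rcases hval with h' | h' <;> simp [unitv, h']
  · have : |v i| = 0 := hre i (by simp [hi])
    have : v i = 0 := abs_eq_zero.mp this
    simp [unitv, hi, this]

lemma norm1_unitv (j : Fin e) (b : Bool) : norm1 (unitv j b) = 1 := by
  classical
  simp only [norm1, unitv]
  rw [Finset.sum_eq_single j]
  · cases b <;> norm_num
  · intro i _ hi; simp [hi]
  · simp

def apStep (s : Step e) (u : Pt e) : Pt e :=
  match s with
  | none => (u.1, u.2 - 1)
  | some (j, b) => (u.1 + unitv j b, u.2 + 1)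

def run (u : Pt e) : List (Step e) → Pt e
  | [] => u
  | s :: σ => run (apStep s u) σ

def downL (u : Pt e) : List (Step e) → List (Fin (e + 1) → ℤ)
  | [] => []
  | none :: σ => site u :: downL (apStep none u) σ
  | some s :: σ => downL (apStep (some s) u) σ

def trail (u : Pt e) : List (Step e) → List (Fin (e + 1) → ℤ)
  | [] => [site u]
  | s :: σ => site u :: trail (apStep s u) σ

def ValidP (ω : (Fin (e + 1) → ℤ) → Bool) (u : Pt e) (σ : List (Step e)) : Prop :=
  (∀ v ∈ downL u σ, ω v = false) ∧ (run u σ).2 ≤ 0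

inductive Reach (ω : (Fin (e + 1) → ℤ) → Bool) : Pt e → Prop
  | base (x : Fin e → ℤ) (k : ℤ) : k ≤ 0 → Reach ω (x, k)
  | down (x : Fin e → ℤ) (k : ℤ) : Reach ω (x, k) → ω (site (x, k + 1)) = false →
      Reach ω (x, k + 1)
  | side (x y : Fin e → ℤ) (k : ℤ) : Reach ω (y, k) → norm1 (x - y) = 1 →
      Reach ω (x, k - 1)

lemma run_append (u : Pt e) (σ₁ σ₂ : List (Step e)) :
    run u (σ₁ ++ σ₂) = run (run u σ₁) σ₂ := by
  induction σ₁ generalizing u with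
  | nil => rfl
  | cons s σ ih => simp [run, ih]

lemma downL_append (u : Pt e) (σ₁ σ₂ : List (Step e)) :
    downL u (σ₁ ++ σ₂) = downL u σ₁ ++ downL (run u σ₁) σ₂ := by
  induction σ₁ generalizing u with
  | nil => rfl
  | cons s σ ih =>
    cases s with
    | none => simp [downL, run, ih]
    | some s => simp [downL, run, ih]

lemma run_snd (u : Pt e) (σ : List (Step e)) :
    (run u σ).2 + 2 * ((downL u σ).length : ℤ) = u.2 + σ.length := by
  induction σ generalizing u with
  | nil => simp [run, downL]
  | cons s σ ih =>
    cases s with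
    | none =>
      have := ih (apStep none u)
      simp only [run, downL, List.length_cons, apStep] at *
      push_cast at *
      omega
    | some s =>
      have := ih (apStep (some s) u)
      obtain ⟨j, b⟩ := s
      simp only [run, downL, List.length_cons, apStep] at *
      push_cast at *
      omega

lemma downL_sublist (u : Pt e) (σ : List (Step e)) :
    (downL u σ).Sublist (trail u σ) := by
  induction σ generalizing u with
  | nil => simp [downL, trail]
  | cons s σ ih =>
    cases s with
    | none => exact (ih _).cons₂ _
    | some s => exact (ih _).cons _

lemma trail_eq_map (u : Pt e) (σ : List (Step e)) :
    trail u σ = (List.range (σ.length + 1)).map (fun i => site (run u (σ.take i))) := by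
  induction σ generalizing u with
  | nil => simp [trail, run]
  | cons s σ ih =>
    rw [List.range_succ_eq_map]
    simp only [trail, List.map_cons, List.length_cons, List.map_map]
    congr 1
    rw [ih (apStep s u)]
    congr 1

lemma reach_to_valid {ω : (Fin (e + 1) → ℤ) → Bool} {u : Pt e} (h : Reach ω u) :
    ∃ σ, ValidP ω u σ := by
  induction h with
  | base x k hk => exact ⟨[], by simp [ValidP, downL, run, hk]⟩
  | down x k _ hcl ih =>
    obtain ⟨σ, hd, hr⟩ := ih
    refine ⟨none :: σ, ?_, ?_⟩
    · intro v hv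
      simp only [downL, apStep, add_sub_cancel_right, List.mem_cons] at hv
      rcases hv with rfl | hv
      · exact hcl
      · exact hd v hv
    · show (run (apStep none (x, k+1)) σ).2 ≤ 0
      simpa [apStep] using hr
  | side x y k _ hn ih =>
    obtain ⟨σ, hd, hr⟩ := ih
    have hyx : norm1 (y - x) = 1 := by
      rw [show y - x = -(x - y) by ring, norm1_neg]; exact hn
    obtain ⟨j, b, hjb⟩ := norm1_eq_one hyx
    have hap : apStep (some (j, b)) (x, k - 1) = (y, k) := by
      simp only [apStep, Prod.mk.injEq]
      refine ⟨?_, by ring⟩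
      rw [← hjb]; abel
    refine ⟨some (j, b) :: σ, ?_, ?_⟩
    · intro v hv
      simp only [downL, hap, List.mem_cons] at hv
      exact hd v hv
    · show (run (apStep (some (j,b)) (x, k-1)) σ).2 ≤ 0
      rw [hap]; exact hr

lemma valid_to_nodup {ω : (Fin (e + 1) → ℤ) → Bool} :
    ∀ (n : ℕ) (σ : List (Step e)) (u : Pt e), σ.length = n → ValidP ω u σ →
      ∃ σ', ValidP ω u σ' ∧ (trail u σ').Nodup := by
  intro n
  induction n using Nat.strong_induction_on with
  | _ n IH =>
    intro σ u hlen hval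
    by_cases hnd : (trail u σ).Nodup
    · exact ⟨σ, hval, hnd⟩
    -- find duplicated positions
    rw [trail_eq_map, List.Nodup, List.pairwise_map] at hnd
    have hdup : ∃ i j : ℕ, i < j ∧ j ≤ σ.length ∧
        site (run u (σ.take i)) = site (run u (σ.take j)) := by
      by_contra hc
      push_neg at hc
      apply hnd
      rw [List.pairwise_iff_get]
      intro a b hab
      have ha : (a : ℕ) < σ.length + 1 := by simpa using a.2
      have hb : (b : ℕ) < σ.length + 1 := by simpa using b.2
      simp only [List.get_eq_getElem, List.getElem_range]
      exact hc (a : ℕ) (b : ℕ) hab (by omega)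
    obtain ⟨i, j, hij, hjle, heq⟩ := hdup
    have hw : run u (σ.take i) = run u (σ.take j) := site_inj heq
    set σ' : List (Step e) := σ.take i ++ σ.drop j with hσ'
    have hlen' : σ'.length < n := by
      have : σ'.length = i + (σ.length - j) := by
        simp [hσ', List.length_take, List.length_drop]
        omega
      omega
    have htj : σ.take j = σ.take i ++ (σ.take j).drop i := by
      conv_lhs => rw [← List.take_append_drop i (σ.take j)]
      rw [List.take_take, min_eq_left (le_of_lt hij)]
    have hrun' : run u σ' = run u σ := by
      rw [hσ', run_append, hw]
      conv_rhs => rw [← List.take_append_drop j σ]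
      rw [run_append]
    have hdown' : ∀ v ∈ downL u σ', ω v = false := by
      intro v hv
      rw [hσ', downL_append] at hv
      have hfull : downL u σ = downL u (σ.take j) ++ downL (run u (σ.take j)) (σ.drop j) := by
        conv_lhs => rw [← List.take_append_drop j σ]
        rw [downL_append]
      rcases List.mem_append.mp hv with hv | hv
      · apply hval.1
        rw [hfull]
        apply List.mem_append_left
        rw [htj, downL_append]
        exact List.mem_append_left _ hv
      · apply hval.1
        rw [hfull]
        apply List.mem_append_right
        rwa [← hw]
    exact IH σ'.length hlen' σ' u rfl ⟨hdown', by rw [hrun']; exact hval.2⟩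

lemma card_step : Fintype.card (Step e) = 2 * e + 1 := by
  simp [Fintype.card_option, Fintype.card_prod]; ring

lemma tsum_pow_length (c : ℝ≥0∞) :
    ∑' σ : List (Step e), c ^ σ.length = ∑' n : ℕ, (((2 * e + 1 : ℕ) : ℝ≥0∞) * c) ^ n := by
  classical
  have h1 : ∑' σ : List (Step e), c ^ σ.length
      = ∑' z : (Σ n : ℕ, Fin n → Step e), c ^ ((List.equivSigmaTuple (α := Step e)).symm z).length := by
    exact ((List.equivSigmaTuple (α := Step e)).symm.tsum_eq (fun σ => c ^ σ.length)).symm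
  rw [h1]
  have h2 : ∀ z : (Σ n : ℕ, Fin n → Step e),
      c ^ ((List.equivSigmaTuple (α := Step e)).symm z).length = c ^ z.1 := by
    rintro ⟨n, f⟩
    simp [List.equivSigmaTuple]
  rw [tsum_congr h2]
  rw [ENNReal.tsum_sigma' (fun z : Σ n : ℕ, (Fin n → Step e) => c ^ z.1)]
  apply tsum_congr
  intro n
  rw [tsum_fintype]
  simp only [Finset.sum_const, nsmul_eq_mul, mul_pow, Finset.card_univ, Fintype.card_fun, card_step,
    Fintype.card_fin, Nat.cast_pow]


lemma measure_reach_le {e : ℕ} {p : ℝ} {μ : Measure ((Fin (e + 1) → ℤ) → Bool)}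
    (hber : ∀ (A : Finset (Fin (e + 1) → ℤ)) (b : (Fin (e + 1) → ℤ) → Bool),
      μ {ω | ∀ s ∈ A, ω s = b s} = ∏ s ∈ A, ENNReal.ofReal (if b s then p else 1 - p))
    (ρ : ℝ≥0∞) (hρ2 : ENNReal.ofReal (1 - p) ≤ ρ ^ 2) (hρ1 : ρ ≤ 1)
    (x : Fin e → ℤ) (k : ℕ) :
    μ {ω | Reach ω (x, (k : ℤ))} ≤ ρ ^ k * ∑' n : ℕ, (((2 * e + 1 : ℕ) : ℝ≥0∞) * ρ) ^ n := by
  classical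
  set u : Pt e := (x, (k : ℤ)) with hudef
  have hsub : {ω | Reach ω u} ⊆
      ⋃ σ : List (Step e), {ω | ValidP ω u σ ∧ (trail u σ).Nodup} := by
    intro ω hω
    obtain ⟨σ, hσ⟩ := reach_to_valid hω
    obtain ⟨σ', hσ', hnd⟩ := valid_to_nodup σ.length σ u rfl hσ
    exact Set.mem_iUnion.mpr ⟨σ', hσ', hnd⟩
  have key : ∀ σ : List (Step e),
      μ {ω | ValidP ω u σ ∧ (trail u σ).Nodup} ≤ ρ ^ (σ.length + k) := by
    intro σ
    by_cases hcond : (run u σ).2 ≤ 0 ∧ (trail u σ).Nodup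
    · have hndd : (downL u σ).Nodup := (downL_sublist u σ).nodup hcond.2
      set A : Finset (Fin (e + 1) → ℤ) := (downL u σ).toFinset with hA
      have hcard : A.card = (downL u σ).length := List.toFinset_card_of_nodup hndd
      have hexp : σ.length + k ≤ 2 * A.card := by
        have h0 := run_snd u σ
        have hu2 : u.2 = (k : ℤ) := rfl
        rw [hcard]
        omega
      have hevent : {ω | ValidP ω u σ ∧ (trail u σ).Nodup} ⊆
          {ω | ∀ s ∈ A, ω s = (fun _ => false) s} := by
        intro ω hω s hs
        exact hω.1.1 s (List.mem_toFinset.mp hs)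
      calc μ {ω | ValidP ω u σ ∧ (trail u σ).Nodup}
          ≤ μ {ω | ∀ s ∈ A, ω s = (fun _ => false) s} := measure_mono hevent
        _ = ∏ s ∈ A, ENNReal.ofReal (if (fun _ : Fin (e+1) → ℤ => false) s then p else 1 - p) :=
            hber A _
        _ = ENNReal.ofReal (1 - p) ^ A.card := by simp
        _ ≤ (ρ ^ 2) ^ A.card := pow_le_pow_left₀ zero_le hρ2 _
        _ = ρ ^ (2 * A.card) := by rw [← pow_mul]
        _ ≤ ρ ^ (σ.length + k) := pow_le_pow_of_le_one zero_le hρ1 hexp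
    · have hempty : {ω | ValidP ω u σ ∧ (trail u σ).Nodup} = ∅ := by
        ext ω
        simp only [Set.mem_setOf_eq, Set.mem_empty_iff_false, iff_false]
        intro hω
        exact hcond ⟨hω.1.2, hω.2⟩
      simp [hempty]
  calc μ {ω | Reach ω u}
      ≤ ∑' σ : List (Step e), μ {ω | ValidP ω u σ ∧ (trail u σ).Nodup} :=
        (measure_mono hsub).trans (measure_iUnion_le _)
    _ ≤ ∑' σ : List (Step e), ρ ^ (σ.length + k) := ENNReal.tsum_le_tsum key
    _ = ∑' σ : List (Step e), ρ ^ σ.length * ρ ^ k := by simp [pow_add]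
    _ = (∑' σ : List (Step e), ρ ^ σ.length) * ρ ^ k := ENNReal.tsum_mul_right
    _ = ρ ^ k * ∑' n : ℕ, (((2 * e + 1 : ℕ) : ℝ≥0∞) * ρ) ^ n := by
        rw [tsum_pow_length, mul_comm]

end LP

/-- Lipschitz percolation: with `d = e + 1 ≥ 2` and `p > 1 - (2d)⁻²`, `P_p`-a.s.
there is a 1-Lipschitz function `F : ℤ^(d-1) → ℤ_+` such that every site
`(x, F x)` of `ℤ^d` is open. -/
theorem lipschitz_percolation (e : ℕ) (he : 1 ≤ e) (p : ℝ)
    (hp : 1 - ((2 * (e + 1) : ℝ))⁻¹ ^ 2 < p)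
    (μ : Measure ((Fin (e + 1) → ℤ) → Bool)) (hμ : IsBernoulli p μ) :
    ∀ᵐ ω ∂μ, ∃ F : (Fin e → ℤ) → ℤ,
      (∀ x, 0 < F x) ∧
      (∀ x y, norm1 (x - y) = 1 → |F x - F y| ≤ 1) ∧
      ∀ x, ω (Fin.snoc x (F x)) = true := by
  classical
  obtain ⟨hprob, hber⟩ := hμ
  -- numeric preliminaries
  set q0 : ℝ := max (1 - p) 0 with hq0def
  have hq0nn : 0 ≤ q0 := le_max_right _ _
  have hβpos : (0 : ℝ) < ((2 * (e + 1) : ℝ))⁻¹ := by positivity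
  have hq0lt : q0 < ((2 * (e + 1) : ℝ))⁻¹ ^ 2 := by
    apply max_lt
    · linarith
    · positivity
  set r : ℝ := Real.sqrt q0 with hrdef
  have hrnn : 0 ≤ r := Real.sqrt_nonneg _
  have hrlt : r < ((2 * (e + 1) : ℝ))⁻¹ := by
    have h := Real.sqrt_lt_sqrt hq0nn hq0lt
    rwa [Real.sqrt_sq (le_of_lt hβpos)] at h
  have hβle1 : ((2 * (e + 1) : ℝ))⁻¹ ≤ 1 := by
    rw [inv_le_one_iff₀]
    right
    linarith [Nat.cast_nonneg (α := ℝ) e]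
  have hr1 : r < 1 := lt_of_lt_of_le hrlt hβle1
  set ρ : ℝ≥0∞ := ENNReal.ofReal r with hρdef
  have hρ2 : ENNReal.ofReal (1 - p) ≤ ρ ^ 2 := by
    rw [hρdef, sq, ← ENNReal.ofReal_mul hrnn, hrdef, Real.mul_self_sqrt hq0nn]
    exact ENNReal.ofReal_le_ofReal (le_max_left _ _)
  have hρ1 : ρ ≤ 1 := by
    rw [hρdef, ← ENNReal.ofReal_one]
    exact ENNReal.ofReal_le_ofReal (le_of_lt hr1)
  have hρlt1 : ρ < 1 := by
    rw [hρdef]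
    exact ENNReal.ofReal_lt_one.mpr hr1
  have hwlt : ((2 * e + 1 : ℕ) : ℝ≥0∞) * ρ < 1 := by
    rw [hρdef, ← ENNReal.ofReal_natCast, ← ENNReal.ofReal_mul (by positivity)]
    rw [ENNReal.ofReal_lt_one]
    have hcast : ((2 * e + 1 : ℕ) : ℝ) < 2 * (e + 1) := by push_cast; linarith
    have h1 : ((2 * e + 1 : ℕ) : ℝ) * r < ((2 * e + 1 : ℕ) : ℝ) * ((2 * (e + 1) : ℝ))⁻¹ :=
      mul_lt_mul_of_pos_left hrlt (by positivity)
    have h2 : ((2 * e + 1 : ℕ) : ℝ) * ((2 * (e + 1) : ℝ))⁻¹ < 1 := by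
      calc ((2 * e + 1 : ℕ) : ℝ) * ((2 * (e + 1) : ℝ))⁻¹
          < (2 * (e + 1) : ℝ) * ((2 * (e + 1) : ℝ))⁻¹ := mul_lt_mul_of_pos_right hcast hβpos
        _ = 1 := mul_inv_cancel₀ (by positivity)
    linarith
  set C : ℝ≥0∞ := ∑' n : ℕ, (((2 * e + 1 : ℕ) : ℝ≥0∞) * ρ) ^ n with hCdef
  have hCne : C ≠ ⊤ := by
    rw [hCdef, ENNReal.tsum_geometric]
    refine ENNReal.inv_ne_top.mpr ?_
    rw [Ne, tsub_eq_zero_iff_le]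
    exact not_le.mpr hwlt
  -- per-column tail sums are finite
  have hEtsum : ∀ x : Fin e → ℤ, ∑' k : ℕ, μ {ω | LP.Reach ω (x, (k : ℤ))} ≠ ⊤ := by
    intro x
    have hle : ∑' k : ℕ, μ {ω | LP.Reach ω (x, (k : ℤ))} ≤ ∑' k : ℕ, ρ ^ k * C :=
      ENNReal.tsum_le_tsum (fun k => LP.measure_reach_le hber ρ hρ2 hρ1 x k)
    have heq : ∑' k : ℕ, ρ ^ k * C = (1 - ρ)⁻¹ * C := by
      rw [ENNReal.tsum_mul_right, ENNReal.tsum_geometric]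
    refine ne_top_of_le_ne_top ?_ hle
    rw [heq]
    refine ENNReal.mul_ne_top (ENNReal.inv_ne_top.mpr ?_) hCne
    rw [Ne, tsub_eq_zero_iff_le]
    exact not_le.mpr hρlt1
  -- the set of configurations where some column reaches unboundedly high is null
  have hnull : ∀ x : Fin e → ℤ,
      μ {ω | ∀ b : ℕ, ∃ k : ℕ, b ≤ k ∧ LP.Reach ω (x, (k : ℤ))} = 0 := by
    intro x
    set N : Set ((Fin (e + 1) → ℤ) → Bool) :=
      {ω | ∀ b : ℕ, ∃ k : ℕ, b ≤ k ∧ LP.Reach ω (x, (k : ℤ))} with hNdef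
    have hb : ∀ b : ℕ, μ N ≤ ∑' k : ℕ, μ {ω | LP.Reach ω (x, ((k + b : ℕ) : ℤ))} := by
      intro b
      have hsub : N ⊆ ⋃ k : ℕ, {ω | LP.Reach ω (x, ((k + b : ℕ) : ℤ))} := by
        intro ω hω
        obtain ⟨k, hbk, hk⟩ := hω b
        refine Set.mem_iUnion.mpr ⟨k - b, ?_⟩
        have : k - b + b = k := by omega
        rw [this]
        exact hk
      exact (measure_mono hsub).trans (measure_iUnion_le _)
    have htend := ENNReal.tendsto_sum_nat_add
      (fun k => μ {ω | LP.Reach ω (x, (k : ℤ))}) (hEtsum x)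
    have hle0 : μ N ≤ 0 := ge_of_tendsto' htend hb
    exact le_antisymm hle0 zero_le
  -- conclusion
  rw [MeasureTheory.ae_iff]
  have hcover : {ω : (Fin (e + 1) → ℤ) → Bool | ¬ ∃ F : (Fin e → ℤ) → ℤ,
        (∀ x, 0 < F x) ∧
        (∀ x y, norm1 (x - y) = 1 → |F x - F y| ≤ 1) ∧
        ∀ x, ω (Fin.snoc x (F x)) = true} ⊆
      ⋃ x : Fin e → ℤ, {ω | ∀ b : ℕ, ∃ k : ℕ, b ≤ k ∧ LP.Reach ω (x, (k : ℤ))} := by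
    intro ω hω
    by_contra hc
    apply hω
    simp only [Set.mem_iUnion, Set.mem_setOf_eq, not_exists] at hc
    have hbdd : ∀ x : Fin e → ℤ, ∃ m : ℤ,
        LP.Reach ω (x, m) ∧ ∀ z : ℤ, LP.Reach ω (x, z) → z ≤ m := by
      intro x
      have hcx := hc x
      push_neg at hcx
      obtain ⟨b, hbb⟩ := hcx
      have hub : ∀ z : ℤ, LP.Reach ω (x, z) → z ≤ (b : ℤ) := by
        intro z hz
        by_contra hzb
        push_neg at hzb
        have hz0 : 0 ≤ z := by omega
        have hzn : LP.Reach ω (x, ((z.toNat : ℕ) : ℤ)) := by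
          rwa [Int.toNat_of_nonneg hz0]
        exact hbb z.toNat (by omega) hzn
      obtain ⟨m, hm1, hm2⟩ := Int.exists_greatest_of_bdd ⟨(b : ℤ), hub⟩
        ⟨0, LP.Reach.base x 0 le_rfl⟩
      exact ⟨m, hm1, hm2⟩
    choose M hM1 hM2 using hbdd
    refine ⟨fun x => M x + 1, fun x => ?_, fun x y hxy => ?_, fun x => ?_⟩
    · have h0 : (0 : ℤ) ≤ M x := hM2 x 0 (LP.Reach.base x 0 le_rfl)
      show (0 : ℤ) < M x + 1
      omega
    · have hyx : norm1 (y - x) = 1 := by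
        rw [show y - x = -(x - y) by ring, LP.norm1_neg]; exact hxy
      have h1 : M x - 1 ≤ M y := hM2 y _ (LP.Reach.side y x (M x) (hM1 x) hyx)
      have h2 : M y - 1 ≤ M x := hM2 x _ (LP.Reach.side x y (M y) (hM1 y) hxy)
      show |(M x + 1) - (M y + 1)| ≤ 1
      rw [abs_le]
      omega
    · by_contra hopen
      have hcl : ω (LP.site (x, M x + 1)) = false := Bool.eq_false_iff.mpr hopen
      have hr := LP.Reach.down x (M x) (hM1 x) hcl
      have := hM2 x _ hr
      omega
  refine le_antisymm ?_ zero_le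
  calc μ {a | ¬ ∃ F : (Fin e → ℤ) → ℤ,
        (∀ x, 0 < F x) ∧
        (∀ x y, norm1 (x - y) = 1 → |F x - F y| ≤ 1) ∧
        ∀ x, a (Fin.snoc x (F x)) = true}
      ≤ μ (⋃ x : Fin e → ℤ, {ω | ∀ b : ℕ, ∃ k : ℕ, b ≤ k ∧ LP.Reach ω (x, (k : ℤ))}) :=
        measure_mono hcover
    _ = 0 := measure_iUnion_null hnull
end

section
/- For all integers d, D, M ≥ 1 there exists p > 0 such that P_p-almost surely there exists no M-Lipschitz injection from Z^d into the set W_p(Z^D) of open sites of site percolation on Z^D. (Equivalently, p_c(d, D, M) > 0 for all d, D, M ≥ 1.) -/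
open MeasureTheory

/-! ### Auxiliary definitions -/

/-- The ℓ∞ ball of radius `M` (a finite superset of the ℓ¹ ball of radius `M`). -/
noncomputable def pball (D M : ℕ) : Finset (Fin D → ℤ) :=
  Finset.Icc (fun _ => -(M : ℤ)) (fun _ => (M : ℤ))

lemma mem_pball_of_norm1 {D M : ℕ} {z : Fin D → ℤ} (h : norm1 z ≤ (M : ℤ)) :
    z ∈ pball D M := by
  have key : ∀ i, |z i| ≤ (M : ℤ) := by
    intro i
    refine le_trans ?_ h
    exact Finset.single_le_sum (f := fun j => |z j|) (fun j _ => abs_nonneg (z j))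
      (Finset.mem_univ i)
  rw [pball, Finset.mem_Icc]
  constructor <;> intro i <;> [exact neg_le_of_abs_le (key i); exact le_of_abs_le (key i)]

lemma zero_mem_pball (D M : ℕ) : (0 : Fin D → ℤ) ∈ pball D M := by
  rw [pball, Finset.mem_Icc]
  constructor <;> intro i <;> simp

/-- The walk starting at `v` taking increments `σ`. -/
def walkOf {D : ℕ} {n : ℕ} (v : Fin D → ℤ) (σ : Fin n → (Fin D → ℤ)) : ℕ → (Fin D → ℤ)
  | 0 => v
  | k + 1 => walkOf v σ k + (if h : k < n then σ ⟨k, h⟩ else 0)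

open Classical in
/-- The event that there is an injective open `M`-walk of length `n` from `v`. -/
noncomputable def Ev {D : ℕ} (M : ℕ) (v : Fin D → ℤ) (n : ℕ) :
    Set ((Fin D → ℤ) → Bool) :=
  ⋃ σ : Fin n → (pball D M : Finset (Fin D → ℤ)),
    if (∀ i ≤ n, ∀ j ≤ n, walkOf v (fun k => (σ k : Fin D → ℤ)) i
          = walkOf v (fun k => (σ k : Fin D → ℤ)) j → i = j)
    then {ω | ∀ i ≤ n, ω (walkOf v (fun k => (σ k : Fin D → ℤ)) i) = true}
    else ∅

lemma cyl_measure {D : ℕ} {p : ℝ} {μ : Measure ((Fin D → ℤ) → Bool)}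
    (hμ : IsBernoulli p μ) (n : ℕ) (w : ℕ → (Fin D → ℤ))
    (hw : ∀ i ≤ n, ∀ j ≤ n, w i = w j → i = j) :
    μ {ω | ∀ i ≤ n, ω (w i) = true} = ENNReal.ofReal p ^ (n + 1) := by
  have hA := hμ.2 ((Finset.range (n+1)).image w) (fun _ => true)
  have hset : {ω : (Fin D → ℤ) → Bool | ∀ s ∈ (Finset.range (n+1)).image w, ω s = true}
      = {ω | ∀ i ≤ n, ω (w i) = true} := by
    ext ω
    simp only [Set.mem_setOf_eq, Finset.mem_image, Finset.mem_range, Nat.lt_succ_iff]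
    constructor
    · intro h i hi
      exact h (w i) ⟨i, hi, rfl⟩
    · rintro h s ⟨i, hi, rfl⟩
      exact h i hi
  have hcard : ((Finset.range (n+1)).image w).card = n + 1 := by
    rw [Finset.card_image_of_injOn, Finset.card_range]
    intro i hi j hj hij
    exact hw i (by simpa [Nat.lt_succ_iff] using hi) j (by simpa [Nat.lt_succ_iff] using hj) hij
  rw [hset] at hA
  rw [hA]
  simp [Finset.prod_const, hcard]

lemma Ev_bound {D : ℕ} {p : ℝ} {μ : Measure ((Fin D → ℤ) → Bool)}
    (hμ : IsBernoulli p μ) (M : ℕ) (v : Fin D → ℤ) (n : ℕ) :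
    μ (Ev M v n) ≤ ((pball D M).card : ENNReal) ^ n * ENNReal.ofReal p ^ (n + 1) := by
  classical
  rw [Ev]
  refine le_trans (measure_iUnion_fintype_le _ _) ?_
  have hterm : ∀ σ : Fin n → (pball D M : Finset (Fin D → ℤ)),
      μ (if (∀ i ≤ n, ∀ j ≤ n, walkOf v (fun k => (σ k : Fin D → ℤ)) i
            = walkOf v (fun k => (σ k : Fin D → ℤ)) j → i = j)
        then {ω | ∀ i ≤ n, ω (walkOf v (fun k => (σ k : Fin D → ℤ)) i) = true}
        else ∅) ≤ ENNReal.ofReal p ^ (n + 1) := by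
    intro σ
    split_ifs with h
    · rw [cyl_measure hμ n _ h]
    · simp
  refine le_trans (Finset.sum_le_sum (fun σ _ => hterm σ)) ?_
  rw [Finset.sum_const, nsmul_eq_mul]
  simp [Fintype.card_fun, Fintype.card_coe]

/-- For all `d, D, M ≥ 1` there exists `p > 0` such that `P_p`-a.s. there is no
`M`-Lipschitz injection from `ℤ^d` into the open sites of `ℤ^D`. -/
theorem critical_probability_positive (d D M : ℕ) (hd : 1 ≤ d) (hD : 1 ≤ D) (hM : 1 ≤ M) :
    ∃ p : ℝ, 0 < p ∧
      ∀ μ : Measure ((Fin D → ℤ) → Bool), IsBernoulli p μ →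
        ∀ᵐ ω ∂μ, ¬ ∃ f : (Fin d → ℤ) → (Fin D → ℤ),
          Function.Injective f ∧ IsLip M f ∧ ∀ x, ω (f x) = true := by
  classical
  set c := (pball D M).card with hcdef
  have hc1 : 0 < c := Finset.card_pos.mpr ⟨0, zero_mem_pball D M⟩
  have hcR : (0:ℝ) < (c:ℝ) := by exact_mod_cast hc1
  refine ⟨1 / (2 * c), by positivity, ?_⟩
  intro μ hμ
  set q : ENNReal := ENNReal.ofReal (1 / (2 * c)) with hq
  have hq1 : q ≤ 1 := by
    rw [hq, ← ENNReal.ofReal_one]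
    apply ENNReal.ofReal_le_ofReal
    rw [div_le_one (by positivity)]
    have : (1:ℝ) ≤ (c:ℝ) := by exact_mod_cast hc1
    linarith
  have hcq : (c : ENNReal) * q ≤ 2⁻¹ := by
    rw [hq, show ((c:ℕ) : ENNReal) = ENNReal.ofReal (c:ℝ) by simp,
      ← ENNReal.ofReal_mul (le_of_lt hcR)]
    have : (c:ℝ) * (1 / (2 * c)) = 2⁻¹ := by field_simp
    rw [this, show (2⁻¹ : ENNReal) = ENNReal.ofReal 2⁻¹ by
      rw [ENNReal.ofReal_inv_of_pos (by norm_num)]; norm_num]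
  -- each v : null
  have hnull : ∀ v : Fin D → ℤ, μ (⋂ n, Ev M v n) = 0 := by
    intro v
    have hbd : ∀ n, μ (⋂ m, Ev M v m) ≤ (2⁻¹ : ENNReal) ^ n := by
      intro n
      refine le_trans (measure_mono (Set.iInter_subset _ n)) ?_
      refine le_trans (Ev_bound hμ M v n) ?_
      calc ((c:ℕ) : ENNReal) ^ n * q ^ (n + 1)
          ≤ (c : ENNReal) ^ n * q ^ n := by
            apply mul_le_mul_right
            exact pow_le_pow_of_le_one zero_le hq1 (Nat.le_succ n)
        _ = ((c : ENNReal) * q) ^ n := (mul_pow _ _ _).symm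
        _ ≤ (2⁻¹ : ENNReal) ^ n := pow_le_pow_left' hcq n
    have htend : Filter.Tendsto (fun n : ℕ => (2⁻¹ : ENNReal) ^ n) Filter.atTop (nhds 0) :=
      ENNReal.tendsto_pow_atTop_nhds_zero_of_lt_one (by norm_num)
    exact le_antisymm (ge_of_tendsto' htend hbd) zero_le
  -- the bad set is contained in the union
  rw [ae_iff]
  simp only [not_not]
  refine measure_mono_null ?_ (measure_iUnion_null hnull)
  rintro ω ⟨f, hfinj, hflip, hfopen⟩
  set i0 : Fin d := ⟨0, hd⟩ with hi0
  set x : ℕ → Fin d → ℤ := fun t i => if i = i0 then (t : ℤ) else 0 with hx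
  have hxinj : Function.Injective x := by
    intro s t h
    have := congrFun h i0
    simpa [hx] using this
  have hstep : ∀ t, norm1 (x (t + 1) - x t) = 1 := by
    intro t
    have hcoord : ∀ i, (x (t + 1) - x t) i = if i = i0 then 1 else 0 := by
      intro i
      simp only [Pi.sub_apply, hx]
      split
      · push_cast; ring
      · ring
    simp only [norm1, hcoord, apply_ite abs, abs_one, abs_zero]
    simp
  have hball : ∀ t, f (x (t + 1)) - f (x t) ∈ pball D M :=
    fun t => mem_pball_of_norm1 (hflip _ _ (hstep t))
  refine Set.mem_iUnion.mpr ⟨f (x 0), Set.mem_iInter.mpr fun n => ?_⟩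
  set σ : Fin n → (pball D M : Finset (Fin D → ℤ)) :=
    fun k => ⟨f (x (k + 1)) - f (x k), hball k⟩ with hσ
  have hwalk : ∀ k, k ≤ n → walkOf (f (x 0)) (fun j => (σ j : Fin D → ℤ)) k = f (x k) := by
    intro k
    induction k with
    | zero => intro _; rfl
    | succ k ih =>
      intro hk
      have hkn : k < n := Nat.lt_of_succ_le hk
      rw [walkOf, ih (le_of_lt hkn), dif_pos hkn]
      simp [hσ]
  have hwinj : ∀ i ≤ n, ∀ j ≤ n,
      walkOf (f (x 0)) (fun j => (σ j : Fin D → ℤ)) i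
        = walkOf (f (x 0)) (fun j => (σ j : Fin D → ℤ)) j → i = j := by
    intro i hi j hj heq
    rw [hwalk i hi, hwalk j hj] at heq
    exact hxinj (hfinj heq)
  refine Set.mem_iUnion.mpr ⟨σ, ?_⟩
  rw [if_pos hwinj]
  intro i hi
  rw [hwalk i hi]
  exact hfopen (x i)
end

section
/- Let 1 ≤ d < D. Then for every p ∈ (0,1) there exists an integer M ≥ 1 such that P_p-almost surely there exists an M-Lipschitz injection from Z^d into the set W_p(Z^D) of open sites of site percolation on Z^D. (Equivalently, p_c(d, D, M) → 0 as M → ∞ whenever M_c(d, D) < ∞.) -/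
open MeasureTheory

namespace LipPerc

variable {d : ℕ}

/-- An op: `none` = descend (asserting current block bad), `some (i,b)` = move horizontally. -/
abbrev Op (d : ℕ) := Option (Fin d × Bool)

abbrev St (d : ℕ) := (Fin d → ℤ) × ℤ

def mv (e : Fin d × Bool) (y : Fin d → ℤ) : Fin d → ℤ :=
  fun i => y i + if i = e.1 then (if e.2 then 1 else -1) else 0

def step (op : Op d) (s : St d) : St d :=
  match op with
  | none => (s.1, s.2 - 1)
  | some e => (mv e s.1, s.2 + 1)

def endSt (s : St d) : List (Op d) → St d
  | [] => s
  | op :: l => endSt (step op s) l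

def asserts (s : St d) : List (Op d) → List (St d)
  | [] => []
  | none :: l => s :: asserts (step none s) l
  | some e :: l => asserts (step (some e) s) l

@[simp] lemma endSt_nil (s : St d) : endSt s [] = s := rfl
@[simp] lemma endSt_cons (s : St d) (op : Op d) (l : List (Op d)) :
    endSt s (op :: l) = endSt (step op s) l := rfl
@[simp] lemma asserts_nil (s : St d) : asserts s [] = [] := rfl
@[simp] lemma asserts_cons_none (s : St d) (l : List (Op d)) :
    asserts s (none :: l) = s :: asserts (step none s) l := rfl
@[simp] lemma asserts_cons_some (s : St d) (e : Fin d × Bool) (l : List (Op d)) :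
    asserts s (some e :: l) = asserts (step (some e) s) l := rfl

lemma endSt_append (s : St d) (u v : List (Op d)) :
    endSt s (u ++ v) = endSt (endSt s u) v := by
  induction u generalizing s with
  | nil => simp
  | cons op u ih => simp [ih]

lemma asserts_append (s : St d) (u v : List (Op d)) :
    asserts s (u ++ v) = asserts s u ++ asserts (endSt s u) v := by
  induction u generalizing s with
  | nil => simp
  | cons op u ih => cases op <;> simp [ih]

lemma length_asserts (s : St d) (l : List (Op d)) :
    (asserts s l).length = l.count none := by
  induction l generalizing s with
  | nil => simp
  | cons op l ih =>
    cases op <;> simp [ih, List.count_cons]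

lemma level_endSt (s : St d) (l : List (Op d)) :
    (endSt s l).2 = s.2 + l.length - 2 * l.count none := by
  induction l generalizing s with
  | nil => simp
  | cons op l ih =>
    cases op <;> · simp [ih, step, List.count_cons]; ring

/-- split at the first occurrence of an assert. -/
lemma mem_asserts_split {a : St d} :
    ∀ (l : List (Op d)) (s : St d), a ∈ asserts s l →
      ∃ u v, l = u ++ none :: v ∧ endSt s u = a ∧ a ∉ asserts s u := by
  intro l
  induction l with
  | nil => intro s h; simp at h
  | cons op l ih =>
    intro s h
    cases op with
    | none =>
      rcases eq_or_ne a s with rfl | hne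
      · exact ⟨[], l, by simp⟩
      · have h' : a ∈ asserts (step none s) l := by
          rcases List.mem_cons.mp (by simpa using h) with h | h
          · exact absurd h hne
          · exact h
        obtain ⟨u, v, rfl, h1, h2⟩ := ih (step none s) h'
        refine ⟨none :: u, v, rfl, by simpa using h1, ?_⟩
        simp only [asserts_cons_none, List.mem_cons]
        rintro (h | h)
        · exact hne h
        · exact h2 h
    | some e =>
      have h' : a ∈ asserts (step (some e) s) l := by simpa using h
      obtain ⟨u, v, rfl, h1, h2⟩ := ih (step (some e) s) h'
      exact ⟨some e :: u, v, rfl, by simpa using h1, by simpa using h2⟩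

/-- Pruning (loop erasure): any op-list can be replaced by one whose asserts are distinct,
with the same end state, asserts a subset of the original's. -/
lemma prune : ∀ (N : ℕ) (l : List (Op d)), l.length ≤ N → ∀ (s : St d),
    ∃ l', endSt s l' = endSt s l ∧ (asserts s l').Nodup ∧
      ∀ a ∈ asserts s l', a ∈ asserts s l := by
  intro N
  induction N with
  | zero =>
    intro l hl s
    have : l = [] := List.length_eq_zero_iff.mp (Nat.le_zero.mp hl)
    subst this
    exact ⟨[], rfl, by simp, by simp⟩
  | succ N ih =>
    intro l hl s
    by_cases hnd : (asserts s l).Nodup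
    · exact ⟨l, rfl, hnd, fun a ha => ha⟩
    · -- find a duplicated assert
      obtain ⟨a, hdup⟩ := List.exists_duplicate_iff_not_nodup.mpr hnd
      have ha2 : [a, a].Sublist (asserts s l) := List.duplicate_iff_sublist.mp hdup
      have hmem : a ∈ asserts s l := hdup.mem
      obtain ⟨u, v, rfl, hu, hnu⟩ := mem_asserts_split _ s hmem
      -- asserts s l = asserts s u ++ a :: asserts (step none a) v
      have hform : asserts s (u ++ none :: v)
          = asserts s u ++ a :: asserts (step none a) v := by
        rw [asserts_append, hu]
        simp
      have hmem2 : a ∈ asserts (step none a) v := by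
        rw [hform] at ha2
        rcases List.sublist_append_iff.mp ha2 with ⟨t1, t2, heq, hs1, hs2⟩
        have ht1 : t1 = [] := by
          cases t1 with
          | nil => rfl
          | cons b t =>
            exfalso
            apply hnu
            have hb : b ∈ [a, a] := by rw [heq]; exact List.mem_cons_self
            have : b = a := by simpa using hb
            subst this
            exact hs1.mem (List.mem_cons_self)
        subst ht1
        simp only [List.nil_append] at heq
        subst heq
        cases hs2 with
        | cons _ h => exact h.subset (List.mem_cons_self)
        | cons_cons _ h => exact h.subset (List.mem_cons_self)
      obtain ⟨u₂, v₂, rfl, hu2, _⟩ := mem_asserts_split _ (step none a) hmem2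
      -- the shortcut list
      have hlen : (u ++ none :: v₂).length ≤ N := by
        simp only [List.length_append, List.length_cons] at hl ⊢
        omega
      obtain ⟨l', he', hnd', hsub'⟩ := ih (u ++ none :: v₂) hlen s
      refine ⟨l', ?_, hnd', ?_⟩
      · rw [he']
        rw [endSt_append, endSt_append, hu]
        simp only [endSt_cons]
        rw [endSt_append, hu2]
        simp
      · intro b hb
        have hb2 := hsub' b hb
        rw [asserts_append, hu] at hb2
        simp only [asserts_cons_none, List.mem_append, List.mem_cons] at hb2
        rw [hform, List.mem_append, List.mem_cons]
        rcases hb2 with h | h | h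
        · exact Or.inl h
        · exact Or.inr (Or.inl h)
        · refine Or.inr (Or.inr ?_)
          rw [asserts_append, hu2]
          simp only [asserts_cons_none, List.mem_append, List.mem_cons]
          exact Or.inr (Or.inr h)

-- continuation: geometry
variable {D M0 : ℕ}

/-- extension of a `Fin d`-vector to `ℕ`. -/
def ext (x : Fin d → ℤ) (k : ℕ) : ℤ := if h : k < d then x ⟨k, h⟩ else 0

lemma ext_coe (x : Fin d → ℤ) (i : Fin d) : ext x i.1 = x i := by
  simp [ext, i.2]

def sfun (d M0 : ℕ) (x : Fin d → ℤ) (n : ℤ) (j : ℕ) : ℕ → ℤ :=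
  fun k => if k < d then (M0 : ℤ) * ext x k
    else if k = d then (M0 : ℤ) * n + j else 0

def site (d D M0 : ℕ) (x : Fin d → ℤ) (n : ℤ) (j : ℕ) : Fin D → ℤ :=
  fun i => sfun d M0 x n j i.1

def block (d D M0 : ℕ) (x : Fin d → ℤ) (n : ℤ) : Finset (Fin D → ℤ) :=
  (Finset.range M0).image (site d D M0 x n)

def bad (d D M0 : ℕ) (ω : (Fin D → ℤ) → Bool) (a : St d) : Prop :=
  ∀ z ∈ block d D M0 a.1 a.2, ω z = false

/-- the set of heights having an all-bad valid witness. -/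
def SS (d D M0 : ℕ) (ω : (Fin D → ℤ) → Bool) (x : Fin d → ℤ) : Set ℕ :=
  {n | 1 ≤ n ∧ ∃ l : List (Op d),
    (endSt (x, (n : ℤ)) l).2 = 0 ∧
    (∀ a ∈ asserts (x, (n : ℤ)) l, 1 ≤ a.2) ∧
    (∀ a ∈ asserts (x, (n : ℤ)) l, bad d D M0 ω a)}

lemma site_inj (hdD : d < D) (hM0 : 1 ≤ M0) {x x' : Fin d → ℤ} {n n' : ℤ} {j j' : ℕ}
    (hj : j < M0) (hj' : j' < M0)
    (h : site d D M0 x n j = site d D M0 x' n' j') : x = x' ∧ n = n' ∧ j = j' := by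
  have hMne : (M0 : ℤ) ≠ 0 := Int.natCast_ne_zero.mpr (Nat.one_le_iff_ne_zero.mp hM0)
  have hd' : ∀ i : Fin d, x i = x' i := by
    intro i
    have hi : (i : ℕ) < D := lt_trans i.2 hdD
    have := congrFun h ⟨i.1, hi⟩
    simp only [site, sfun, i.2, if_pos] at this
    rw [ext_coe, ext_coe] at this
    exact mul_left_cancel₀ hMne this
  have hvert := congrFun h ⟨d, hdD⟩
  simp only [site, sfun, lt_irrefl, if_false, if_pos, eq_self_iff_true, if_true] at hvert
  -- M0 * n + j = M0 * n' + j'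
  have hnn : n = n' := by
    have h1 : (M0 : ℤ) * (n - n') = (j' : ℤ) - j := by linarith
    by_contra hne
    have habs : (M0 : ℤ) ≤ |(M0 : ℤ) * (n - n')| := by
      rw [abs_mul]
      have : 1 ≤ |n - n'| := by
        rcases lt_or_gt_of_ne (sub_ne_zero.mpr hne) with h' | h'
        · rw [abs_of_neg h']; omega
        · rw [abs_of_pos h']; omega
      calc (M0 : ℤ) = |(M0 : ℤ)| * 1 := by
            rw [abs_of_nonneg (by positivity)]; ring
        _ ≤ |(M0 : ℤ)| * |n - n'| := by
            apply mul_le_mul_of_nonneg_left this (abs_nonneg _)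
    rw [h1] at habs
    have : |(j' : ℤ) - j| < M0 := by
      rw [abs_lt]; constructor <;> [skip; skip] <;> push_cast <;> omega
    omega
  subst hnn
  have hj'' : (j : ℤ) = j' := by linarith
  exact ⟨funext hd', rfl, by exact_mod_cast hj''⟩

lemma block_disjoint (hdD : d < D) (hM0 : 1 ≤ M0) {a b : St d} (hab : a ≠ b) :
    Disjoint (block d D M0 a.1 a.2) (block d D M0 b.1 b.2) := by
  rw [Finset.disjoint_left]
  rintro z hz hz'
  simp only [block, Finset.mem_image, Finset.mem_range] at hz hz'
  obtain ⟨j, hj, rfl⟩ := hz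
  obtain ⟨j', hj', he⟩ := hz'
  obtain ⟨h1, h2, _⟩ := site_inj hdD hM0 hj' hj he
  exact hab (Prod.ext h1.symm h2.symm)

lemma card_block (hdD : d < D) (hM0 : 1 ≤ M0) (x : Fin d → ℤ) (n : ℤ) :
    (block d D M0 x n).card = M0 := by
  rw [block, Finset.card_image_of_injOn, Finset.card_range]
  intro j hj j' hj' h
  simp only [Finset.coe_range, Set.mem_Iio] at hj hj'
  exact (site_inj hdD hM0 hj hj' h).2.2

/-- ℓ¹-neighbours differ by a signed unit vector. -/
lemma exists_move {x y : Fin d → ℤ} (h : norm1 (x - y) = 1) :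
    ∃ e : Fin d × Bool, x = mv e y := by
  have hnz : ∑ i, |x i - y i| ≠ 0 := by
    rw [show (∑ i, |x i - y i|) = norm1 (x - y) from rfl, h]; norm_num
  obtain ⟨i, _, hi⟩ := Finset.exists_ne_zero_of_sum_ne_zero hnz
  have h1 : 1 ≤ |x i - y i| := by
    rcases abs_nonneg (x i - y i) |>.lt_or_eq with h' | h'
    · omega
    · exact absurd h'.symm hi
  have hle : |x i - y i| ≤ ∑ j, |x j - y j| := by
    apply Finset.single_le_sum (f := fun j => |x j - y j|) (fun j _ => abs_nonneg _)
      (Finset.mem_univ i)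
  have hsum : (∑ j, |x j - y j|) = 1 := by
    rw [show (∑ j, |x j - y j|) = norm1 (x - y) from rfl, h]
  have heq1 : |x i - y i| = 1 := le_antisymm (hsum ▸ hle) h1
  have hrest : ∀ j, j ≠ i → x j = y j := by
    intro j hj
    have hz : ∑ k ∈ Finset.univ.erase i, |x k - y k| = 0 := by
      have htot := Finset.add_sum_erase Finset.univ (fun k => |x k - y k|) (Finset.mem_univ i)
      linarith
    have := (Finset.sum_eq_zero_iff_of_nonneg (fun k _ => abs_nonneg _)).mp hz j
      (Finset.mem_erase.mpr ⟨hj, Finset.mem_univ j⟩)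
    have := abs_eq_zero.mp this
    linarith
  rcases abs_eq (by norm_num : (0:ℤ) ≤ 1) |>.mp heq1 with hpm | hpm
  · refine ⟨(i, true), funext fun j => ?_⟩
    by_cases hji : j = i
    · subst hji; simp [mv]; linarith
    · simp [mv, hji, hrest j hji]
  · refine ⟨(i, false), funext fun j => ?_⟩
    by_cases hji : j = i
    · subst hji; simp [mv]; linarith
    · simp [mv, hji, hrest j hji]

-- part 3: construction of the Lipschitz function
section constr
variable {ω : (Fin D → ℤ) → Bool}

lemma SS_descend {x : Fin d → ℤ} {n : ℕ}
    (hb : bad d D M0 ω (x, ((n+1 : ℕ) : ℤ)))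
    (h : n ∈ SS d D M0 ω x ∨ n = 0) : (n+1) ∈ SS d D M0 ω x := by
  have hstep : step (d := d) none (x, ((n+1 : ℕ) : ℤ)) = (x, (n : ℤ)) := by
    simp only [step]
    refine Prod.ext rfl ?_
    push_cast; ring
  obtain ⟨l, hend, hlev, hbad⟩ :
      ∃ l : List (Op d), (endSt (x, (n : ℤ)) l).2 = 0 ∧
        (∀ a ∈ asserts (x, (n : ℤ)) l, 1 ≤ a.2) ∧
        (∀ a ∈ asserts (x, (n : ℤ)) l, bad d D M0 ω a) := by
    rcases h with h | rfl
    · exact h.2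
    · exact ⟨[], by simp, by simp, by simp⟩
  refine ⟨by omega, none :: l, ?_, ?_, ?_⟩
  · rw [endSt_cons, hstep]; exact hend
  · rw [asserts_cons_none, hstep]
    intro a ha
    rcases List.mem_cons.mp ha with rfl | ha
    · simp
    · exact hlev a ha
  · rw [asserts_cons_none, hstep]
    intro a ha
    rcases List.mem_cons.mp ha with rfl | ha
    · exact hb
    · exact hbad a ha

lemma SS_move {x y : Fin d → ℤ} {n : ℕ} (h : n ∈ SS d D M0 ω x) (hn : 2 ≤ n)
    (hxy : norm1 (x - y) = 1) : (n-1) ∈ SS d D M0 ω y := by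
  obtain ⟨e, hmv⟩ := exists_move hxy
  have hstep : step (d := d) (some e) (y, ((n-1 : ℕ) : ℤ)) = (x, (n : ℤ)) := by
    simp only [step]
    refine Prod.ext (by rw [hmv]) ?_
    have : ((n-1 : ℕ) : ℤ) = (n : ℤ) - 1 := by
      rw [Nat.cast_sub (by omega)]; norm_num
    rw [this]; ring
  obtain ⟨_, l, hend, hlev, hbad⟩ := h
  refine ⟨by omega, some e :: l, ?_, ?_, ?_⟩
  · rw [endSt_cons, hstep]; exact hend
  · rw [asserts_cons_some, hstep]; exact hlev
  · rw [asserts_cons_some, hstep]; exact hbad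

/-- the height function -/
noncomputable def Hh (d D M0 : ℕ) (ω : (Fin D → ℤ) → Bool) (x : Fin d → ℤ) : ℕ :=
  sSup (SS d D M0 ω x) + 1

lemma Hh_good {x : Fin d → ℤ} (hb : BddAbove (SS d D M0 ω x)) :
    ¬ bad d D M0 ω (x, ((Hh d D M0 ω x : ℕ) : ℤ)) := by
  intro hbad
  set s := sSup (SS d D M0 ω x) with hs
  have hHs : Hh d D M0 ω x = s + 1 := rfl
  rw [hHs] at hbad
  rcases Set.eq_empty_or_nonempty (SS d D M0 ω x) with he | hne
  · have hs0 : s = 0 := by rw [hs, he, csSup_empty]; rfl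
    rw [hs0] at hbad
    have h1 : (0 + 1 : ℕ) ∈ SS d D M0 ω x := SS_descend hbad (Or.inr rfl)
    rw [he] at h1; exact h1
  · have hmem : s ∈ SS d D M0 ω x := Nat.sSup_mem hne hb
    have h1 : s + 1 ∈ SS d D M0 ω x := SS_descend hbad (Or.inl hmem)
    have := le_csSup hb h1
    omega

lemma Hh_lip {x y : Fin d → ℤ} (hbx : BddAbove (SS d D M0 ω x))
    (hby : BddAbove (SS d D M0 ω y))
    (hxy : norm1 (x - y) = 1) :
    Hh d D M0 ω x ≤ Hh d D M0 ω y + 1 := by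
  set s := sSup (SS d D M0 ω x) with hs
  by_cases h2 : 2 ≤ s
  · have hne : (SS d D M0 ω x).Nonempty := by
      rcases Set.eq_empty_or_nonempty (SS d D M0 ω x) with he | hne
      · rw [hs, he, csSup_empty] at h2; simp at h2
      · exact hne
    have hmem : s ∈ SS d D M0 ω x := Nat.sSup_mem hne hbx
    have hy : s - 1 ∈ SS d D M0 ω y := SS_move hmem h2 hxy
    have := le_csSup hby hy
    unfold Hh; omega
  · unfold Hh; omega

end constr

-- part 4: building f
section buildf
variable {ω : (Fin D → ℤ) → Bool}

lemma norm1_sub_comm (x y : Fin d → ℤ) : norm1 (x - y) = norm1 (y - x) := by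
  unfold norm1
  refine Finset.sum_congr rfl fun i _ => ?_
  simp [abs_sub_comm]

lemma exists_open_in_block {x : Fin d → ℤ} {n : ℤ} (h : ¬ bad d D M0 ω (x, n)) :
    ∃ z ∈ block d D M0 x n, ω z = true := by
  unfold bad at h; push_neg at h
  obtain ⟨z, hz, hz2⟩ := h
  exact ⟨z, hz, by simpa using hz2⟩

lemma norm1_site_bound (hdD : d < D) (hM0 : 1 ≤ M0) {x y : Fin d → ℤ}
    {nx ny : ℤ} {jx jy : ℕ} (hjx : jx < M0) (hjy : jy < M0)
    (hn : |nx - ny| ≤ 1) (hxy : norm1 (x - y) = 1) :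
    norm1 (site d D M0 x nx jx - site d D M0 y ny jy) ≤ 3 * (M0 : ℤ) := by
  set F : ℕ → ℤ := fun k => |sfun d M0 x nx jx k - sfun d M0 y ny jy k| with hF
  have h0 : norm1 (site d D M0 x nx jx - site d D M0 y ny jy)
      = ∑ k ∈ Finset.range D, F k := by
    unfold norm1
    rw [← Fin.sum_univ_eq_sum_range F D]
    refine Finset.sum_congr rfl fun i _ => rfl
  have hsplit : ∑ k ∈ Finset.range D, F k
      = ∑ k ∈ Finset.range d, F k + ∑ k ∈ Finset.Ico d D, F k := by
    simp only [Finset.range_eq_Ico]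
    exact (Finset.sum_Ico_consecutive F (Nat.zero_le d) (le_of_lt hdD)).symm
  have hA : ∑ k ∈ Finset.range d, F k = (M0 : ℤ) := by
    have h1 : ∀ k ∈ Finset.range d, F k = (M0 : ℤ) * |ext x k - ext y k| := by
      intro k hk
      rw [Finset.mem_range] at hk
      rw [hF]
      simp only [sfun, if_pos hk]
      rw [← mul_sub, abs_mul, abs_of_nonneg (by positivity : (0:ℤ) ≤ (M0:ℤ))]
    rw [Finset.sum_congr rfl h1, ← Finset.mul_sum]
    have h2 : ∑ k ∈ Finset.range d, |ext x k - ext y k| = norm1 (x - y) := by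
      rw [← Fin.sum_univ_eq_sum_range (fun k => |ext x k - ext y k|) d]
      unfold norm1
      refine Finset.sum_congr rfl fun i _ => ?_
      rw [ext_coe, ext_coe]
      simp
    rw [h2, hxy, mul_one]
  have hB : ∑ k ∈ Finset.Ico d D, F k ≤ 2 * (M0 : ℤ) := by
    rw [Finset.sum_eq_sum_Ico_succ_bot hdD]
    have htail : ∑ k ∈ Finset.Ico (d+1) D, F k = 0 := by
      refine Finset.sum_eq_zero fun k hk => ?_
      rw [Finset.mem_Ico] at hk
      rw [hF]
      simp only [sfun]
      rw [if_neg (by omega), if_neg (by omega), if_neg (by omega), if_neg (by omega)]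
      simp
    rw [htail, add_zero]
    have hFd : F d = |(M0 : ℤ) * (nx - ny) + ((jx : ℤ) - jy)| := by
      rw [hF]
      simp only [sfun]
      norm_num
      ring_nf
    rw [hFd]
    calc |(M0 : ℤ) * (nx - ny) + ((jx : ℤ) - jy)|
        ≤ |(M0 : ℤ) * (nx - ny)| + |(jx : ℤ) - jy| := abs_add_le _ _
      _ ≤ (M0 : ℤ) * 1 + (M0 : ℤ) := by
          gcongr ?_ + ?_
          · rw [abs_mul, abs_of_nonneg (by positivity : (0:ℤ) ≤ (M0:ℤ))]
            exact mul_le_mul_of_nonneg_left hn (by positivity)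
          · rw [abs_le]; constructor <;> push_cast <;> omega
      _ ≤ 2 * (M0 : ℤ) := by ring_nf; omega
  rw [h0, hsplit, hA]
  omega

lemma exists_f (hdD : d < D) (hM0 : 1 ≤ M0)
    (hb : ∀ x, BddAbove (SS d D M0 ω x)) :
    ∃ f : (Fin d → ℤ) → (Fin D → ℤ),
      Function.Injective f ∧ IsLip (3 * M0) f ∧ ∀ x, ω (f x) = true := by
  have hch : ∀ x, ∃ z ∈ block d D M0 x ((Hh d D M0 ω x : ℕ) : ℤ), ω z = true :=
    fun x => exists_open_in_block (Hh_good (hb x))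
  choose f hf hfo using hch
  have hsite : ∀ x, ∃ j, j < M0 ∧ f x = site d D M0 x ((Hh d D M0 ω x : ℕ) : ℤ) j := by
    intro x
    have := hf x
    simp only [block, Finset.mem_image, Finset.mem_range] at this
    obtain ⟨j, hj, hjj⟩ := this
    exact ⟨j, hj, hjj.symm⟩
  choose jf hjf hfs using hsite
  have hHlip : ∀ x y : Fin d → ℤ, norm1 (x - y) = 1 →
      |((Hh d D M0 ω x : ℕ) : ℤ) - ((Hh d D M0 ω y : ℕ) : ℤ)| ≤ 1 := by
    intro x y hxy
    have h1 := Hh_lip (hb x) (hb y) hxy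
    have h2 := Hh_lip (hb y) (hb x) (norm1_sub_comm x y ▸ hxy)
    rw [abs_le]; constructor <;> push_cast <;> omega
  refine ⟨f, ?_, ?_, hfo⟩
  · intro x y hxyf
    rw [hfs x, hfs y] at hxyf
    have := site_inj hdD hM0 (hjf x) (hjf y) hxyf
    exact this.1
  · intro x y hxy
    rw [hfs x, hfs y]
    have := norm1_site_bound hdD hM0 (hjf x) (hjf y) (hHlip x y hxy) hxy
    calc norm1 _ ≤ 3 * (M0 : ℤ) := this
      _ = ((3 * M0 : ℕ) : ℤ) := by push_cast; ring
end buildf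

-- part 5: measure estimates
section meas
open scoped ENNReal

variable {p : ℝ}

def GoodValid (d : ℕ) (x : Fin d → ℤ) (n : ℕ) (l : List (Op d)) : Prop :=
  (endSt (x, (n : ℤ)) l).2 = 0 ∧ (∀ a ∈ asserts (x, (n : ℤ)) l, 1 ≤ a.2) ∧
    (asserts (x, (n : ℤ)) l).Nodup

def Ablocks (d D M0 : ℕ) (x : Fin d → ℤ) (n : ℕ) (l : List (Op d)) :
    Finset (Fin D → ℤ) :=
  (asserts (x, (n : ℤ)) l).toFinset.biUnion (fun a => block d D M0 a.1 a.2)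

def cylE (D : ℕ) (A : Finset (Fin D → ℤ)) : Set ((Fin D → ℤ) → Bool) :=
  {ω | ∀ s ∈ A, ω s = false}

def EE (d D M0 : ℕ) (x : Fin d → ℤ) (n : ℕ) : Set ((Fin D → ℤ) → Bool) :=
  ⋃ (l : List (Op d)) (_ : GoodValid d x n l), cylE D (Ablocks d D M0 x n l)

lemma coverage {ω : (Fin D → ℤ) → Bool} {x : Fin d → ℤ} {n : ℕ}
    (h : n ∈ SS d D M0 ω x) : ω ∈ EE d D M0 x n := by
  obtain ⟨hn1, l, hend, hlev, hbad⟩ := h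
  obtain ⟨l', he', hnd', hsub'⟩ := prune l.length l le_rfl (x, (n : ℤ))
  have hgv : GoodValid d x n l' :=
    ⟨he' ▸ hend, fun a ha => hlev a (hsub' a ha), hnd'⟩
  refine Set.mem_iUnion.mpr ⟨l', Set.mem_iUnion.mpr ⟨hgv, ?_⟩⟩
  intro s hs
  simp only [Ablocks, Finset.mem_biUnion, List.mem_toFinset] at hs
  obtain ⟨a, ha, hsa⟩ := hs
  exact hbad a (hsub' a ha) s hsa

lemma card_Ablocks (hdD : d < D) (hM0 : 1 ≤ M0) {x : Fin d → ℤ} {n : ℕ}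
    {l : List (Op d)} (h : GoodValid d x n l) :
    (Ablocks d D M0 x n l).card = M0 * (l.count none) := by
  rw [Ablocks, Finset.card_biUnion]
  · rw [Finset.sum_congr rfl (fun a _ => card_block hdD hM0 a.1 a.2),
      Finset.sum_const, List.toFinset_card_of_nodup h.2.2, length_asserts]
    rw [smul_eq_mul, mul_comm]
  · intro a _ b _ hab
    exact block_disjoint hdD hM0 hab

lemma count_rel {x : Fin d → ℤ} {n : ℕ} {l : List (Op d)}
    (h : (endSt (x, (n : ℤ)) l).2 = 0) : n + l.length = 2 * l.count none := by
  have := level_endSt (x, (n : ℤ)) l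
  rw [h] at this
  simp only at this
  omega

lemma measure_cylE {μ : Measure ((Fin D → ℤ) → Bool)} (hμ : IsBernoulli p μ)
    (A : Finset (Fin D → ℤ)) :
    μ (cylE D A) = (ENNReal.ofReal (1 - p)) ^ A.card := by
  have h2 := hμ.2 A (fun _ => false)
  have h3 : cylE D A = {ω : (Fin D → ℤ) → Bool | ∀ s ∈ A, ω s = (fun _ => false) s} := rfl
  rw [h3, h2]
  simp [Finset.prod_const]

lemma measure_EE (hdD : d < D) {m : ℕ} (hM0 : 1 ≤ 2 * m)
    {μ : Measure ((Fin D → ℤ) → Bool)} (hμ : IsBernoulli p μ)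
    (hp : 0 ≤ 1 - p)
    (hcr : ((2 * d + 1 : ℕ) : ℝ≥0∞) * (ENNReal.ofReal (1 - p)) ^ m ≤ 2⁻¹)
    (x : Fin d → ℤ) (n : ℕ) :
    μ (EE d D (2 * m) x n) ≤ 2 * ((ENNReal.ofReal (1 - p)) ^ m) ^ n := by
  classical
  set q : ℝ≥0∞ := ENNReal.ofReal (1 - p) with hq
  set r : ℝ≥0∞ := q ^ m with hr
  have hstep1 : μ (EE d D (2 * m) x n) ≤ ∑' l : List (Op d), r ^ (n + l.length) := by
    refine le_trans (measure_iUnion_le _) (ENNReal.tsum_le_tsum fun l => ?_)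
    by_cases hgv : GoodValid d x n l
    · rw [Set.iUnion_eq_if, if_pos hgv]
      rw [measure_cylE hμ, card_Ablocks hdD hM0 hgv]
      have hcnt := count_rel (x := x) (n := n) (l := l) hgv.1
      have h5 : (2 * m) * l.count none = m * (n + l.length) := by
        rw [hcnt]; ring
      rw [h5, pow_mul]
    · rw [Set.iUnion_eq_if, if_neg hgv]
      simp
  -- reindex by length
  have hstep2 : ∑' l : List (Op d), r ^ (n + l.length)
      = ∑' σ : (L : ℕ) × (Fin L → Op d), r ^ (n + σ.1) := by
    have h := Equiv.tsum_eq (List.equivSigmaTuple (α := Op d))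
      (fun σ : (L : ℕ) × (Fin L → Op d) => r ^ (n + σ.1))
    rw [← h]
    refine tsum_congr fun l => ?_
    rfl
  have hcard : ∀ L : ℕ, (Fintype.card (Fin L → Op d) : ℝ≥0∞)
      = ((2 * d + 1 : ℕ) : ℝ≥0∞) ^ L := by
    intro L
    rw [Fintype.card_fun]
    have : Fintype.card (Op d) = 2 * d + 1 := by
      simp [Fintype.card_option, Fintype.card_prod]
      ring
    rw [this, Fintype.card_fin]
    push_cast
    ring
  have hstep3 : ∑' σ : (L : ℕ) × (Fin L → Op d), r ^ (n + σ.1)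
      ≤ 2 * r ^ n := by
    rw [ENNReal.tsum_sigma']
    calc ∑' (L : ℕ) (_ : Fin L → Op d), r ^ (n + L)
        = ∑' L : ℕ, (Fintype.card (Fin L → Op d) : ℝ≥0∞) * r ^ (n + L) := by
          refine tsum_congr fun L => ?_
          rw [tsum_fintype, Finset.sum_const, Finset.card_univ, nsmul_eq_mul]
      _ = ∑' L : ℕ, r ^ n * (((2 * d + 1 : ℕ) : ℝ≥0∞) * r) ^ L := by
          refine tsum_congr fun L => ?_
          rw [hcard, pow_add, mul_pow]
          ring
      _ = r ^ n * (1 - ((2 * d + 1 : ℕ) : ℝ≥0∞) * r)⁻¹ := by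
          rw [ENNReal.tsum_mul_left, ENNReal.tsum_geometric]
      _ ≤ r ^ n * 2 := by
          gcongr
          have h1 : (2 : ℝ≥0∞)⁻¹ ≤ 1 - ((2 * d + 1 : ℕ) : ℝ≥0∞) * r := by
            have := tsub_le_tsub_left hcr (1 : ℝ≥0∞)
            rwa [ENNReal.one_sub_inv_two] at this
          calc (1 - ((2 * d + 1 : ℕ) : ℝ≥0∞) * r)⁻¹
              ≤ ((2 : ℝ≥0∞)⁻¹)⁻¹ := ENNReal.inv_le_inv.mpr h1
            _ = 2 := by rw [inv_inv]
      _ = 2 * r ^ n := by ring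
  calc μ (EE d D (2 * m) x n) ≤ _ := hstep1
    _ = _ := hstep2
    _ ≤ 2 * r ^ n := hstep3

end meas

end LipPerc

open scoped ENNReal in
open LipPerc in
/-- For `1 ≤ d < D` and every `p ∈ (0,1)` there exists `M ≥ 1` such that
`P_p`-a.s. there is an `M`-Lipschitz injection from `ℤ^d` into the open sites
of `ℤ^D`. -/
theorem lipschitz_injection_for_large_M (d D : ℕ) (hd : 1 ≤ d) (hdD : d < D)
    (p : ℝ) (hp0 : 0 < p) (hp1 : p < 1) :
    ∃ M : ℕ, 1 ≤ M ∧
      ∀ μ : Measure ((Fin D → ℤ) → Bool), IsBernoulli p μ →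
        ∀ᵐ ω ∂μ, ∃ f : (Fin d → ℤ) → (Fin D → ℤ),
          Function.Injective f ∧ IsLip M f ∧ ∀ x, ω (f x) = true := by
  classical
  have hd2 : (0:ℝ) < 1 / (2 * (2 * (d:ℝ) + 1)) := by positivity
  obtain ⟨m₀, hm₀⟩ := exists_pow_lt_of_lt_one hd2 (show 1 - p < 1 by linarith)
  obtain ⟨m, hm1, hpm⟩ : ∃ m : ℕ, 1 ≤ m ∧ (1 - p) ^ m < 1 / (2 * (2 * (d:ℝ) + 1)) := by
    refine ⟨m₀ + 1, by omega, lt_of_le_of_lt ?_ hm₀⟩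
    exact pow_le_pow_of_le_one (by linarith) (by linarith) (Nat.le_succ m₀)
  set r : ℝ≥0∞ := ENNReal.ofReal ((1 - p) ^ m) with hrdef
  have hrof : r = ENNReal.ofReal ((1 - p) ^ m) := hrdef
  have hqr : (ENNReal.ofReal (1 - p)) ^ m = r := by
    rw [hrdef, ← ENNReal.ofReal_pow (by linarith)]
  have hcr : ((2 * d + 1 : ℕ) : ℝ≥0∞) * r ≤ 2⁻¹ := by
    rw [hrof]
    have hnc : ((2 * d + 1 : ℕ) : ℝ≥0∞) = ENNReal.ofReal ((2 * d + 1 : ℕ) : ℝ) := by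
      rw [ENNReal.ofReal_natCast]
    rw [hnc, ← ENNReal.ofReal_mul (by positivity)]
    have h12 : ((2 * d + 1 : ℕ) : ℝ) * (1 - p) ^ m ≤ 1 / 2 := by
      have hc : ((2 * d + 1 : ℕ) : ℝ) = 2 * (d:ℝ) + 1 := by push_cast; ring
      rw [hc]
      have hcpos : (0:ℝ) < 2 * (d:ℝ) + 1 := by positivity
      have h2 : (2 * (d:ℝ) + 1) * (1 - p) ^ m
          ≤ (2 * (d:ℝ) + 1) * (1 / (2 * (2 * (d:ℝ) + 1))) :=
        mul_le_mul_of_nonneg_left (le_of_lt hpm) (by positivity)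
      calc (2 * (d:ℝ) + 1) * (1 - p) ^ m
          ≤ (2 * (d:ℝ) + 1) * (1 / (2 * (2 * (d:ℝ) + 1))) := h2
        _ = 1 / 2 := by field_simp
    calc ENNReal.ofReal (((2 * d + 1 : ℕ) : ℝ) * (1 - p) ^ m)
        ≤ ENNReal.ofReal (1 / 2) := ENNReal.ofReal_le_ofReal h12
      _ = 2⁻¹ := by
          rw [one_div, ENNReal.ofReal_inv_of_pos (by norm_num)]
          norm_num
  have hone : (1 : ℝ≥0∞) ≤ ((2 * d + 1 : ℕ) : ℝ≥0∞) := by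
    rw [Nat.one_le_cast]; omega
  have hrle : r ≤ 2⁻¹ := le_trans (le_mul_of_one_le_left zero_le hone) hcr
  have hr1 : r < 1 := lt_of_le_of_lt hrle (ENNReal.inv_lt_one.mpr ENNReal.one_lt_two)
  refine ⟨3 * (2 * m), by omega, ?_⟩

  intro μ hμ
  have hEE : ∀ (x : Fin d → ℤ) (n : ℕ), μ (EE d D (2 * m) x n) ≤ 2 * r ^ n := by
    intro x n
    have hee := measure_EE (p := p) (m := m) hdD (by omega) hμ (by linarith)
      (by rw [hqr]; exact hcr) x n
    rwa [hqr] at hee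
  set T : (Fin d → ℤ) → Set ((Fin D → ℤ) → Bool) :=
    fun x => ⋂ n : ℕ, ⋃ j : ℕ, EE d D (2 * m) x (n + j) with hTdef
  have hT : ∀ x, μ (T x) = 0 := by
    intro x
    have hb : ∀ n : ℕ, μ (T x) ≤ 2 * (1 - r)⁻¹ * r ^ n := by
      intro n
      calc μ (T x) ≤ μ (⋃ j : ℕ, EE d D (2 * m) x (n + j)) :=
            measure_mono (Set.iInter_subset _ n)
        _ ≤ ∑' j : ℕ, μ (EE d D (2 * m) x (n + j)) := measure_iUnion_le _
        _ ≤ ∑' j : ℕ, (2 * r ^ n) * r ^ j := by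
            refine ENNReal.tsum_le_tsum fun j => ?_
            rw [mul_assoc, ← pow_add]
            exact hEE x (n + j)
        _ = (2 * r ^ n) * (1 - r)⁻¹ := by
            rw [ENNReal.tsum_mul_left, ENNReal.tsum_geometric]
        _ = 2 * (1 - r)⁻¹ * r ^ n := by ring
    have hfin : 2 * (1 - r)⁻¹ ≠ ⊤ := by
      refine ENNReal.mul_ne_top (by norm_num) ?_
      rw [Ne, ENNReal.inv_eq_top, tsub_eq_zero_iff_le]
      exact fun h0 => absurd hr1 (not_lt.mpr h0)
    have hlim : Filter.Tendsto (fun n : ℕ => 2 * (1 - r)⁻¹ * r ^ n)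
        Filter.atTop (nhds 0) := by
      have h0 := ENNReal.tendsto_pow_atTop_nhds_zero_of_lt_one hr1
      have := ENNReal.Tendsto.const_mul h0 (Or.inr hfin)
      simpa using this
    exact le_antisymm (ge_of_tendsto' hlim hb) zero_le
  have hBad : μ (⋃ x : Fin d → ℤ, T x) = 0 := measure_iUnion_null hT
  rw [ae_iff]
  refine measure_mono_null ?_ hBad
  intro ω hω
  by_contra hnot
  apply hω
  simp only [Set.mem_iUnion, not_exists] at hnot
  have hbdd : ∀ x : Fin d → ℤ, BddAbove (SS d D (2 * m) ω x) := by
    intro x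
    have hx := hnot x
    simp only [hTdef, Set.mem_iInter, Set.mem_iUnion, not_forall, not_exists] at hx
    obtain ⟨n, hn⟩ := hx
    refine ⟨n, fun k hk => ?_⟩
    by_contra hkn
    push_neg at hkn
    have hcov := coverage hk
    have heq : n + (k - n) = k := by omega
    exact hn (k - n) (by rw [heq]; exact hcov)
  obtain ⟨f, hinj, hlip, hopen⟩ := exists_f hdD (by omega) hbdd
  exact ⟨f, hinj, hlip, hopen⟩
end

section
/- Let d ≥ 2 and D ≥ 1 be integers, let p ∈ (0,1), and let η ∈ {0,1}^{Z^d} be any fixed configuration. Then for P_p-almost every ω ∈ {0,1}^{Z^D} there exists no 1-Lipschitz embedding of η into ω, i.e., no injection f : Z^d → Z^D with ‖f(x) − f(y)‖₁ ≤ 1 whenever ‖x − y‖₁ = 1 and with η(x) = ω(f(x)) for all x ∈ Z^d. -/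
open MeasureTheory
open scoped ENNReal

namespace NoEmbed

lemma norm1_nonneg {n} (x : Fin n → ℤ) : 0 ≤ norm1 x :=
  Finset.sum_nonneg fun i _ => abs_nonneg _

lemma norm1_eq_zero {n} {x : Fin n → ℤ} (h : norm1 x = 0) : x = 0 := by
  funext i
  have := (Finset.sum_eq_zero_iff_of_nonneg (fun i _ => abs_nonneg (x i))).1 h i (Finset.mem_univ i)
  simpa [abs_eq_zero] using this

lemma abs_le_one {n} {x : Fin n → ℤ} (h : norm1 x = 1) (i : Fin n) : |x i| ≤ 1 := by
  have h2 : |x i| ≤ norm1 x := Finset.single_le_sum (fun j _ => abs_nonneg (x j)) (Finset.mem_univ i)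
  omega

lemma support_unique {n} {x : Fin n → ℤ} (h : norm1 x = 1) {a b : Fin n} (ha : x a ≠ 0)
    (hb : b ≠ a) : x b = 0 := by
  have h1 : 1 ≤ |x a| := Int.one_le_abs ha
  have h2 : |x a| + |x b| ≤ norm1 x := by
    have := Finset.sum_le_sum_of_subset_of_nonneg (Finset.subset_univ ({a, b} : Finset (Fin n)))
      (fun j _ _ => abs_nonneg (x j))
    rwa [Finset.sum_pair (Ne.symm hb)] at this
  rw [h] at h2
  have h3 := abs_nonneg (x b)
  have : |x b| = 0 := by omega
  exact abs_eq_zero.1 this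

def dec (D : ℕ) (t : Fin D × Bool) : Fin D → ℤ :=
  fun j => if j = t.1 then (if t.2 then 1 else -1) else 0

lemma exists_code {D} {x : Fin D → ℤ} (h : norm1 x = 1) : ∃ t : Fin D × Bool, x = dec D t := by
  have hx : x ≠ 0 := by
    intro h0; rw [h0] at h; simp [norm1] at h
  obtain ⟨a, ha⟩ := Function.ne_iff.1 hx
  simp only [Pi.zero_apply] at ha
  have h1 := abs_le.1 (abs_le_one h a)
  have : x a = 1 ∨ x a = -1 := by omega
  refine ⟨(a, x a = 1), ?_⟩
  funext j
  by_cases hj : j = a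
  · subst hj
    rcases this with h' | h' <;> simp [dec, h']
  · rw [support_unique h ha hj]
    simp [dec, hj]

lemma key {D} {x y z t : Fin D → ℤ} (hx : norm1 x = 1) (hy : norm1 y = 1) (hz : norm1 z = 1)
    (ht : norm1 t = 1) (heq : x + y = z + t) (hxz : x ≠ z) (hxy0 : x + y ≠ 0) :
    x = t ∧ y = z := by
  have hx0 : x ≠ 0 := by intro h0; rw [h0] at hx; simp [norm1] at hx
  obtain ⟨a, ha⟩ := Function.ne_iff.1 hx0
  simp only [Pi.zero_apply] at ha
  obtain ⟨hxa1, hxa2⟩ := abs_le.1 (abs_le_one hx a)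
  obtain ⟨hya1, hya2⟩ := abs_le.1 (abs_le_one hy a)
  obtain ⟨hza1, hza2⟩ := abs_le.1 (abs_le_one hz a)
  obtain ⟨hta1, hta2⟩ := abs_le.1 (abs_le_one ht a)
  have heqa : x a + y a = z a + t a := congrFun heq a
  -- z a ≠ x a
  have hzne : z a ≠ x a := by
    intro hc
    apply hxz
    funext j
    by_cases hj : j = a
    · subst hj; omega
    · rw [support_unique hx ha hj, support_unique hz (by omega) hj]
  -- y a ≠ - x a
  have hyne : y a ≠ -x a := by
    intro hc
    apply hxy0
    funext j
    by_cases hj : j = a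
    · subst hj; simp; omega
    · have hy' : y j = 0 := support_unique hy (by omega) hj
      have hx' : x j = 0 := support_unique hx ha hj
      simp [hx', hy']
  have hta' : t a = x a := by omega
  have hxt : x = t := by
    funext j
    by_cases hj : j = a
    · subst hj; omega
    · rw [support_unique hx ha hj, support_unique ht (by omega) hj]
  refine ⟨hxt, ?_⟩
  have : x + y = z + x := by rw [heq, hxt]
  funext j
  have := congrFun this j
  simp at this
  omega


lemma structure_lemma {D} (F : ℕ → ℕ → (Fin D → ℤ))
    (hinj : ∀ i j i' j', F i j = F i' j' → i = i' ∧ j = j')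
    (hv : ∀ i j, norm1 (F (i+1) j - F i j) = 1)
    (hw : ∀ i j, norm1 (F i (j+1) - F i j) = 1) :
    ∀ i j, F i j = F 0 0 + (∑ k ∈ Finset.range i, (F (k+1) 0 - F k 0))
      + (∑ l ∈ Finset.range j, (F 0 (l+1) - F 0 l)) := by
  have hsq : ∀ i j, F (i+1) (j+1) - F i (j+1) = F (i+1) j - F i j := by
    intro i j
    have heq : (F (i+1) j - F i j) + (F (i+1) (j+1) - F (i+1) j)
        = (F i (j+1) - F i j) + (F (i+1) (j+1) - F i (j+1)) := by abel
    have hxz : F (i+1) j - F i j ≠ F i (j+1) - F i j := by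
      intro hc
      have : F (i+1) j = F i (j+1) := by
        have := sub_left_inj.1 hc
        exact this
      obtain ⟨h1, h2⟩ := hinj _ _ _ _ this
      omega
    have hxy0 : (F (i+1) j - F i j) + (F (i+1) (j+1) - F (i+1) j) ≠ 0 := by
      intro hc
      have : F (i+1) (j+1) = F i j := by
        have : F (i+1) (j+1) - F i j = 0 := by rw [← hc]; abel
        have := sub_eq_zero.1 this
        exact this
      obtain ⟨h1, h2⟩ := hinj _ _ _ _ this
      omega
    exact ((key (hv i j) (hw (i+1) j) (hw i j) (hv i (j+1)) heq hxz hxy0).1).symm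
  have hvconst : ∀ i j, F (i+1) j - F i j = F (i+1) 0 - F i 0 := by
    intro i j
    induction j with
    | zero => rfl
    | succ j ih => rw [hsq i j, ih]
  have hcol : ∀ j, F 0 j = F 0 0 + ∑ l ∈ Finset.range j, (F 0 (l+1) - F 0 l) := by
    intro j
    induction j with
    | zero => simp
    | succ j ih =>
      rw [Finset.sum_range_succ, ← add_assoc, ← ih]
      abel
  intro i j
  induction i with
  | zero => simpa using hcol j
  | succ i ih =>
    rw [Finset.sum_range_succ]
    have : F (i+1) j = F i j + (F (i+1) 0 - F i 0) := by
      rw [← hvconst i j]; abel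
    rw [this, ih]
    abel

lemma match_measure {S : Type*} {p : ℝ} {μ : Measure (S → Bool)} (hμ : IsBernoulli p μ)
    {Q' : Type*} (Q : Finset Q') (g : Q' → S) (hg : Set.InjOn g Q) (ηf : Q' → Bool) :
    μ {ω | ∀ q ∈ Q, ω (g q) = ηf q}
      = ∏ q ∈ Q, ENNReal.ofReal (if ηf q then p else 1 - p) := by
  classical
  set b : S → Bool := fun s => if h : ∃ q, q ∈ Q ∧ g q = s then ηf h.choose else false with hb
  have hbg : ∀ q₀ ∈ Q, b (g q₀) = ηf q₀ := by
    intro q₀ hq₀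
    have h : ∃ q, q ∈ Q ∧ g q = g q₀ := ⟨q₀, hq₀, rfl⟩
    rw [hb]
    simp only [dif_pos h]
    congr 1
    exact hg h.choose_spec.1 hq₀ h.choose_spec.2
  have hset : {ω : S → Bool | ∀ q ∈ Q, ω (g q) = ηf q} = {ω | ∀ s ∈ Q.image g, ω s = b s} := by
    ext ω
    simp only [Set.mem_setOf_eq, Finset.mem_image]
    constructor
    · rintro h s ⟨q, hq, rfl⟩
      rw [h q hq, hbg q hq]
    · intro h q hq
      rw [h (g q) ⟨q, hq, rfl⟩, hbg q hq]
  rw [hset, hμ.2 (Q.image g) b,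
    Finset.prod_image (fun x hx y hy h => hg hx hy h)]
  exact Finset.prod_congr rfl fun q hq => by rw [hbg q hq]

lemma match_bound {S : Type*} {p : ℝ} {μ : Measure (S → Bool)} (hμ : IsBernoulli p μ)
    {Q' : Type*} (Q : Finset Q') (g : Q' → S) (hg : Set.InjOn g Q) (ηf : Q' → Bool) :
    μ {ω | ∀ q ∈ Q, ω (g q) = ηf q} ≤ (ENNReal.ofReal (max p (1 - p))) ^ Q.card := by
  rw [match_measure hμ Q g hg ηf]
  calc ∏ q ∈ Q, ENNReal.ofReal (if ηf q then p else 1 - p)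
      ≤ ∏ _q ∈ Q, ENNReal.ofReal (max p (1 - p)) := by
        apply Finset.prod_le_prod' 
        intro q _
        apply ENNReal.ofReal_le_ofReal
        split
        · exact le_max_left _ _
        · exact le_max_right _ _
    _ = (ENNReal.ofReal (max p (1 - p))) ^ Q.card := Finset.prod_const _

def extc {D : ℕ} (hD : 0 < D) {n : ℕ} (vs : Fin n → Fin D × Bool) : ℕ → Fin D × Bool :=
  fun k => if h : k < n then vs ⟨k, h⟩ else (⟨0, hD⟩, true)

def gmap {D : ℕ} (u : Fin D → ℤ) (vs ws : ℕ → Fin D × Bool) (i j : ℕ) : Fin D → ℤ :=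
  u + (∑ k ∈ Finset.range i, dec D (vs k)) + (∑ l ∈ Finset.range j, dec D (ws l))

open Classical in
noncomputable def Ev {D : ℕ} (hD : 0 < D) (ηg : ℕ → ℕ → Bool) (u : Fin D → ℤ) (n : ℕ)
    (t : (Fin n → Fin D × Bool) × (Fin n → Fin D × Bool)) : Set ((Fin D → ℤ) → Bool) :=
  if (∀ i < n, ∀ j < n, ∀ i' < n, ∀ j' < n,
      gmap u (extc hD t.1) (extc hD t.2) i j = gmap u (extc hD t.1) (extc hD t.2) i' j'
        → i = i' ∧ j = j')
  then {ω | ∀ i < n, ∀ j < n, ω (gmap u (extc hD t.1) (extc hD t.2) i j) = ηg i j}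
  else ∅

lemma Ev_bound {D : ℕ} {p : ℝ} {μ : Measure ((Fin D → ℤ) → Bool)} (hμ : IsBernoulli p μ)
    (hD : 0 < D) (ηg : ℕ → ℕ → Bool) (u : Fin D → ℤ) (n : ℕ)
    (t : (Fin n → Fin D × Bool) × (Fin n → Fin D × Bool)) :
    μ (Ev hD ηg u n t) ≤ (ENNReal.ofReal (max p (1 - p))) ^ (n * n) := by
  rw [Ev]
  split
  case isTrue hinj =>
    have hQ : {ω : (Fin D → ℤ) → Bool | ∀ i < n, ∀ j < n,
          ω (gmap u (extc hD t.1) (extc hD t.2) i j) = ηg i j}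
        = {ω | ∀ q ∈ Finset.range n ×ˢ Finset.range n,
            ω (gmap u (extc hD t.1) (extc hD t.2) q.1 q.2) = ηg q.1 q.2} := by
      ext ω
      simp only [Set.mem_setOf_eq, Finset.mem_product, Finset.mem_range, Prod.forall]
      constructor
      · rintro h a b ⟨ha, hb⟩; exact h a ha b hb
      · intro h a ha b hb; exact h a b ⟨ha, hb⟩
    rw [hQ]
    have hinjon : Set.InjOn (fun q : ℕ × ℕ => gmap u (extc hD t.1) (extc hD t.2) q.1 q.2)
        ↑(Finset.range n ×ˢ Finset.range n) := by
      intro q hq q' hq' hgq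
      simp only [Finset.mem_coe, Finset.mem_product, Finset.mem_range] at hq hq'
      have := hinj q.1 hq.1 q.2 hq.2 q'.1 hq'.1 q'.2 hq'.2 hgq
      exact Prod.ext this.1 this.2
    have := match_bound hμ (Finset.range n ×ˢ Finset.range n)
      (fun q : ℕ × ℕ => gmap u (extc hD t.1) (extc hD t.2) q.1 q.2) hinjon
      (fun q => ηg q.1 q.2)
    simpa [Finset.card_product, Finset.card_range] using this
  case isFalse => simp

lemma cover {d D : ℕ} (hD : 0 < D) (η : (Fin d → ℤ) → Bool)
    (emb : ℕ → ℕ → (Fin d → ℤ)) (hembinj : ∀ i j i' j', emb i j = emb i' j' → i = i' ∧ j = j')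
    (hemb1 : ∀ i j, norm1 (emb (i+1) j - emb i j) = 1)
    (hemb2 : ∀ i j, norm1 (emb i (j+1) - emb i j) = 1)
    (u : Fin D → ℤ) (n : ℕ) (ω : (Fin D → ℤ) → Bool) (f : (Fin d → ℤ) → (Fin D → ℤ))
    (hf : Function.Injective f) (hlip : IsLip 1 f)
    (hmatch : ∀ x, ω (f x) = η x) (hu : f (emb 0 0) = u) :
    ω ∈ ⋃ t, Ev hD (fun i j => η (emb i j)) u n t := by
  classical
  set F : ℕ → ℕ → (Fin D → ℤ) := fun i j => f (emb i j) with hF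
  have hinj : ∀ i j i' j', F i j = F i' j' → i = i' ∧ j = j' := by
    intro i j i' j' h
    exact hembinj i j i' j' (hf h)
  have hstep : ∀ i j i' j', norm1 (emb i j - emb i' j') = 1 → (i,j) ≠ (i',j')
      → norm1 (F i j - F i' j') = 1 := by
    intro i j i' j' h1 hne
    have hle := hlip _ _ h1
    have hne0 : F i j - F i' j' ≠ 0 := by
      intro hc
      have := hinj i j i' j' (sub_eq_zero.1 hc)
      exact hne (by simp [this.1, this.2])
    have hle' : norm1 (F i j - F i' j') ≤ ((1:ℕ) : ℤ) := hle
    have h0 : norm1 (F i j - F i' j') ≠ 0 := fun h0 => hne0 (norm1_eq_zero h0)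
    have := norm1_nonneg (F i j - F i' j')
    simp only [Nat.cast_one] at hle'
    omega
  have hv : ∀ i j, norm1 (F (i+1) j - F i j) = 1 := fun i j =>
    hstep _ _ _ _ (hemb1 i j) (by simp)
  have hw : ∀ i j, norm1 (F i (j+1) - F i j) = 1 := fun i j =>
    hstep _ _ _ _ (hemb2 i j) (by simp)
  have hform := structure_lemma F hinj hv hw
  have hcv : ∀ k : ℕ, ∃ c : Fin D × Bool, F (k+1) 0 - F k 0 = dec D c :=
    fun k => exists_code (hv k 0)
  have hcw : ∀ l : ℕ, ∃ c : Fin D × Bool, F 0 (l+1) - F 0 l = dec D c :=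
    fun l => exists_code (hw 0 l)
  choose cv hcv' using hcv
  choose cw hcw' using hcw
  refine Set.mem_iUnion.2 ⟨(fun k : Fin n => cv k, fun l : Fin n => cw l), ?_⟩
  have hg : ∀ i < n, ∀ j < n,
      gmap u (extc hD (fun k : Fin n => cv (k:ℕ))) (extc hD (fun l : Fin n => cw (l:ℕ))) i j
        = F i j := by
    intro i hi j hj
    rw [gmap, hform i j, ← hu]
    congr 1
    · congr 1
      apply Finset.sum_congr rfl
      intro k hk
      have hkn : (k:ℕ) < n := lt_trans (Finset.mem_range.1 hk) hi
      rw [extc, dif_pos hkn, ← hcv' k]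
    · apply Finset.sum_congr rfl
      intro l hl
      have hln : (l:ℕ) < n := lt_trans (Finset.mem_range.1 hl) hj
      rw [extc, dif_pos hln, ← hcw' l]
  rw [Ev, if_pos]
  · intro i hi j hj
    rw [hg i hi j hj]
    exact hmatch (emb i j)
  · intro i hi j hj i' hi' j' hj' h
    rw [hg i hi j hj, hg i' hi' j' hj'] at h
    exact hinj _ _ _ _ h

end NoEmbed

open NoEmbed

/-- For `d ≥ 2`, `D ≥ 1`, `p ∈ (0,1)` and any fixed configuration `η` on `ℤ^d`,
for `P_p`-a.e. `ω` there is no 1-Lipschitz embedding of `η` into `ω`. -/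
theorem no_one_lipschitz_embedding (d D : ℕ) (hd : 2 ≤ d) (hD : 1 ≤ D)
    (p : ℝ) (hp0 : 0 < p) (hp1 : p < 1) (η : (Fin d → ℤ) → Bool)
    (μ : Measure ((Fin D → ℤ) → Bool)) (hμ : IsBernoulli p μ) :
    ∀ᵐ ω ∂μ, ¬ ∃ f : (Fin d → ℤ) → (Fin D → ℤ),
      Function.Injective f ∧ IsLip 1 f ∧ ∀ x, ω (f x) = η x := by
  classical
  have hD0 : 0 < D := hD
  -- the embedded quarter-plane in ℤ^d
  set i0 : Fin d := ⟨0, by omega⟩ with hi0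
  set i1 : Fin d := ⟨1, by omega⟩ with hi1
  have hi01 : i0 ≠ i1 := by
    simp [hi0, hi1, Fin.ext_iff]
  set emb : ℕ → ℕ → (Fin d → ℤ) :=
    fun i j c => if c = i0 then (i : ℤ) else if c = i1 then (j : ℤ) else 0 with hemb
  have hembinj : ∀ i j i' j', emb i j = emb i' j' → i = i' ∧ j = j' := by
    intro i j i' j' h
    have h0 := congrFun h i0
    have h1 := congrFun h i1
    simp [hemb, Ne.symm hi01] at h0 h1
    exact ⟨by exact_mod_cast h0, by exact_mod_cast h1⟩
  have hemb1 : ∀ i j, norm1 (emb (i+1) j - emb i j) = 1 := by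
    intro i j
    have hdiff : emb (i+1) j - emb i j = fun c => if c = i0 then 1 else 0 := by
      funext c
      by_cases hc : c = i0
      · subst hc; simp [hemb]
      · simp [hemb, hc]
    rw [hdiff, norm1]
    rw [Finset.sum_congr rfl (fun c _ => by
      show |if c = i0 then (1:ℤ) else 0| = if c = i0 then (1:ℤ) else 0
      split <;> simp)]
    simp
  have hemb2 : ∀ i j, norm1 (emb i (j+1) - emb i j) = 1 := by
    intro i j
    have hdiff : emb i (j+1) - emb i j = fun c => if c = i1 then 1 else 0 := by
      funext c
      by_cases hc : c = i1
      · subst hc; simp [hemb, Ne.symm hi01]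
      · simp [hemb, hc]
    rw [hdiff, norm1]
    rw [Finset.sum_congr rfl (fun c _ => by
      show |if c = i1 then (1:ℤ) else 0| = if c = i1 then (1:ℤ) else 0
      split <;> simp)]
    simp
  -- reduce to showing each B u is null
  rw [MeasureTheory.ae_iff]
  simp only [not_not]
  set r : ℝ := max p (1 - p) with hr
  have hr0 : 0 ≤ r := le_trans hp0.le (le_max_left _ _)
  have hr1 : r < 1 := max_lt hp1 (by linarith)
  set R : ℝ≥0∞ := ENNReal.ofReal r with hR
  have hcov : {ω : (Fin D → ℤ) → Bool | ∃ f : (Fin d → ℤ) → (Fin D → ℤ),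
      Function.Injective f ∧ IsLip 1 f ∧ ∀ x, ω (f x) = η x} ⊆ ⋃ u : Fin D → ℤ,
      {ω | ∃ f : (Fin d → ℤ) → (Fin D → ℤ),
        Function.Injective f ∧ IsLip 1 f ∧ (∀ x, ω (f x) = η x) ∧ f (emb 0 0) = u} := by
    rintro ω ⟨f, h1, h2, h3⟩
    exact Set.mem_iUnion.2 ⟨f (emb 0 0), f, h1, h2, h3, rfl⟩
  refine measure_mono_null hcov (MeasureTheory.measure_iUnion_null fun u => ?_)
  -- bound for each n
  have hb : ∀ n : ℕ, μ {ω | ∃ f : (Fin d → ℤ) → (Fin D → ℤ),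
      Function.Injective f ∧ IsLip 1 f ∧ (∀ x, ω (f x) = η x) ∧ f (emb 0 0) = u}
      ≤ ENNReal.ofReal (((D*2:ℝ)^n * (D*2)^n) * r^(n*n)) := by
    intro n
    have hsub : {ω | ∃ f : (Fin d → ℤ) → (Fin D → ℤ),
        Function.Injective f ∧ IsLip 1 f ∧ (∀ x, ω (f x) = η x) ∧ f (emb 0 0) = u}
        ⊆ ⋃ t, Ev hD0 (fun i j => η (emb i j)) u n t := by
      rintro ω ⟨f, h1, h2, h3, h4⟩
      exact cover hD0 η emb hembinj hemb1 hemb2 u n ω f h1 h2 h3 h4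
    calc μ _ ≤ μ (⋃ t, Ev hD0 (fun i j => η (emb i j)) u n t) := measure_mono hsub
      _ ≤ ∑' t, μ (Ev hD0 (fun i j => η (emb i j)) u n t) := measure_iUnion_le _
      _ = ∑ t, μ (Ev hD0 (fun i j => η (emb i j)) u n t) := tsum_fintype _
      _ ≤ ∑ _t : (Fin n → Fin D × Bool) × (Fin n → Fin D × Bool), R ^ (n*n) :=
          Finset.sum_le_sum fun t _ => Ev_bound hμ hD0 _ u n t
      _ = (Fintype.card ((Fin n → Fin D × Bool) × (Fin n → Fin D × Bool))) • R ^ (n*n) := by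
          rw [Finset.sum_const, Finset.card_univ]
      _ = ((D*2)^n * (D*2)^n : ℕ) • R ^ (n*n) := by
          congr 1
          simp [Fintype.card_prod, Fintype.card_fun, Fintype.card_fin, mul_comm]
      _ = (((D*2)^n * (D*2)^n : ℕ) : ℝ≥0∞) * R ^ (n*n) := nsmul_eq_mul _ _
      _ = ENNReal.ofReal (((D*2:ℝ)^n * (D*2)^n) * r^(n*n)) := by
          rw [ENNReal.ofReal_mul (by positivity), ENNReal.ofReal_pow hr0, ← hR]
          congr 1
          rw [← ENNReal.ofReal_natCast]
          congr 1
          push_cast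
          ring
  -- the bound tends to zero
  have htend : Filter.Tendsto (fun n : ℕ => ENNReal.ofReal (((D*2:ℝ)^n * (D*2)^n) * r^(n*n)))
      Filter.atTop (nhds 0) := by
    have h0 : (0:ℝ≥0∞) = ENNReal.ofReal 0 := by simp
    rw [h0]
    apply ENNReal.tendsto_ofReal
    have hbase : (0:ℝ) < (D*2:ℝ) * (D*2) := by positivity
    have hδ : (0:ℝ) < 1 / (2*((D*2:ℝ)*(D*2))) := by positivity
    have hev := (tendsto_pow_atTop_nhds_zero_of_lt_one hr0 hr1).eventually
      (gt_mem_nhds hδ)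
    apply squeeze_zero' (g := fun n : ℕ => (1/2:ℝ)^n)
      (Filter.Eventually.of_forall fun n => by positivity)
    · filter_upwards [hev] with n hn
      calc ((D*2:ℝ)^n * (D*2)^n) * r^(n*n) = ((D*2:ℝ)*(D*2)*r^n)^n := by
            conv_rhs => rw [mul_pow, mul_pow, ← pow_mul]
        _ ≤ (1/2:ℝ)^n := by
            apply pow_le_pow_left₀ (by positivity)
            have h2 : (D*2:ℝ)*(D*2) * r^n ≤ (D*2:ℝ)*(D*2) * (1/(2*((D*2:ℝ)*(D*2)))) :=
              mul_le_mul_of_nonneg_left hn.le (by positivity)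
            have h3 : (D*2:ℝ)*(D*2) * (1/(2*((D*2:ℝ)*(D*2)))) = 1/2 := by field_simp
            linarith
    · exact tendsto_pow_atTop_nhds_zero_of_lt_one (by norm_num) (by norm_num)
  exact le_antisymm (ge_of_tendsto' htend hb) zero_le
end

section
/- Let 1 ≤ d < D be integers and let p ∈ (0,1). Then P_p-almost surely there exist constants c₁, c₂, c₃, c₄, c₅ ∈ (0, ∞), a subset U of the set W_p(Z^D) of open sites, and a map f : Z^d → U that is a quasi-isometry between the metric spaces (Z^d, ℓ¹) and (U, ℓ¹). -/
open MeasureTheory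

/-- The ℓ¹-distance between two integer vectors, as a real number. -/
noncomputable def dist1 {n : ℕ} (x y : Fin n → ℤ) : ℝ := (norm1 (x - y) : ℝ)

/-- There is a quasi-isometry from `(ℤ^d, ℓ¹)` to some subspace `U` of the set of
open sites of the configuration `ω` on `ℤ^D`, equipped with the ℓ¹ metric. -/
def ExistsQuasiIsometry (d D : ℕ) (ω : (Fin D → ℤ) → Bool) : Prop :=
  ∃ c₁ c₂ c₃ c₄ c₅ : ℝ, 0 < c₁ ∧ 0 < c₂ ∧ 0 < c₃ ∧ 0 < c₄ ∧ 0 < c₅ ∧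
    ∃ U : Set (Fin D → ℤ), U ⊆ {y | ω y = true} ∧
      ∃ f : (Fin d → ℤ) → (Fin D → ℤ),
        (∀ x, f x ∈ U) ∧
        (∀ x x', c₁ * dist1 x x' - c₂ ≤ dist1 (f x) (f x') ∧
                 dist1 (f x) (f x') ≤ c₃ * dist1 x x' + c₄) ∧
        (∀ y ∈ U, ∃ x, dist1 (f x) y ≤ c₅)

namespace QI

variable {d D : ℕ}

abbrev Pt (d : ℕ) := (Fin d → ℤ) × ℤ
abbrev Move (d : ℕ) := Option (Fin d × Bool)

def unitv (i : Fin d) (b : Bool) : Fin d → ℤ :=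
  fun k => if k = i then (if b then 1 else -1) else 0

def shift : Move d → Pt d
  | none => (0, 1)
  | some (i, b) => (unitv i b, -1)

def apply1 (p : Pt d) (mv : Move d) : Pt d := p + shift mv

def run (p : Pt d) (l : List (Move d)) : Pt d := l.foldl apply1 p

@[simp] lemma run_nil (p : Pt d) : run p [] = p := rfl
@[simp] lemma run_cons (p : Pt d) (mv : Move d) (l : List (Move d)) :
    run p (mv :: l) = run (apply1 p mv) l := rfl
@[simp] lemma run_append (p : Pt d) (l₁ l₂ : List (Move d)) :
    run p (l₁ ++ l₂) = run (run p l₁) l₂ := List.foldl_append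

def Valid (bad : Pt d → Prop) : Pt d → List (Move d) → Prop
  | _, [] => True
  | p, mv :: l => (mv = none → bad p) ∧ Valid bad (apply1 p mv) l

@[simp] lemma valid_nil (bad : Pt d → Prop) (p : Pt d) : Valid bad p [] := trivial

@[simp] lemma valid_cons (bad : Pt d → Prop) (p : Pt d) (mv : Move d) (l : List (Move d)) :
    Valid bad p (mv :: l) ↔ (mv = none → bad p) ∧ Valid bad (apply1 p mv) l := Iff.rfl

lemma valid_append (bad : Pt d → Prop) (p : Pt d) (l₁ l₂ : List (Move d)) :
    Valid bad p (l₁ ++ l₂) ↔ Valid bad p l₁ ∧ Valid bad (run p l₁) l₂ := by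
  induction l₁ generalizing p with
  | nil => simp
  | cons mv t ih => simp [ih, and_assoc]

def climbStates : Pt d → List (Move d) → List (Pt d)
  | _, [] => []
  | p, none :: l => p :: climbStates (apply1 p none) l
  | p, some m :: l => climbStates (apply1 p (some m)) l

def numClimbs : List (Move d) → ℕ
  | [] => 0
  | none :: l => numClimbs l + 1
  | some _ :: l => numClimbs l

lemma length_climbStates (p : Pt d) (l : List (Move d)) :
    (climbStates p l).length = numClimbs l := by
  induction l generalizing p with
  | nil => rfl
  | cons mv t ih =>
    cases mv with
    | none => simp [climbStates, numClimbs, ih]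
    | some m => simp [climbStates, numClimbs, ih]

lemma bad_of_mem_climbStates {bad : Pt d → Prop} {p : Pt d} {l : List (Move d)}
    (hv : Valid bad p l) {q : Pt d} (hq : q ∈ climbStates p l) : bad q := by
  induction l generalizing p with
  | nil => simp [climbStates] at hq
  | cons mv t ih =>
    cases mv with
    | none =>
      rw [climbStates, List.mem_cons] at hq
      rcases hq with hq | hq
      · exact hq ▸ hv.1 rfl
      · exact ih hv.2 hq
    | some m => exact ih hv.2 hq

lemma run_eq_add (p : Pt d) (l : List (Move d)) :
    run p l = p + (l.map shift).sum := by
  induction l generalizing p with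
  | nil => simp
  | cons mv t ih => simp [ih, apply1, add_assoc]

lemma snd_shiftSum (l : List (Move d)) :
    ((l.map shift).sum).2 = 2 * (numClimbs l : ℤ) - l.length := by
  induction l with
  | nil => simp [numClimbs]
  | cons mv t ih =>
    cases mv with
    | none => simp [numClimbs, shift, Prod.snd_add, ih]; ring
    | some m =>
      obtain ⟨i, b⟩ := m
      simp [numClimbs, shift, Prod.snd_add, ih]; ring

lemma exists_prefix_of_mem_climbStates {p q : Pt d} {l : List (Move d)}
    (hq : q ∈ climbStates p l) : ∃ l₁ l₂, l = l₁ ++ l₂ ∧ run p l₁ = q := by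
  induction l generalizing p with
  | nil => simp [climbStates] at hq
  | cons mv t ih =>
    cases mv with
    | none =>
      rw [climbStates, List.mem_cons] at hq
      rcases hq with hq | hq
      · exact ⟨[], none :: t, rfl, hq.symm⟩
      · obtain ⟨l₁, l₂, hsplit, hrun⟩ := ih hq
        exact ⟨none :: l₁, l₂, by simp [hsplit], by simpa using hrun⟩
    | some m =>
      obtain ⟨l₁, l₂, hsplit, hrun⟩ := ih hq
      exact ⟨some m :: l₁, l₂, by simp [hsplit], by simpa using hrun⟩

lemma shorten {p : Pt d} {l : List (Move d)}
    (h : ¬ (climbStates p l).Nodup) :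
    ∃ l₁ l₂ l₃, l = l₁ ++ l₂ ++ l₃ ∧ l₂ ≠ [] ∧ run p l₁ = run p (l₁ ++ l₂) := by
  induction l generalizing p with
  | nil => simp [climbStates] at h
  | cons mv t ih =>
    cases mv with
    | none =>
      rw [climbStates, List.nodup_cons] at h
      by_cases hmem : p ∈ climbStates (apply1 p none) t
      · obtain ⟨t₁, t₂, hsplit, hrun⟩ := exists_prefix_of_mem_climbStates hmem
        refine ⟨[], none :: t₁, t₂, by simp [hsplit], by simp, ?_⟩
        simpa using hrun.symm
      · have : ¬ (climbStates (apply1 p none) t).Nodup := fun hn => h ⟨hmem, hn⟩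
        obtain ⟨l₁, l₂, l₃, hsplit, hne, hrun⟩ := ih this
        exact ⟨none :: l₁, l₂, l₃, by simp [hsplit], hne, by simpa using hrun⟩
    | some m =>
      rw [climbStates] at h
      obtain ⟨l₁, l₂, l₃, hsplit, hne, hrun⟩ := ih h
      exact ⟨some m :: l₁, l₂, l₃, by simp [hsplit], hne, by simpa using hrun⟩

lemma exists_nodup_climbs (bad : Pt d → Prop) :
    ∀ n (l : List (Move d)) (p : Pt d), l.length ≤ n → Valid bad p l →
    ∃ l', Valid bad p l' ∧ run p l' = run p l ∧ (climbStates p l').Nodup := by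
  intro n
  induction n with
  | zero =>
    intro l p hl _
    have : l = [] := List.length_eq_zero_iff.mp (Nat.le_zero.mp hl)
    subst this
    exact ⟨[], trivial, rfl, by simp [climbStates]⟩
  | succ n ih =>
    intro l p hl hv
    by_cases hnd : (climbStates p l).Nodup
    · exact ⟨l, hv, rfl, hnd⟩
    · obtain ⟨l₁, l₂, l₃, hsplit, hne, hrun⟩ := shorten hnd
      subst hsplit
      have hv0 := (valid_append bad p (l₁ ++ l₂) l₃).mp hv
      have hv1 := (valid_append bad p l₁ l₂).mp hv0.1
      have hv' : Valid bad p (l₁ ++ l₃) := by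
        rw [valid_append]
        refine ⟨hv1.1, ?_⟩
        rw [hrun]
        exact hv0.2
      have hrun' : run p (l₁ ++ l₃) = run p (l₁ ++ l₂ ++ l₃) := by
        rw [run_append, run_append, hrun, run_append]
      have hlen : (l₁ ++ l₃).length ≤ n := by
        have h1 : (l₁ ++ l₂ ++ l₃).length ≤ n + 1 := hl
        have h2 : 1 ≤ l₂.length := List.length_pos_iff.mpr hne
        simp [List.length_append] at h1 ⊢
        omega
      obtain ⟨l', h1, h2, h3⟩ := ih (l₁ ++ l₃) p hlen hv'
      exact ⟨l', h1, h2.trans hrun', h3⟩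



lemma norm1_nonneg {n : ℕ} (x : Fin n → ℤ) : 0 ≤ norm1 x :=
  Finset.sum_nonneg fun i _ => abs_nonneg _

lemma norm1_eq_zero {n : ℕ} {x : Fin n → ℤ} (h : norm1 x = 0) : x = 0 := by
  have := (Finset.sum_eq_zero_iff_of_nonneg (fun i _ => abs_nonneg (x i))).mp h
  funext i
  have := this i (Finset.mem_univ i)
  simpa [abs_eq_zero] using this

lemma norm1_neg {n : ℕ} (x : Fin n → ℤ) : norm1 (-x) = norm1 x := by
  unfold norm1; simp

lemma step_toward (x x' : Fin d → ℤ) (i : Fin d) (h : x i ≠ x' i) :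
    ∃ b, norm1 (x - (x' + unitv i b)) + 1 = norm1 (x - x') := by
  refine ⟨decide (x' i < x i), ?_⟩
  set b := decide (x' i < x i) with hb
  set s : ℤ := if b then 1 else -1 with hs
  have hvi : |x i - x' i - s| + 1 = |x i - x' i| := by
    rcases lt_or_gt_of_ne h with hlt | hgt
    · have hbf : b = false := by simp [hb, decide_eq_false_iff_not, not_lt.mpr (le_of_lt hlt)]
      have hsv : s = -1 := by rw [hs, hbf]; rfl
      rw [hsv, abs_of_nonpos (by omega), abs_of_nonpos (by omega)]
      ring
    · have hbt : b = true := by simp [hb, hgt]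
      have hsv : s = 1 := by rw [hs, hbt]; rfl
      rw [hsv, abs_of_nonneg (by omega), abs_of_nonneg (by omega)]
      ring
  unfold norm1
  rw [Finset.sum_eq_sum_sdiff_singleton_add (Finset.mem_univ i),
      Finset.sum_eq_sum_sdiff_singleton_add (Finset.mem_univ i)
        (fun k => |(x - x') k|)]
  have hoff : ∀ k ∈ Finset.univ \ {i}, |(x - (x' + unitv i b)) k| = |(x - x') k| := by
    intro k hk
    have hki : k ≠ i := by simpa using (Finset.mem_sdiff.mp hk).2
    simp [unitv, hki, Pi.sub_apply, Pi.add_apply]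
  rw [Finset.sum_congr rfl hoff]
  have hxi : (x - (x' + unitv i b)) i = x i - x' i - s := by
    have : unitv i b i = s := by rw [hs]; exact if_pos rfl
    simp only [Pi.sub_apply, Pi.add_apply, this]
    ring
  have hxi' : (x - x') i = x i - x' i := by simp
  rw [hxi, hxi', add_assoc, hvi]

def site (K : ℕ) (z : Fin d → ℤ) (m : ℤ) (j : ℕ) : Fin D → ℤ :=
  fun i => if h : (i : ℕ) < d then (K : ℤ) * z ⟨i, h⟩ else if (i : ℕ) = d then (K : ℤ) * m + j else 0

lemma site_apply_lt (K : ℕ) (z : Fin d → ℤ) (m : ℤ) (j : ℕ) (i : Fin D) (h : (i : ℕ) < d) :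
    site K z m j i = (K : ℤ) * z ⟨i, h⟩ := dif_pos h

lemma site_apply_eq (K : ℕ) (z : Fin d → ℤ) (m : ℤ) (j : ℕ) (i : Fin D) (h : (i : ℕ) = d) :
    site K z m j i = (K : ℤ) * m + j := by
  rw [site, dif_neg (by omega), if_pos h]

lemma site_apply_gt (K : ℕ) (z : Fin d → ℤ) (m : ℤ) (j : ℕ) (i : Fin D) (h : d < (i : ℕ)) :
    site K z m j i = 0 := by
  rw [site, dif_neg (by omega), if_neg (by omega)]

lemma site_param_eq (hdD : d < D) {K : ℕ} (hK : 0 < K) {z z' : Fin d → ℤ} {m m' : ℤ}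
    {j j' : ℕ} (hj : j < K) (hj' : j' < K)
    (h : site (D := D) K z m j = site (D := D) K z' m' j') : z = z' ∧ m = m' ∧ j = j' := by
  have hKz : (0 : ℤ) < (K : ℤ) := by exact_mod_cast hK
  have hzz : z = z' := by
    funext k
    have hk : (k : ℕ) < D := lt_of_lt_of_le k.2 (le_of_lt hdD)
    have hc := congrFun h ⟨(k : ℕ), hk⟩
    rw [site_apply_lt _ _ _ _ _ (by simpa using k.2), site_apply_lt _ _ _ _ _ (by simpa using k.2)] at hc
    have : z ⟨(k : ℕ), k.2⟩ = z' ⟨(k : ℕ), k.2⟩ := mul_left_cancel₀ hKz.ne' hc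
    simpa using this
  have hcoord := congrFun h ⟨d, hdD⟩
  rw [site_apply_eq K z m j ⟨d, hdD⟩ rfl, site_apply_eq K z' m' j' ⟨d, hdD⟩ rfl] at hcoord
  have hmm : m = m' := by
    rcases lt_trichotomy m m' with hlt | heq | hgt
    · exfalso
      have h1 : m + 1 ≤ m' := hlt
      have : (K : ℤ) * m + K ≤ (K : ℤ) * m' := by nlinarith
      omega
    · exact heq
    · exfalso
      have h1 : m' + 1 ≤ m := hgt
      have : (K : ℤ) * m' + K ≤ (K : ℤ) * m := by nlinarith
      omega
  refine ⟨hzz, hmm, ?_⟩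
  rw [hmm] at hcoord
  omega

lemma norm1_site_sub (hdD : d < D) (K : ℕ) (z z' : Fin d → ℤ) (m m' : ℤ) (j j' : ℕ) :
    norm1 (site (D := D) K z m j - site (D := D) K z' m' j') =
      (K : ℤ) * norm1 (z - z') + |(K : ℤ) * (m - m') + ((j : ℤ) - (j' : ℤ))| := by
  classical
  let F : ℕ → ℤ := fun n =>
    if h : n < d then (K : ℤ) * |z ⟨n, h⟩ - z' ⟨n, h⟩|
    else if n = d then |(K : ℤ) * (m - m') + ((j : ℤ) - (j' : ℤ))| else 0
  have hF1 : ∀ (n : ℕ) (h : n < d), F n = (K : ℤ) * |z ⟨n, h⟩ - z' ⟨n, h⟩| :=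
    fun n h => dif_pos h
  have hF2 : F d = |(K : ℤ) * (m - m') + ((j : ℤ) - (j' : ℤ))| := by
    show dite _ _ _ = _
    rw [dif_neg (lt_irrefl d), if_pos rfl]
  have hF3 : ∀ (n : ℕ), ¬ n < d → n ≠ d → F n = 0 := by
    intro n h1 h2
    show dite _ _ _ = _
    rw [dif_neg h1, if_neg h2]
  have hpt : ∀ i : Fin D,
      |(site (D := D) K z m j - site (D := D) K z' m' j') i| = F (i : ℕ) := by
    intro i
    rcases lt_trichotomy ((i : ℕ)) d with h | h | h
    · rw [Pi.sub_apply, site_apply_lt _ _ _ _ _ h, site_apply_lt _ _ _ _ _ h, hF1 _ h]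
      rw [← mul_sub, abs_mul, abs_of_nonneg (by positivity : (0:ℤ) ≤ (K:ℤ))]
    · rw [Pi.sub_apply, site_apply_eq _ _ _ _ _ h, site_apply_eq _ _ _ _ _ h, h, hF2]
      ring_nf
    · rw [Pi.sub_apply, site_apply_gt _ _ _ _ _ h, site_apply_gt _ _ _ _ _ h,
        hF3 _ (by omega) (by omega)]
      simp
  have h1 : norm1 (site (D := D) K z m j - site (D := D) K z' m' j')
      = ∑ n ∈ Finset.range D, F n := by
    unfold norm1
    rw [Finset.sum_congr rfl (fun i _ => hpt i)]
    exact Fin.sum_univ_eq_sum_range (fun n => F n) D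
  rw [h1]
  have hsplit : ∑ n ∈ Finset.range D, F n =
      (∑ n ∈ Finset.range d, F n) + ∑ n ∈ Finset.Ico d D, F n := by
    have := Finset.sum_Ico_consecutive F (Nat.zero_le d) (le_of_lt hdD)
    rw [Finset.range_eq_Ico, ← this, Finset.range_eq_Ico]
  rw [hsplit]
  have h2 : ∑ n ∈ Finset.range d, F n = (K : ℤ) * norm1 (z - z') := by
    unfold norm1
    rw [Finset.mul_sum]
    rw [← Fin.sum_univ_eq_sum_range (fun n => F n) d]
    apply Finset.sum_congr rfl
    intro k _
    rw [hF1 _ k.2]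
    simp
  have h3 : ∑ n ∈ Finset.Ico d D, F n = |(K : ℤ) * (m - m') + ((j : ℤ) - (j' : ℤ))| := by
    rw [Finset.sum_eq_single_of_mem d (Finset.mem_Ico.mpr ⟨le_refl d, hdD⟩)]
    · exact hF2
    · intro n hn hne
      have hh := Finset.mem_Ico.mp hn
      exact hF3 n (by omega) hne
  rw [h2, h3]

end QI

section Prob

open MeasureTheory
open scoped ENNReal


namespace QI

variable {d D : ℕ}

lemma tsum_pow_length_le {M : Type*} [Fintype M] {η : ℝ≥0∞}
    (h : (Fintype.card M : ℝ≥0∞) * η ≤ 2⁻¹) : ∑' (l : List M), η ^ l.length ≤ 2 := by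
  classical
  have h2 : ∀ n : ℕ, ∑' (_ : {l : List M // l.length = n}), η ^ n
      ≤ (2⁻¹ : ℝ≥0∞) ^ n := by
    intro n
    haveI : Fintype {l : List M // l.length = n} :=
      inferInstanceAs (Fintype (List.Vector M n))
    rw [tsum_fintype]
    rw [Finset.sum_const, Finset.card_univ]
    have hc : Fintype.card {l : List M // l.length = n} = Fintype.card M ^ n :=
      (Fintype.card_congr
        (show {l : List M // l.length = n} ≃ List.Vector M n from Equiv.refl _)).trans
        (card_vector n)
    rw [hc, nsmul_eq_mul]
    push_cast
    rw [← mul_pow]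
    exact pow_le_pow_left₀ zero_le h n
  have h1 : ∑' (l : List M), η ^ l.length
      = ∑' (x : Σ n : ℕ, {l : List M // l.length = n}), η ^ x.1 := by
    rw [← Equiv.tsum_eq (Equiv.sigmaFiberEquiv (fun l : List M => l.length))
      (fun l => η ^ l.length)]
    apply tsum_congr
    intro ⟨n, l⟩
    simp only [Equiv.sigmaFiberEquiv, Equiv.coe_fn_mk]
    rw [l.2]
  calc ∑' (l : List M), η ^ l.length
      = ∑' (x : Σ n : ℕ, {l : List M // l.length = n}), η ^ x.1 := h1
    _ = ∑' (n : ℕ), ∑' (_ : {l : List M // l.length = n}), η ^ n :=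
        ENNReal.tsum_sigma (fun n (_ : {l : List M // l.length = n}) => η ^ n)
    _ ≤ ∑' (n : ℕ), (2⁻¹ : ℝ≥0∞) ^ n := ENNReal.tsum_le_tsum h2
    _ = (1 - 2⁻¹)⁻¹ := ENNReal.tsum_geometric 2⁻¹
    _ = 2 := by rw [ENNReal.one_sub_inv_two, inv_inv]

def boxF (K : ℕ) (q : Pt d) : Finset (Fin D → ℤ) :=
  (Finset.range K).image (fun j => site (D := D) K q.1 q.2 j)

def badAt (K : ℕ) (ω : (Fin D → ℤ) → Bool) (q : Pt d) : Prop :=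
  ∀ j, j < K → ω (site (D := D) K q.1 q.2 j) = false

def ReachEnd (K : ℕ) (ω : (Fin D → ℤ) → Bool) (x : Fin d → ℤ) (h : ℤ) : Prop :=
  ∃ y l, Valid (badAt (d := d) K ω) (y, 1) l ∧ run (y, 1) l = (x, h)

lemma measure_ReachEnd_le (hdD : d < D)
    {p : ℝ}
    {μ : Measure ((Fin D → ℤ) → Bool)} (hμ : IsBernoulli p μ)
    {K' : ℕ} (hK' : 0 < K')
    (hsmall : (Fintype.card (Move d) : ℝ≥0∞) * (ENNReal.ofReal (1 - p)) ^ K' ≤ 2⁻¹)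
    (x : Fin d → ℤ) (a : ℕ) :
    μ {ω | ReachEnd (2 * K') ω x (1 + (a : ℤ))}
      ≤ 2 * ((ENNReal.ofReal (1 - p)) ^ K') ^ a := by
  classical
  set q0 : ℝ≥0∞ := ENNReal.ofReal (1 - p) with hq0
  set η : ℝ≥0∞ := q0 ^ K' with hη
  set K := 2 * K' with hK
  have hKpos : 0 < K := by omega
  set tgt : Pt d := (x, 1 + (a : ℤ)) with htgt
  set startp : List (Move d) → Pt d := fun l => tgt - (l.map shift).sum with hstartp
  set Good : List (Move d) → Prop := fun l =>
    ((l.map shift).sum).2 = (a : ℤ) ∧ (climbStates (startp l) l).Nodup with hGood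
  set A : List (Move d) → Finset (Fin D → ℤ) := fun l =>
    (climbStates (startp l) l).toFinset.biUnion (fun q => boxF (D := D) K q) with hA
  set E : List (Move d) → Set ((Fin D → ℤ) → Bool) := fun l =>
    {ω | Good l ∧ ∀ s ∈ A l, ω s = false} with hE
  have hsub : {ω | ReachEnd K ω x (1 + (a : ℤ))} ⊆ ⋃ l, E l := by
    intro ω hω
    obtain ⟨y, l₀, hv₀, hrun₀⟩ := hω
    obtain ⟨l, hv, hrun, hnd⟩ :=
      exists_nodup_climbs (badAt K ω) l₀.length l₀ (y, 1) le_rfl hv₀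
    rw [hrun₀] at hrun
    have hsum : (l.map shift).sum = tgt - (y, 1) := by
      have h1 := run_eq_add (d := d) (y, 1) l
      rw [hrun] at h1
      exact eq_sub_of_add_eq' h1.symm
    have hstart : startp l = (y, 1) := by
      rw [hstartp]
      simp only [hsum]
      exact sub_sub_cancel _ _
    refine Set.mem_iUnion.mpr ⟨l, ⟨⟨?_, ?_⟩, ?_⟩⟩
    · rw [hsum, htgt]
      simp [Prod.snd_sub]
    · rw [hstart]; exact hnd
    · intro s hs
      rw [hA] at hs
      simp only [Finset.mem_biUnion] at hs
      obtain ⟨qq, hq_mem, hs_box⟩ := hs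
      have hqq : qq ∈ climbStates (y, 1) l := by
        rw [← hstart]
        exact List.mem_toFinset.mp hq_mem
      have hbad : badAt K ω qq := bad_of_mem_climbStates hv hqq
      rw [boxF] at hs_box
      obtain ⟨j, hj, rfl⟩ := Finset.mem_image.mp hs_box
      exact hbad j (Finset.mem_range.mp hj)
  have hmeas : ∀ l, μ (E l) ≤ η ^ a * η ^ l.length := by
    intro l
    by_cases hG : Good l
    · have hEeq : μ (E l) = μ {ω | ∀ s ∈ A l, ω s = (fun _ : Fin D → ℤ => false) s} := by
        congr 1
        ext ω
        exact ⟨fun h => h.2, fun h => ⟨hG, h⟩⟩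
      rw [hEeq, hμ.2 (A l) (fun _ => false)]
      have hprod : ∏ s ∈ A l, ENNReal.ofReal (if (fun _ : Fin D → ℤ => false) s then p else 1 - p)
          = q0 ^ (A l).card := by
        simp [Finset.prod_const, hq0]
      rw [hprod]
      have hcardbox : ∀ qq : Pt d, (boxF (D := D) K qq).card = K := by
        intro qq
        rw [boxF, Finset.card_image_of_injOn, Finset.card_range]
        intro j hj j' hj' hee
        exact (site_param_eq hdD hKpos (Finset.mem_range.mp hj)
          (Finset.mem_range.mp hj') hee).2.2
      have hdisj : ∀ qq ∈ (climbStates (startp l) l).toFinset,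
          ∀ qq' ∈ (climbStates (startp l) l).toFinset, qq ≠ qq' →
          Disjoint (boxF (D := D) K qq) (boxF (D := D) K qq') := by
        intro qq _ qq' _ hne
        rw [Finset.disjoint_left]
        intro s hs hs'
        rw [boxF] at hs hs'
        obtain ⟨j, hj, hsj⟩ := Finset.mem_image.mp hs
        obtain ⟨j', hj', hsj'⟩ := Finset.mem_image.mp hs'
        have := site_param_eq hdD hKpos (Finset.mem_range.mp hj)
          (Finset.mem_range.mp hj') (hsj.trans hsj'.symm)
        exact hne (Prod.ext this.1 this.2.1)
      have hcard : (A l).card = K * numClimbs l := by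
        rw [hA]
        simp only []
        rw [Finset.card_biUnion hdisj]
        rw [Finset.sum_congr rfl (fun qq _ => hcardbox qq)]
        rw [Finset.sum_const, List.toFinset_card_of_nodup hG.2, length_climbStates,
          smul_eq_mul, mul_comm]
      have h2nc : 2 * numClimbs l = l.length + a := by
        have h1 := snd_shiftSum l
        rw [hG.1] at h1
        omega
      rw [hcard]
      have hKnc : K * numClimbs l = K' * (l.length + a) := by
        rw [hK, ← h2nc]
        ring
      rw [hKnc, pow_mul, ← hη, pow_add, mul_comm]
    · have hempty : E l = ∅ := by
        ext ω
        simp [hE, hG]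
      rw [hempty]
      simp
  calc μ {ω | ReachEnd K ω x (1 + (a : ℤ))}
      ≤ μ (⋃ l, E l) := measure_mono hsub
    _ ≤ ∑' l, μ (E l) := measure_iUnion_le E
    _ ≤ ∑' l : List (Move d), η ^ a * η ^ l.length := ENNReal.tsum_le_tsum hmeas
    _ = η ^ a * ∑' l : List (Move d), η ^ l.length := ENNReal.tsum_mul_left
    _ ≤ η ^ a * 2 := mul_le_mul_right (tsum_pow_length_le hsmall) _
    _ = 2 * η ^ a := mul_comm _ _

end QI
end Prob

open MeasureTheory
open scoped ENNReal

namespace QI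

variable {d D : ℕ}

lemma card_Move (d : ℕ) : Fintype.card (Move d) = 2 * d + 1 := by
  simp [Move]
  try ring

lemma unitv_cancel (i : Fin d) (b : Bool) : unitv i b + unitv i (!b) = 0 := by
  funext k
  by_cases hk : k = i <;> cases b <;> simp [unitv, hk]

lemma reachEnd_one (K : ℕ) (ω : (Fin D → ℤ) → Bool) (x : Fin d → ℤ) :
    ReachEnd K ω x 1 := ⟨x, [], trivial, rfl⟩

lemma reachEnd_side {K : ℕ} {ω : (Fin D → ℤ) → Bool} {x : Fin d → ℤ} {h : ℤ}
    (hr : ReachEnd K ω x h) (i : Fin d) (b : Bool) :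
    ReachEnd K ω (x + unitv i b) (h - 1) := by
  obtain ⟨y, l, hv, hrun⟩ := hr
  refine ⟨y, l ++ [some (i, b)], ?_, ?_⟩
  · rw [valid_append]
    refine ⟨hv, ?_⟩
    refine ⟨fun hx => by simp at hx, trivial⟩
  · rw [run_append, hrun]
    show (x, h) + (unitv i b, -1) = (x + unitv i b, h - 1)
    have hh : h + -1 = h - 1 := by ring
    rw [Prod.mk_add_mk, hh]

lemma reachEnd_sub_two {K : ℕ} {ω : (Fin D → ℤ) → Bool} {x : Fin d → ℤ} {h : ℤ}
    (hd : 0 < d) (hr : ReachEnd K ω x h) : ReachEnd K ω x (h - 2) := by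
  have h1 := reachEnd_side hr ⟨0, hd⟩ true
  have h2 := reachEnd_side h1 ⟨0, hd⟩ false
  have hx : x + unitv ⟨0, hd⟩ true + unitv (d := d) ⟨0, hd⟩ false = x := by
    rw [add_assoc]
    rw [show unitv (d := d) ⟨0, hd⟩ false = unitv ⟨0, hd⟩ (!true) from rfl]
    rw [unitv_cancel, add_zero]
  rw [hx] at h2
  have : h - 1 - 1 = h - 2 := by ring
  rwa [this] at h2

lemma reachEnd_sub_two_mul {K : ℕ} {ω : (Fin D → ℤ) → Bool} {x : Fin d → ℤ} {h : ℤ}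
    (hd : 0 < d) (hr : ReachEnd K ω x h) (t : ℕ) : ReachEnd K ω x (h - 2 * t) := by
  induction t with
  | zero => simpa using hr
  | succ t ih =>
    have := reachEnd_sub_two hd ih
    have he : h - 2 * (t : ℤ) - 2 = h - 2 * ((t : ℕ) + 1 : ℕ) := by push_cast; ring
    rwa [he] at this

def Unb (K : ℕ) (x : Fin d → ℤ) : Set ((Fin D → ℤ) → Bool) :=
  {ω | ∀ a : ℕ, ∃ h : ℤ, 1 + (a : ℤ) ≤ h ∧ ReachEnd K ω x h}

lemma Unb_subset (hd : 0 < d) (K : ℕ) (x : Fin d → ℤ) (a : ℕ) :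
    Unb (D := D) K x ⊆
      {ω | ReachEnd K ω x (1 + (a : ℤ))} ∪ {ω | ReachEnd K ω x (1 + ((a + 1 : ℕ) : ℤ))} := by
  intro ω hω
  obtain ⟨h, hge, hr⟩ := hω a
  rcases Int.even_or_odd (h - (1 + (a : ℤ))) with ⟨t0, ht⟩ | ⟨t0, ht⟩
  · left
    have ht0 : 0 ≤ t0 := by omega
    have := reachEnd_sub_two_mul hd hr t0.toNat
    have he : h - 2 * (t0.toNat : ℤ) = 1 + (a : ℤ) := by
      rw [Int.toNat_of_nonneg ht0]; omega
    rwa [he] at this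
  · right
    have ht0 : 0 ≤ t0 := by omega
    have := reachEnd_sub_two_mul hd hr t0.toNat
    have he : h - 2 * (t0.toNat : ℤ) = 1 + ((a + 1 : ℕ) : ℤ) := by
      rw [Int.toNat_of_nonneg ht0]; push_cast; omega
    rwa [he] at this

lemma measure_Unb_zero (hd : 0 < d) (hdD : d < D)
    {p : ℝ}
    {μ : Measure ((Fin D → ℤ) → Bool)} (hμ : IsBernoulli p μ)
    {K' : ℕ} (hK' : 0 < K')
    (hsmall : (Fintype.card (Move d) : ℝ≥0∞) * (ENNReal.ofReal (1 - p)) ^ K' ≤ 2⁻¹)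
    (x : Fin d → ℤ) :
    μ (Unb (2 * K') x) = 0 := by
  set η : ℝ≥0∞ := (ENNReal.ofReal (1 - p)) ^ K' with hη
  have hcard1 : (1 : ℝ≥0∞) ≤ (Fintype.card (Move d) : ℝ≥0∞) := by
    have : 0 < Fintype.card (Move d) := Fintype.card_pos
    exact_mod_cast this
  have hη2 : η ≤ 2⁻¹ := le_trans (by
    calc η = 1 * η := (one_mul η).symm
    _ ≤ (Fintype.card (Move d) : ℝ≥0∞) * η := mul_le_mul_left hcard1 η) hsmall
  have hη1 : η < 1 := lt_of_le_of_lt hη2 (by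
    rw [ENNReal.inv_lt_one]
    exact ENNReal.one_lt_two)
  have hbound : ∀ a : ℕ, μ (Unb (2 * K') x) ≤ 4 * η ^ a := by
    intro a
    have h1 := measure_ReachEnd_le hdD hμ hK' hsmall x a
    have h2 := measure_ReachEnd_le hdD hμ hK' hsmall x (a + 1)
    calc μ (Unb (2 * K') x)
        ≤ μ ({ω | ReachEnd (2 * K') ω x (1 + (a : ℤ))}
            ∪ {ω | ReachEnd (2 * K') ω x (1 + ((a + 1 : ℕ) : ℤ))}) :=
          measure_mono (Unb_subset hd _ x a)
      _ ≤ μ {ω | ReachEnd (2 * K') ω x (1 + (a : ℤ))}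
            + μ {ω | ReachEnd (2 * K') ω x (1 + ((a + 1 : ℕ) : ℤ))} := measure_union_le _ _
      _ ≤ 2 * η ^ a + 2 * η ^ (a + 1) := add_le_add h1 h2
      _ ≤ 2 * η ^ a + 2 * η ^ a := by
          refine add_le_add_right (mul_le_mul_right ?_ 2) _
          rw [pow_succ]
          calc η ^ a * η ≤ η ^ a * 1 := mul_le_mul_right (le_of_lt hη1) _
            _ = η ^ a := mul_one _
      _ = 4 * η ^ a := by ring
  have htend : Filter.Tendsto (fun a : ℕ => (4 : ℝ≥0∞) * η ^ a) Filter.atTop (nhds 0) := by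
    have h0 := ENNReal.tendsto_pow_atTop_nhds_zero_of_lt_one hη1
    have := ENNReal.Tendsto.const_mul (a := (4 : ℝ≥0∞)) h0 (Or.inr (by norm_num))
    simpa using this
  have hle : μ (Unb (2 * K') x) ≤ 0 :=
    ge_of_tendsto htend (Filter.Eventually.of_forall hbound)
  exact le_antisymm hle zero_le

end QI

namespace QI

variable {d D : ℕ}

lemma norm1_zero {n : ℕ} : norm1 (0 : Fin n → ℤ) = 0 := by simp [norm1]

lemma construction (hd : 0 < d) (hdD : d < D) {K : ℕ} (hK : 0 < K)
    (ω : (Fin D → ℤ) → Bool)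
    (hω : ∀ x : Fin d → ℤ, ∃ a : ℕ, ∀ h : ℤ, ReachEnd K ω x h → h < 1 + (a : ℤ)) :
    ExistsQuasiIsometry d D ω := by
  classical
  have hgr : ∀ x : Fin d → ℤ, ∃ hh : ℤ, ReachEnd K ω x hh ∧
      ∀ h', ReachEnd K ω x h' → h' ≤ hh := by
    intro x
    obtain ⟨a, ha⟩ := hω x
    exact Int.exists_greatest_of_bdd
      ⟨1 + (a : ℤ), fun z hz => le_of_lt (ha z hz)⟩ ⟨1, reachEnd_one K ω x⟩
  choose φ hφreach hφmax using hgr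
  -- climbing is impossible at the top, so the top box contains an open site
  have hopen : ∀ x, ∃ j : ℕ, j < K ∧ ω (site (D := D) K x (φ x) j) = true := by
    intro x
    by_contra hcon
    push_neg at hcon
    have hbad : badAt K ω (x, φ x) := by
      intro j hj
      have := hcon j hj
      exact Bool.not_eq_true _ ▸ (by simpa using this)
    obtain ⟨y, l, hv, hrun⟩ := hφreach x
    have hreach : ReachEnd K ω x (φ x + 1) := by
      refine ⟨y, l ++ [none], ?_, ?_⟩
      · rw [valid_append]
        refine ⟨hv, fun _ => ?_, trivial⟩
        rw [hrun]
        exact hbad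
      · rw [run_append, hrun]
        show (x, φ x) + (0, 1) = (x, φ x + 1)
        rw [Prod.mk_add_mk, add_zero]
    have := hφmax x _ hreach
    omega
  choose jf hjlt hjopen using hopen
  -- Lipschitz property of φ
  have key : ∀ n : ℕ, ∀ x x' : Fin d → ℤ, norm1 (x - x') = (n : ℤ) → φ x ≤ φ x' + n := by
    intro n
    induction n with
    | zero =>
      intro x x' hn
      have hxx : x = x' := by
        have h0 := norm1_eq_zero (by exact_mod_cast hn)
        have := sub_eq_zero.mp h0
        exact this
      rw [hxx]
      simp
    | succ n ih =>
      intro x x' hn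
      have hne : ∃ i, x i ≠ x' i := by
        by_contra hc
        push_neg at hc
        have : x = x' := funext hc
        rw [this, sub_self, norm1_zero] at hn
        omega
      obtain ⟨i, hi⟩ := hne
      obtain ⟨b, hb⟩ := step_toward x x' i hi
      set x'' := x' + unitv i b with hx''
      have hnorm : norm1 (x - x'') = (n : ℤ) := by
        push_cast at hn ⊢
        omega
      have h1 : φ x ≤ φ x'' + n := ih x x'' hnorm
      have hstep : ReachEnd K ω x' (φ x'' - 1) := by
        have := reachEnd_side (hφreach x'') i (!b)
        have hxx : x'' + unitv i (!b) = x' := by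
          rw [hx'', add_assoc, unitv_cancel, add_zero]
        rwa [hxx] at this
      have h2 : φ x'' - 1 ≤ φ x' := hφmax x' _ hstep
      omega
  have hlip : ∀ x x' : Fin d → ℤ, φ x - φ x' ≤ norm1 (x - x') := by
    intro x x'
    have hnn := norm1_nonneg (x - x')
    have := key (norm1 (x - x')).toNat x x' (by rw [Int.toNat_of_nonneg hnn])
    omega
  -- the quasi-isometry
  set f : (Fin d → ℤ) → (Fin D → ℤ) := fun x => site (D := D) K x (φ x) (jf x) with hf
  have hdist : ∀ x x' : Fin d → ℤ,
      norm1 (f x - f x') = (K : ℤ) * norm1 (x - x')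
        + |(K : ℤ) * (φ x - φ x') + ((jf x : ℤ) - (jf x' : ℤ))| := by
    intro x x'
    rw [hf]
    exact norm1_site_sub hdD K x x' (φ x) (φ x') (jf x) (jf x')
  refine ⟨K, 1, 2 * K, K + 1, 1, by exact_mod_cast hK, one_pos,
    by positivity, by positivity, one_pos, Set.range f, ?_, f, fun x => ⟨x, rfl⟩, ?_, ?_⟩
  · rintro y ⟨x, rfl⟩
    exact hjopen x
  · intro x x'
    have habs : |(K : ℤ) * (φ x - φ x') + ((jf x : ℤ) - (jf x' : ℤ))|
        ≤ (K : ℤ) * norm1 (x - x') + K := by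
      have h1 : |(K : ℤ) * (φ x - φ x')| ≤ (K : ℤ) * norm1 (x - x') := by
        rw [abs_mul, abs_of_nonneg (by positivity : (0:ℤ) ≤ (K:ℤ))]
        have hl1 := hlip x x'
        have hl2 := hlip x' x
        have : norm1 (x' - x) = norm1 (x - x') := by
          rw [show x' - x = -(x - x') from by ring, norm1_neg]
        rw [this] at hl2
        have habs2 : |φ x - φ x'| ≤ norm1 (x - x') := abs_le.mpr ⟨by omega, hl1⟩
        exact mul_le_mul_of_nonneg_left habs2 (by positivity)
      have h2 : |(jf x : ℤ) - (jf x' : ℤ)| ≤ (K : ℤ) := by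
        have := hjlt x
        have := hjlt x'
        rw [abs_le]
        omega
      calc |(K : ℤ) * (φ x - φ x') + ((jf x : ℤ) - (jf x' : ℤ))|
          ≤ |(K : ℤ) * (φ x - φ x')| + |(jf x : ℤ) - (jf x' : ℤ)| := abs_add_le _ _
        _ ≤ (K : ℤ) * norm1 (x - x') + K := add_le_add h1 h2
    have hnn : (0:ℤ) ≤ |(K : ℤ) * (φ x - φ x') + ((jf x : ℤ) - (jf x' : ℤ))| := abs_nonneg _
    have hdd := hdist x x'
    have hlow : (K : ℤ) * norm1 (x - x') - 1 ≤ norm1 (f x - f x') := by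
      rw [hdd]; linarith
    have hupp : norm1 (f x - f x') ≤ 2 * K * norm1 (x - x') + (K + 1) := by
      rw [hdd]; linarith
    constructor
    · show (K : ℝ) * dist1 x x' - 1 ≤ dist1 (f x) (f x')
      rw [dist1, dist1]
      exact_mod_cast hlow
    · show dist1 (f x) (f x') ≤ (2 * K : ℝ) * dist1 x x' + ((K : ℝ) + 1)
      rw [dist1, dist1]
      exact_mod_cast hupp
  · rintro y ⟨x, rfl⟩
    refine ⟨x, ?_⟩
    rw [dist1, sub_self, norm1_zero]
    norm_num

end QI

open MeasureTheory
open scoped ENNReal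

/-- For `1 ≤ d < D` and `p ∈ (0,1)`, `P_p`-a.s. there exists a quasi-isometry
between `(ℤ^d, ℓ¹)` and some subspace of the open sites of `ℤ^D`. -/
theorem quasi_isometry_exists (d D : ℕ) (hd : 1 ≤ d) (hdD : d < D)
    (p : ℝ) (hp0 : 0 < p) (hp1 : p < 1)
    (μ : Measure ((Fin D → ℤ) → Bool)) (hμ : IsBernoulli p μ) :
    ∀ᵐ ω ∂μ, ExistsQuasiIsometry d D ω := by
  classical
  have h1p0 : (0:ℝ) ≤ 1 - p := by linarith
  have h1p1 : 1 - p < 1 := by linarith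
  obtain ⟨K₀, hK₀⟩ := exists_pow_lt_of_lt_one
    (show (0:ℝ) < (2 * (2 * (d:ℝ) + 1))⁻¹ by positivity) h1p1
  set K' := K₀ + 1 with hK'def
  have hK' : 0 < K' := Nat.succ_pos _
  have hpow : (1 - p) ^ K' ≤ (1 - p) ^ K₀ := by
    rw [hK'def, pow_succ]
    calc (1-p)^K₀ * (1-p) ≤ (1-p)^K₀ * 1 :=
          mul_le_mul_of_nonneg_left (by linarith) (pow_nonneg h1p0 _)
      _ = (1-p)^K₀ := mul_one _
  have hreal : ((2 * d + 1 : ℕ) : ℝ) * (1 - p) ^ K' ≤ 1 / 2 := by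
    have hlt : (1 - p) ^ K' < (2 * (2 * (d:ℝ) + 1))⁻¹ := lt_of_le_of_lt hpow hK₀
    have hc : (0:ℝ) < (2 * (d:ℝ) + 1) := by positivity
    have hmul := mul_lt_mul_of_pos_left hlt hc
    have heq : (2 * (d:ℝ) + 1) * (2 * (2 * (d:ℝ) + 1))⁻¹ = 1/2 := by
      field_simp
    push_cast
    rw [heq] at hmul
    linarith
  have hsmall : (Fintype.card (QI.Move d) : ℝ≥0∞) * (ENNReal.ofReal (1 - p)) ^ K' ≤ 2⁻¹ := by
    rw [QI.card_Move]
    rw [← ENNReal.ofReal_pow h1p0]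
    rw [show ((2 * d + 1 : ℕ) : ℝ≥0∞) = ENNReal.ofReal ((2 * d + 1 : ℕ) : ℝ) from
      (ENNReal.ofReal_natCast _).symm]
    rw [← ENNReal.ofReal_mul (by positivity)]
    calc ENNReal.ofReal (((2 * d + 1 : ℕ) : ℝ) * (1 - p) ^ K')
        ≤ ENNReal.ofReal (1/2) := ENNReal.ofReal_le_ofReal hreal
      _ = 2⁻¹ := by
          rw [show (1/2 : ℝ) = (2 : ℝ)⁻¹ by norm_num,
            ENNReal.ofReal_inv_of_pos two_pos, ENNReal.ofReal_ofNat]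
  rw [ae_iff]
  apply measure_mono_null (t := ⋃ x : Fin d → ℤ, QI.Unb (D := D) (2 * K') x)
  · intro ω hω
    by_contra hnot
    apply hω
    simp only [Set.mem_iUnion, not_exists] at hnot
    apply QI.construction (by omega : 0 < d) hdD (by omega : 0 < 2 * K') ω
    intro x
    have hx := hnot x
    rw [QI.Unb, Set.mem_setOf_eq] at hx
    push_neg at hx
    obtain ⟨a, ha⟩ := hx
    refine ⟨a, fun h hr => ?_⟩
    by_contra hge
    push_neg at hge
    exact ha h hge hr
  · exact measure_iUnion_null fun x =>
      QI.measure_Unb_zero (by omega) hdD hμ hK' hsmall x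
end

section
/- Let x₁, …, x_k ∈ Z^D be distinct sites, and let A be the event that there exists a singly-infinite self-avoiding path 0 = y₀, y₁, y₂, … in Z^D (a sequence of distinct sites with consecutive sites at ℓ¹-distance 1) such that the sites x_i + y_j, for i = 1, …, k and j = 0, 1, 2, …, are pairwise distinct and all open. If p < (2D)^{−1/k}, then P_p(A) = 0. -/
open MeasureTheory ENNReal

/-- The finite set containing all unit vectors of `ℤ^D`. -/
def unitVecs (D : ℕ) : Finset (Fin D → ℤ) :=
  Finset.image (fun q : Fin D × Bool => fun j => if j = q.1 then (if q.2 then 1 else -1) else 0)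
    Finset.univ

lemma card_unitVecs (D : ℕ) : (unitVecs D).card ≤ 2 * D := by
  refine le_trans Finset.card_image_le ?_
  simp [Finset.card_univ, mul_comm]

lemma mem_unitVecs {D : ℕ} {v : Fin D → ℤ} (h : norm1 v = 1) : v ∈ unitVecs D := by
  have hex : ∃ i, v i ≠ 0 := by
    by_contra hc
    push_neg at hc
    simp [norm1, hc] at h
  obtain ⟨i, hi⟩ := hex
  have h1 : 1 ≤ |v i| := Int.one_le_abs (by omega)
  have hsum : |v i| + ∑ j ∈ Finset.univ.erase i, |v j| = 1 := by
    have h' : ∑ j, |v j| = 1 := h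
    rw [← Finset.add_sum_erase _ _ (Finset.mem_univ i)] at h'
    exact h'
  have hnn : 0 ≤ ∑ j ∈ Finset.univ.erase i, |v j| :=
    Finset.sum_nonneg fun _ _ => abs_nonneg _
  have habs : |v i| = 1 := le_antisymm (by linarith) h1
  have hS : ∑ j ∈ Finset.univ.erase i, |v j| = 0 := by linarith
  have hz : ∀ j, j ≠ i → v j = 0 := by
    intro j hj
    have := (Finset.sum_eq_zero_iff_of_nonneg (fun _ _ => abs_nonneg _)).mp hS j
      (Finset.mem_erase.mpr ⟨hj, Finset.mem_univ j⟩)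
    exact abs_eq_zero.mp this
  have hvi : v i = 1 ∨ v i = -1 := (abs_eq (by norm_num)).mp habs
  rcases hvi with hv | hv
  · refine Finset.mem_image.mpr ⟨(i, true), Finset.mem_univ _, ?_⟩
    funext j
    by_cases hji : j = i
    · simp [hji, hv]
    · simp [hji, hz j hji]
  · refine Finset.mem_image.mpr ⟨(i, false), Finset.mem_univ _, ?_⟩
    funext j
    by_cases hji : j = i
    · simp [hji, hv]
    · simp [hji, hz j hji]

/-- Partial sums of a finite list of steps. -/
def pathOf {D n : ℕ} (s : Fin n → (Fin D → ℤ)) (j : ℕ) : Fin D → ℤ :=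
  ∑ m ∈ Finset.range j, if h : m < n then s ⟨m, h⟩ else 0

lemma pathOf_eq {D n : ℕ} (y : ℕ → Fin D → ℤ) (h0 : y 0 = 0) {j : ℕ} (hj : j ≤ n) :
    pathOf (fun m : Fin n => y (m + 1) - y m) j = y j := by
  unfold pathOf
  calc ∑ m ∈ Finset.range j, (if h : m < n then (fun m : Fin n => y (m + 1) - y m) ⟨m, h⟩ else 0)
      = ∑ m ∈ Finset.range j, (y (m + 1) - y m) := by
        refine Finset.sum_congr rfl fun m hm => ?_
        rw [dif_pos (lt_of_lt_of_le (Finset.mem_range.mp hm) hj)]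
    _ = y j - y 0 := Finset.sum_range_sub y j
    _ = y j := by rw [h0, sub_zero]

/-- If `x₁, …, x_k ∈ ℤ^D` are distinct and `p < (2D)^{-1/k}`, then the event that
there is a singly-infinite self-avoiding path `0 = y₀, y₁, …` such that the sites
`x_i + y_j` are pairwise distinct and all open has `P_p`-probability zero. -/
theorem congruent_copies_along_path_null (D k : ℕ) (hD : 1 ≤ D) (hk : 1 ≤ k)
    (x : Fin k → Fin D → ℤ) (hx : Function.Injective x)
    (p : ℝ) (hp : p < (2 * (D : ℝ)) ^ (-(1 : ℝ) / (k : ℝ)))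
    (μ : Measure ((Fin D → ℤ) → Bool)) (hμ : IsBernoulli p μ) :
    μ {ω | ∃ y : ℕ → Fin D → ℤ,
        y 0 = 0 ∧
        (∀ j, norm1 (y (j + 1) - y j) = 1) ∧
        Function.Injective (fun q : Fin k × ℕ => x q.1 + y q.2) ∧
        ∀ i j, ω (x i + y j) = true} = 0 := by
  obtain ⟨hprob, hber⟩ := hμ
  set r : ℝ≥0∞ := ENNReal.ofReal p with hr_def
  set c : ℝ≥0∞ := ((2 * D : ℕ) : ℝ≥0∞) with hc_def
  have hc0 : c ≠ 0 := by
    simp [hc_def]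
    omega
  have hctop : c ≠ ⊤ := ENNReal.natCast_ne_top _
  -- key bound for each n
  have key : ∀ n : ℕ, μ {ω | ∃ y : ℕ → Fin D → ℤ,
        y 0 = 0 ∧
        (∀ j, norm1 (y (j + 1) - y j) = 1) ∧
        Function.Injective (fun q : Fin k × ℕ => x q.1 + y q.2) ∧
        ∀ i j, ω (x i + y j) = true} ≤ c ^ n * r ^ (k * (n + 1)) := by
    intro n
    set g : (Fin n → {v // v ∈ unitVecs D}) → (Fin k × Fin (n + 1)) → (Fin D → ℤ) :=
      fun s q => x q.1 + pathOf (fun m => (s m : Fin D → ℤ)) q.2 with hg_def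
    set E : (Fin n → {v // v ∈ unitVecs D}) → Set ((Fin D → ℤ) → Bool) :=
      fun s => {ω | Function.Injective (g s) ∧ ∀ q, ω (g s q) = true} with hE_def
    have hcover : {ω : (Fin D → ℤ) → Bool | ∃ y : ℕ → Fin D → ℤ,
        y 0 = 0 ∧
        (∀ j, norm1 (y (j + 1) - y j) = 1) ∧
        Function.Injective (fun q : Fin k × ℕ => x q.1 + y q.2) ∧
        ∀ i j, ω (x i + y j) = true} ⊆ ⋃ s, E s := by
      rintro ω ⟨y, h0, h1, hinj, hopen⟩
      refine Set.mem_iUnion.mpr ⟨fun m => ⟨y (m + 1) - y m, mem_unitVecs (h1 m)⟩, ?_, ?_⟩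
      · intro q q' hqq'
        have hq : x q.1 + y ((q.2 : ℕ)) = x q'.1 + y ((q'.2 : ℕ)) := by
          have e1 := pathOf_eq (n := n) y h0 (Nat.lt_succ_iff.mp q.2.isLt)
          have e2 := pathOf_eq (n := n) y h0 (Nat.lt_succ_iff.mp q'.2.isLt)
          simpa [hg_def, e1, e2] using hqq'
        have := hinj (a₁ := (q.1, (q.2 : ℕ))) (a₂ := (q'.1, (q'.2 : ℕ))) hq
        obtain ⟨h1', h2'⟩ := Prod.mk.injEq .. ▸ this
        exact Prod.ext h1' (Fin.val_injective h2')
      · intro q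
        have e1 := pathOf_eq (n := n) y h0 (Nat.lt_succ_iff.mp q.2.isLt)
        simp only [hg_def, e1]
        exact hopen q.1 q.2
    have hbound : ∀ s, μ (E s) ≤ r ^ (k * (n + 1)) := by
      intro s
      by_cases hinj : Function.Injective (g s)
      · have hsub : E s ⊆ {ω | ∀ t ∈ Finset.image (g s) Finset.univ, ω t = (fun _ => true) t} := by
          rintro ω ⟨_, hω⟩ t ht
          obtain ⟨q, _, hq⟩ := Finset.mem_image.mp ht
          rw [← hq]
          exact hω q
        refine le_trans (measure_mono hsub) ?_
        rw [hber]
        simp only [if_pos rfl]  -- maybe not needed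
        rw [Finset.prod_const]
        rw [Finset.card_image_of_injective _ hinj, Finset.card_univ]
        simp [Fintype.card_prod, Fintype.card_fin, hr_def]
      · have : E s = ∅ := by
          ext ω
          simp [hE_def, hinj]
        simp [this]
    calc μ _ ≤ μ (⋃ s, E s) := measure_mono hcover
      _ ≤ ∑' s, μ (E s) := measure_iUnion_le _
      _ = ∑ s, μ (E s) := tsum_fintype _
      _ ≤ ∑ _s : (Fin n → {v // v ∈ unitVecs D}), r ^ (k * (n + 1)) :=
          Finset.sum_le_sum fun s _ => hbound s
      _ = (Fintype.card (Fin n → {v // v ∈ unitVecs D}) : ℝ≥0∞) * r ^ (k * (n + 1)) := by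
          rw [Finset.sum_const, Finset.card_univ, nsmul_eq_mul]
      _ ≤ c ^ n * r ^ (k * (n + 1)) := by
          gcongr
          rw [hc_def, ← Nat.cast_pow]
          refine Nat.cast_le.mpr ?_
          rw [Fintype.card_fun, Fintype.card_coe, Fintype.card_fin]
          exact Nat.pow_le_pow_left (card_unitVecs D) n
  -- now the analytic part
  have hk0 : (k : ℝ) ≠ 0 := by positivity
  have hDpos : (0 : ℝ) < 2 * D := by positivity
  have hrk : r ^ k < c⁻¹ := by
    rcases le_or_gt p 0 with hp0 | hp0
    · have : r = 0 := by simp [hr_def, hp0]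
      rw [this, zero_pow (by omega)]
      exact ENNReal.inv_pos.mpr hctop |>.trans_le le_rfl
    · have hpk : p ^ k < ((2 * (D : ℝ)) ^ (-(1 : ℝ) / (k : ℝ))) ^ k :=
        pow_lt_pow_left₀ hp hp0.le (by omega)
      have hrw : ((2 * (D : ℝ)) ^ (-(1 : ℝ) / (k : ℝ))) ^ k = (2 * (D : ℝ))⁻¹ := by
        rw [← Real.rpow_natCast ((2 * (D : ℝ)) ^ (-(1 : ℝ) / (k : ℝ))) k,
          ← Real.rpow_mul hDpos.le]
        rw [show (-(1 : ℝ) / (k : ℝ)) * (k : ℝ) = -1 by field_simp]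
        rw [Real.rpow_neg_one]
      rw [hrw] at hpk
      have : r ^ k = ENNReal.ofReal (p ^ k) := (ENNReal.ofReal_pow hp0.le k).symm
      rw [this]
      have hcinv : c⁻¹ = ENNReal.ofReal ((2 * (D : ℝ))⁻¹) := by
        rw [ENNReal.ofReal_inv_of_pos hDpos, hc_def]
        congr 1
        rw [show (2 * (D : ℝ)) = ((2 * D : ℕ) : ℝ) by push_cast; ring,
          ENNReal.ofReal_natCast]
      rw [hcinv]
      exact (ENNReal.ofReal_lt_ofReal_iff (by positivity)).mpr hpk
  have ha : c * r ^ k < 1 := by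
    calc c * r ^ k < c * c⁻¹ := by
          rw [ENNReal.mul_lt_mul_iff_right hc0 hctop]
          exact hrk
      _ = 1 := ENNReal.mul_inv_cancel hc0 hctop
  have hrk1 : r ^ k ≤ 1 := by
    refine le_trans hrk.le ?_
    refine ENNReal.inv_le_one.mpr ?_
    rw [hc_def]
    exact_mod_cast Nat.one_le_iff_ne_zero.mpr (by omega)
  have key2 : ∀ n : ℕ, μ {ω | ∃ y : ℕ → Fin D → ℤ,
        y 0 = 0 ∧
        (∀ j, norm1 (y (j + 1) - y j) = 1) ∧
        Function.Injective (fun q : Fin k × ℕ => x q.1 + y q.2) ∧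
        ∀ i j, ω (x i + y j) = true} ≤ (c * r ^ k) ^ n := by
    intro n
    refine le_trans (key n) ?_
    have : c ^ n * r ^ (k * (n + 1)) = (c * r ^ k) ^ n * r ^ k := by
      rw [pow_mul, pow_succ, mul_pow]
      ring
    rw [this]
    calc (c * r ^ k) ^ n * r ^ k ≤ (c * r ^ k) ^ n * 1 := by gcongr
      _ = (c * r ^ k) ^ n := mul_one _
  refine le_antisymm ?_ zero_le
  have htend : Filter.Tendsto (fun n => (c * r ^ k) ^ n) Filter.atTop (nhds 0) :=
    ENNReal.tendsto_pow_atTop_nhds_zero_of_lt_one ha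
  exact ge_of_tendsto htend (Filter.Eventually.of_forall key2)
end

section
/- (Periodic colouring.) For any integers d ≥ 1 and R ≥ 2d there exists a colouring α : Z^d → {0, 1, …, d} with the following properties: (a) α(x + R·y) = α(x) for all x, y ∈ Z^d; (b) for each j ∈ {0, 1, …, d}, every j-cluster of α with respect to the star-lattice G* has volume at most R^d; (c) the 0-clusters of α with respect to G* are precisely the cubes R·x + [−(d−1), d−1]^d for x ∈ Z^d. -/
/-- Star-lattice adjacency on `ℤ^d`: distinct sites at ℓ∞-distance at most 1. -/
def StarAdj {d : ℕ} (x y : Fin d → ℤ) : Prop :=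
  x ≠ y ∧ ∀ i, |x i - y i| ≤ 1

/-- `A` is a `q`-cluster of the colouring `α` with respect to the adjacency
relation `adj`: a (nonempty) connected component of the subgraph induced by the
sites of colour `q`. -/
def IsCluster {V Q : Type*} (adj : V → V → Prop) (α : V → Q) (q : Q) (A : Set V) :
    Prop :=
  A.Nonempty ∧ (∀ x ∈ A, α x = q) ∧
    (∀ x ∈ A, ∀ y ∈ A,
      Relation.ReflTransGen (fun a b => α a = q ∧ α b = q ∧ adj a b) x y) ∧
    (∀ x ∈ A, ∀ y, α y = q → adj x y → y ∈ A)

namespace PCol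

/-- `t` lies in the band of width `d-1` around a multiple of `R`. -/
def Band (d R : ℕ) (t : ℤ) : Prop := ∃ z : ℤ, |t - (R : ℤ) * z| ≤ (d : ℤ) - 1

/-- The cube `R·z + [-(d-1), d-1]^d`. -/
def Cube (d R : ℕ) (z : Fin d → ℤ) : Set (Fin d → ℤ) :=
  {y | ∀ i, (R : ℤ) * z i - ((d : ℤ) - 1) ≤ y i ∧ y i ≤ (R : ℤ) * z i + ((d : ℤ) - 1)}

/-- Allowed colours at `x` : those `j ∈ [1,d]` with no coordinate `≡ j-1 (mod R)`. -/
def FS (d R : ℕ) (x : Fin d → ℤ) : Finset ℕ :=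
  (Finset.Icc 1 d).filter fun j => ∀ i, x i % (R : ℤ) ≠ (j : ℤ) - 1

open Classical in
/-- The value of the colouring. -/
noncomputable def aval (d R : ℕ) (x : Fin d → ℤ) : ℕ :=
  if (∀ i, Band d R (x i)) then 0
  else if h : (FS d R x).Nonempty then (FS d R x).min' h else 0

lemma aval_le (d R : ℕ) (x : Fin d → ℤ) : aval d R x ≤ d := by
  unfold aval
  split_ifs with h1 h2
  · omega
  · have h3 := (FS d R x).min'_mem h2
    exact (Finset.mem_Icc.1 (Finset.mem_filter.1 h3).1).2
  · omega

/-- The colouring. -/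
noncomputable def alpha (d R : ℕ) (x : Fin d → ℤ) : Fin (d + 1) :=
  ⟨aval d R x, by have := aval_le d R x; omega⟩

variable {d R : ℕ}

lemma band_of_emod (hR : 0 < R) {t : ℤ} (h : t % (R : ℤ) ≤ (d : ℤ) - 1) :
    Band d R t := by
  refine ⟨t / (R : ℤ), ?_⟩
  have h0 : t - (R : ℤ) * (t / (R : ℤ)) = t % (R : ℤ) := by
    rw [Int.emod_def]
  rw [h0, abs_of_nonneg (Int.emod_nonneg t (by exact_mod_cast hR.ne'))]
  exact h

lemma not_band_emod (hR : 0 < R) {t : ℤ} (h : ¬ Band d R t) {j : ℕ}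
    (_hj1 : 1 ≤ j) (hjd : j ≤ d) : t % (R : ℤ) ≠ (j : ℤ) - 1 := by
  intro he
  exact h (band_of_emod hR (by rw [he]; omega))

lemma FS_nonempty (hR : 0 < R) {x : Fin d → ℤ}
    (h : ¬ ∀ i, Band d R (x i)) : (FS d R x).Nonempty := by
  by_contra hne
  rw [Finset.not_nonempty_iff_eq_empty] at hne
  push_neg at h
  obtain ⟨i₀, hi₀⟩ := h
  have hall : ∀ j : ℕ, ∃ i, (j ∈ Finset.Icc 1 d → x i % (R : ℤ) = (j : ℤ) - 1) := by
    intro j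
    by_cases hj : j ∈ Finset.Icc 1 d
    · by_contra hc
      push_neg at hc
      have : j ∈ FS d R x := Finset.mem_filter.2 ⟨hj, fun i => (hc i).2⟩
      simp [hne] at this
    · exact ⟨i₀, fun h => absurd h hj⟩
  choose f hf using hall
  have hmem : ∀ j ∈ Finset.Icc 1 d, f j ∈ Finset.univ.erase i₀ := by
    intro j hj
    refine Finset.mem_erase.2 ⟨?_, Finset.mem_univ _⟩
    intro hfe
    have hb := Finset.mem_Icc.1 hj
    exact not_band_emod hR hi₀ hb.1 hb.2 (hfe ▸ hf j hj)
  have hinj : Set.InjOn f ↑(Finset.Icc 1 d) := by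
    intro j hj k hk he
    have h1 := hf j (by simpa using hj)
    have h2 := hf k (by simpa using hk)
    rw [he] at h1
    rw [h1] at h2
    have : (j : ℤ) = (k : ℤ) := by omega
    exact_mod_cast this
  have hcard := Finset.card_le_card_of_injOn f hmem hinj
  have h1 : (Finset.Icc 1 d).card = d := by rw [Nat.card_Icc]; omega
  have h2 : (Finset.univ.erase i₀).card = d - 1 := by
    rw [Finset.card_erase_of_mem (Finset.mem_univ _), Finset.card_univ, Fintype.card_fin]
  have hd : 1 ≤ d := by
    have := i₀.pos
    omega
  omega


lemma alpha_eq_zero_of_band {x : Fin d → ℤ} (h : ∀ i, Band d R (x i)) :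
    alpha d R x = 0 := by
  rw [alpha, Fin.ext_iff]
  simp [aval, if_pos h]

lemma aval_mem_FS (hR : 0 < R) {x : Fin d → ℤ} (h : ¬ ∀ i, Band d R (x i)) :
    aval d R x ∈ FS d R x := by
  rw [aval, if_neg h, dif_pos (FS_nonempty hR h)]
  exact (FS d R x).min'_mem _

lemma alpha_ne_zero (hR : 0 < R) {x : Fin d → ℤ} (h : ¬ ∀ i, Band d R (x i)) :
    alpha d R x ≠ 0 := by
  have h1 := aval_mem_FS hR h
  have h2 := (Finset.mem_Icc.1 (Finset.mem_filter.1 h1).1).1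
  intro he
  rw [alpha, Fin.ext_iff] at he
  simp at he
  omega

lemma alpha_band_of_eq_zero (hR : 0 < R) {x : Fin d → ℤ} (h : alpha d R x = 0) :
    ∀ i, Band d R (x i) := by
  by_contra hc
  exact alpha_ne_zero hR hc h

lemma alpha_avoid (hR : 0 < R) {x : Fin d → ℤ} {j : Fin (d+1)} (hj : j ≠ 0)
    (h : alpha d R x = j) : ∀ i, x i % (R : ℤ) ≠ ((j : ℕ) : ℤ) - 1 := by
  have hb : ¬ ∀ i, Band d R (x i) := by
    intro hb
    exact hj (h ▸ alpha_eq_zero_of_band hb)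
  have h1 := aval_mem_FS hR hb
  have hv : aval d R x = (j : ℕ) := by
    rw [alpha, Fin.ext_iff] at h
    simpa using h
  rw [hv] at h1
  exact (Finset.mem_filter.1 h1).2

lemma alpha_periodic (x y : Fin d → ℤ) :
    alpha d R (x + (R : ℤ) • y) = alpha d R x := by
  have hb : ∀ i, Band d R ((x + (R : ℤ) • y) i) ↔ Band d R (x i) := by
    intro i
    constructor
    · rintro ⟨z, hz⟩
      refine ⟨z - y i, ?_⟩
      have : x i - (R : ℤ) * (z - y i) = (x + (R : ℤ) • y) i - (R : ℤ) * z := by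
        simp [Pi.add_apply, Pi.smul_apply, smul_eq_mul]; ring
      rw [this]; exact hz
    · rintro ⟨z, hz⟩
      refine ⟨z + y i, ?_⟩
      have : (x + (R : ℤ) • y) i - (R : ℤ) * (z + y i) = x i - (R : ℤ) * z := by
        simp [Pi.add_apply, Pi.smul_apply, smul_eq_mul]; ring
      rw [this]; exact hz
  have hFS : FS d R (x + (R : ℤ) • y) = FS d R x := by
    unfold FS
    apply Finset.filter_congr
    intro j _
    simp only [Pi.add_apply, Pi.smul_apply, smul_eq_mul, eq_iff_iff]
    constructor
    · intro hh i
      have := hh i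
      rwa [Int.add_mul_emod_self_left] at this
    · intro hh i
      rw [Int.add_mul_emod_self_left]
      exact hh i
  have hv : aval d R (x + (R : ℤ) • y) = aval d R x := by
    unfold aval
    rw [hFS]
    by_cases hc : ∀ i, Band d R (x i)
    · rw [if_pos (fun i => (hb i).2 (hc i)), if_pos hc]
    · rw [if_neg (fun hh => hc (fun i => (hb i).1 (hh i))), if_neg hc]
  rw [alpha, alpha, Fin.ext_iff]
  simpa using hv


lemma band_unique (hR : 2 * d ≤ R) {t z z' : ℤ}
    (h : |t - (R : ℤ) * z| ≤ (d : ℤ) - 1) (h' : |t - (R : ℤ) * z'| ≤ (d : ℤ)) :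
    z' = z := by
  rw [abs_le] at h h'
  have hRd : (2 * (d : ℤ)) ≤ (R : ℤ) := by exact_mod_cast hR
  rcases lt_trichotomy z' z with hlt | he | hgt
  · exfalso
    have h1 : z' + 1 ≤ z := hlt
    have h2 := mul_le_mul_of_nonneg_left h1 (show (0:ℤ) ≤ (R:ℤ) by positivity)
    rw [mul_add, mul_one] at h2
    linarith [h.1, h'.2]
  · exact he
  · exfalso
    have h1 : z + 1 ≤ z' := hgt
    have h2 := mul_le_mul_of_nonneg_left h1 (show (0:ℤ) ≤ (R:ℤ) by positivity)
    rw [mul_add, mul_one] at h2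
    linarith [h.2, h'.1]

lemma cube_alpha {z : Fin d → ℤ} {y : Fin d → ℤ} (h : y ∈ Cube d R z) :
    alpha d R y = 0 := by
  refine alpha_eq_zero_of_band (fun i => ⟨z i, abs_le.2 ⟨?_, ?_⟩⟩)
  · linarith [(h i).1]
  · linarith [(h i).2]

lemma cube_closed (hd : 1 ≤ d) (hR : 2 * d ≤ R) {z : Fin d → ℤ} {y y' : Fin d → ℤ}
    (hy : y ∈ Cube d R z) (h0 : alpha d R y' = 0) (hadj : StarAdj y y') :
    y' ∈ Cube d R z := by
  have hRpos : 0 < R := by omega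
  have hb := alpha_band_of_eq_zero hRpos h0
  intro i
  obtain ⟨z', hz'⟩ := hb i
  have h1 : |y' i - (R : ℤ) * z i| ≤ (d : ℤ) := by
    have h2 := hadj.2 i
    have h3 : |y i - (R : ℤ) * z i| ≤ (d : ℤ) - 1 := by
      rw [abs_le]
      exact ⟨by linarith [(hy i).1], by linarith [(hy i).2]⟩
    calc |y' i - (R : ℤ) * z i| = |(y' i - y i) + (y i - (R : ℤ) * z i)| := by ring_nf
      _ ≤ |y' i - y i| + |y i - (R : ℤ) * z i| := abs_add_le _ _
      _ ≤ 1 + ((d : ℤ) - 1) := by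
          gcongr
          rw [abs_sub_comm]
          exact h2
      _ = (d : ℤ) := by ring
  have hz : z i = z' := band_unique hR hz' h1
  rw [← hz] at hz'
  rw [abs_le] at hz'
  exact ⟨by linarith [hz'.1], by linarith [hz'.2]⟩

lemma box_path (lo hi : Fin d → ℤ) (n : ℕ) :
    ∀ a b : Fin d → ℤ, (∀ i, lo i ≤ a i ∧ a i ≤ hi i) → (∀ i, lo i ≤ b i ∧ b i ≤ hi i) →
    (∑ i, (b i - a i).natAbs) = n →
    Relation.ReflTransGen
      (fun u v => (∀ i, lo i ≤ u i ∧ u i ≤ hi i) ∧ (∀ i, lo i ≤ v i ∧ v i ≤ hi i) ∧ StarAdj u v)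
      a b := by
  induction n using Nat.strong_induction_on with
  | _ n ih =>
  intro a b ha hb hn
  by_cases hab : a = b
  · subst hab; exact .refl
  · obtain ⟨i, hne⟩ := Function.ne_iff.1 hab
    set s : ℤ := if a i < b i then 1 else -1 with hs
    set a' := Function.update a i (a i + s) with hadef
    have ha'i : a' i = a i + s := Function.update_self i _ a
    have ha'k : ∀ k, k ≠ i → a' k = a k := fun k hk => Function.update_of_ne hk _ a
    have hbnd : ∀ k, lo k ≤ a' k ∧ a' k ≤ hi k := by
      intro k
      by_cases hk : k = i
      · subst hk
        rw [ha'i, hs]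
        split_ifs with hlt
        · exact ⟨by linarith [(ha k).1], by linarith [(hb k).2]⟩
        · have : b k < a k := lt_of_le_of_ne (not_lt.1 hlt) hne.symm
          exact ⟨by linarith [(hb k).1], by linarith [(ha k).2]⟩
      · rw [ha'k k hk]; exact ha k
    have hadj : StarAdj a a' := by
      constructor
      · intro he
        have := congrFun he i
        rw [ha'i] at this
        have hs1 : s = 1 ∨ s = -1 := by rw [hs]; split_ifs <;> simp
        omega
      · intro k
        by_cases hk : k = i
        · subst hk
          rw [ha'i]
          have hs1 : s = 1 ∨ s = -1 := by rw [hs]; split_ifs <;> simp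
          rcases hs1 with h | h <;> rw [h] <;> simp
        · rw [ha'k k hk]; simp
    have hdec : (∑ k, (b k - a' k).natAbs) + 1 = n := by
      rw [← hn, ← Finset.add_sum_erase _ _ (Finset.mem_univ i),
        ← Finset.add_sum_erase _ _ (Finset.mem_univ i)]
      have h2 : ∑ k ∈ Finset.univ.erase i, (b k - a' k).natAbs
          = ∑ k ∈ Finset.univ.erase i, (b k - a k).natAbs :=
        Finset.sum_congr rfl fun k hk => by rw [ha'k k (Finset.mem_erase.1 hk).1]
      rw [h2]
      have h3 : (b i - a' i).natAbs + 1 = (b i - a i).natAbs := by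
        rw [ha'i, hs]
        split_ifs with hlt
        · omega
        · have : b i < a i := lt_of_le_of_ne (not_lt.1 hlt) hne.symm
          omega
      omega
    exact Relation.ReflTransGen.head ⟨ha, hbnd, hadj⟩
      (ih (n - 1) (by omega) a' b hbnd hb (by omega))


lemma box_finite_ncard (lo hi : Fin d → ℤ) :
    ({y : Fin d → ℤ | ∀ i, lo i ≤ y i ∧ y i ≤ hi i}).Finite ∧
    ({y : Fin d → ℤ | ∀ i, lo i ≤ y i ∧ y i ≤ hi i}).ncard
      = ∏ i, (hi i + 1 - lo i).toNat := by
  have he : {y : Fin d → ℤ | ∀ i, lo i ≤ y i ∧ y i ≤ hi i}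
      = ↑(Fintype.piFinset fun i => Finset.Icc (lo i) (hi i)) := by
    ext y
    simp [Fintype.mem_piFinset, Finset.mem_Icc, Pi.le_def]
    exact ⟨fun h => ⟨fun i => (h i).1, fun i => (h i).2⟩, fun h i => ⟨h.1 i, h.2 i⟩⟩
  rw [he]
  refine ⟨(Fintype.piFinset _).finite_toSet, ?_⟩
  rw [Set.ncard_coe_finset, Fintype.card_piFinset]
  exact Finset.prod_congr rfl fun i _ => Int.card_Icc _ _

lemma isCluster_cube (hd : 1 ≤ d) (hR : 2 * d ≤ R) (z : Fin d → ℤ) :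
    IsCluster StarAdj (alpha d R) 0 (Cube d R z) := by
  have hd1 : (1 : ℤ) ≤ (d : ℤ) := by exact_mod_cast hd
  refine ⟨⟨fun i => (R : ℤ) * z i, fun i => by dsimp only; exact ⟨by linarith, by linarith⟩⟩,
    fun x hx => cube_alpha hx, ?_, fun x hx y h0 hadj => cube_closed hd hR hx h0 hadj⟩
  intro x hx y hy
  have hp := box_path (fun i => (R : ℤ) * z i - ((d : ℤ) - 1))
    (fun i => (R : ℤ) * z i + ((d : ℤ) - 1)) (∑ i, (y i - x i).natAbs) x y hx hy rfl
  exact Relation.ReflTransGen.mono (fun u v h => ⟨cube_alpha h.1, cube_alpha h.2.1, h.2.2⟩) x y hp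

lemma starAdj_symm : Symmetric (@StarAdj d) := by
  intro u v h
  exact ⟨h.1.symm, fun i => by rw [abs_sub_comm]; exact h.2 i⟩

lemma cluster_subset {q : Fin (d + 1)} {A B : Set (Fin d → ℤ)}
    (hA : IsCluster StarAdj (alpha d R) q A) (hB : IsCluster StarAdj (alpha d R) q B)
    {a : Fin d → ℤ} (ha : a ∈ A) (hb : a ∈ B) : A ⊆ B := by
  intro x hx
  have hpath := hA.2.2.1 x hx a ha
  have hsymm : Symmetric (fun u v => alpha d R u = q ∧ alpha d R v = q ∧ StarAdj u v) := by
    intro u v h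
    exact ⟨h.2.1, h.1, starAdj_symm h.2.2⟩
  have hpath' : Relation.ReflTransGen (fun u v => alpha d R u = q ∧ alpha d R v = q ∧ StarAdj u v) a x := by
    haveI : Std.Symm (fun u v : Fin d → ℤ => alpha d R u = q ∧ alpha d R v = q ∧ StarAdj u v) :=
      ⟨fun u v h => hsymm h⟩
    exact Std.Symm.symm _ _ hpath
  clear hpath hx
  induction hpath' with
  | refl => exact hb
  | tail _ h2 ih => exact hB.2.2.2 _ ih _ h2.2.1 h2.2.2

lemma cluster_unique {q : Fin (d + 1)} {A B : Set (Fin d → ℤ)}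
    (hA : IsCluster StarAdj (alpha d R) q A) (hB : IsCluster StarAdj (alpha d R) q B)
    {a : Fin d → ℤ} (ha : a ∈ A) (hb : a ∈ B) : A = B :=
  le_antisymm (cluster_subset hA hB ha hb) (cluster_subset hB hA hb ha)


lemma box_ncard_le (lo hi : Fin d → ℤ) (K : ℕ) (h : ∀ i, (hi i + 1 - lo i).toNat ≤ K) :
    ({y : Fin d → ℤ | ∀ i, lo i ≤ y i ∧ y i ≤ hi i}).ncard ≤ K ^ d := by
  rw [(box_finite_ncard lo hi).2]
  calc ∏ i, (hi i + 1 - lo i).toNat ≤ ∏ _i : Fin d, K :=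
        Finset.prod_le_prod' (fun i _ => h i)
    _ = K ^ d := by rw [Finset.prod_const, Finset.card_univ, Fintype.card_fin]

end PCol

/-- Periodic colouring. For `d ≥ 1` and `R ≥ 2d` there is a colouring
`α : ℤ^d → {0, 1, …, d}` such that: (a) `α` is `R`-periodic in each dimension;
(b) every `j`-cluster with respect to the star-lattice has volume at most `R^d`;
(c) the `0`-clusters with respect to the star-lattice are precisely the cubes
`R·x + [-(d-1), d-1]^d` for `x ∈ ℤ^d`. -/
theorem periodic_colouring (d R : ℕ) (hd : 1 ≤ d) (hR : 2 * d ≤ R) :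
    ∃ α : (Fin d → ℤ) → Fin (d + 1),
      (∀ x y : Fin d → ℤ, α (x + (R : ℤ) • y) = α x) ∧
      (∀ (j : Fin (d + 1)) (A : Set (Fin d → ℤ)),
        IsCluster StarAdj α j A → A.Finite ∧ A.ncard ≤ R ^ d) ∧
      (∀ A : Set (Fin d → ℤ),
        IsCluster StarAdj α 0 A ↔
          ∃ x : Fin d → ℤ,
            A = {z | ∀ i, (R : ℤ) * x i - ((d : ℤ) - 1) ≤ z i ∧
                          z i ≤ (R : ℤ) * x i + ((d : ℤ) - 1)}) := by
  have hRpos : 0 < R := by omega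
  have hRz : (0:ℤ) < (R:ℤ) := by exact_mod_cast hRpos
  have hRd : (2 * (d:ℤ)) ≤ (R:ℤ) := by exact_mod_cast hR
  have hd1 : (1:ℤ) ≤ (d:ℤ) := by exact_mod_cast hd
  refine ⟨PCol.alpha d R, fun x y => PCol.alpha_periodic x y, ?_, ?hc⟩
  case hc =>
    intro A
    constructor
    · intro hA
      obtain ⟨a, ha⟩ := hA.1
      have h0 := hA.2.1 a ha
      have hb := PCol.alpha_band_of_eq_zero hRpos h0
      choose z hz using hb
      have haC : a ∈ PCol.Cube d R z := by
        intro i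
        have h1 := abs_le.1 (hz i)
        exact ⟨by linarith [h1.1], by linarith [h1.2]⟩
      exact ⟨z, PCol.cluster_unique hA (PCol.isCluster_cube hd hR z) ha haC⟩
    · rintro ⟨x, rfl⟩
      exact PCol.isCluster_cube hd hR x
  · -- volume bounds
    intro j A hA
    by_cases hj : j = 0
    · subst hj
      obtain ⟨a, ha⟩ := hA.1
      have h0 := hA.2.1 a ha
      have hb := PCol.alpha_band_of_eq_zero hRpos h0
      choose z hz using hb
      have haC : a ∈ PCol.Cube d R z := by
        intro i
        have h1 := abs_le.1 (hz i)
        exact ⟨by linarith [h1.1], by linarith [h1.2]⟩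
      have hAeq : A = PCol.Cube d R z :=
        PCol.cluster_unique hA (PCol.isCluster_cube hd hR z) ha haC
      subst hAeq
      refine ⟨(PCol.box_finite_ncard (fun i => (R:ℤ) * z i - ((d:ℤ) - 1))
        (fun i => (R:ℤ) * z i + ((d:ℤ) - 1))).1, ?_⟩
      exact PCol.box_ncard_le (fun i => (R:ℤ) * z i - ((d:ℤ) - 1))
        (fun i => (R:ℤ) * z i + ((d:ℤ) - 1)) R (fun i => by omega)
    · obtain ⟨a, ha⟩ := hA.1
      have hjv : 1 ≤ (j : ℕ) := by
        rcases Nat.eq_zero_or_pos (j : ℕ) with h | h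
        · exact absurd (Fin.ext (by simpa using h)) hj
        · exact h
      have hjd : (j : ℕ) ≤ d := by have := j.isLt; omega
      set c : ℤ := ((j : ℕ) : ℤ) - 1 with hcdef
      have hc0 : 0 ≤ c := by
        have : (1:ℤ) ≤ ((j:ℕ):ℤ) := by exact_mod_cast hjv
        omega
      have hcR : c < (R:ℤ) := by
        have : ((j:ℕ):ℤ) ≤ (d:ℤ) := by exact_mod_cast hjd
        omega
      have hcc : c % (R:ℤ) = c := Int.emod_eq_of_lt hc0 hcR
      set m : Fin d → ℤ := fun i => a i - (a i - c) % (R:ℤ) with hm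
      have hmmod : ∀ i, m i % (R:ℤ) = c := by
        intro i
        have h1 : (m i - c) % (R:ℤ) = 0 := by
          have h2 : m i - c = (R:ℤ) * ((a i - c) / (R:ℤ)) := by
            rw [hm]; dsimp only; rw [Int.emod_def]; ring
          rw [h2, Int.mul_emod_right]
        have h3 := Int.emod_eq_emod_iff_emod_sub_eq_zero.2 h1
        rw [hcc] at h3
        exact h3
      have hstart : ∀ i, m i + 1 ≤ a i ∧ a i ≤ m i + (R:ℤ) - 1 := by
        intro i
        have h1 : 0 ≤ (a i - c) % (R:ℤ) := Int.emod_nonneg _ (by omega)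
        have h2 : (a i - c) % (R:ℤ) < (R:ℤ) := Int.emod_lt_of_pos _ hRz
        have h3 : (a i - c) % (R:ℤ) ≠ 0 := by
          intro h0
          have h4 : a i % (R:ℤ) = c % (R:ℤ) := Int.emod_eq_emod_iff_emod_sub_eq_zero.2 h0
          rw [hcc] at h4
          exact PCol.alpha_avoid hRpos hj (hA.2.1 a ha) i h4
        rw [hm]; dsimp only; omega
      have hstep : ∀ u v : Fin d → ℤ, (∀ i, m i + 1 ≤ u i ∧ u i ≤ m i + (R:ℤ) - 1) →
          PCol.alpha d R v = j → StarAdj u v →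
          (∀ i, m i + 1 ≤ v i ∧ v i ≤ m i + (R:ℤ) - 1) := by
        intro u v hu hv hadj i
        have h5 := PCol.alpha_avoid hRpos hj hv i
        have h6 : v i ≠ m i := fun he => h5 (by rw [he]; exact hmmod i)
        have h7 : v i ≠ m i + (R:ℤ) := by
          intro he
          apply h5
          rw [he, show m i + (R:ℤ) = m i + (R:ℤ) * 1 by ring,
            Int.add_mul_emod_self_left]
          exact hmmod i
        have h8 := abs_le.1 (hadj.2 i)
        have h9 := hu i
        omega
      have hall : ∀ x, Relation.ReflTransGen
          (fun u v => PCol.alpha d R u = j ∧ PCol.alpha d R v = j ∧ StarAdj u v) a x →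
          (∀ i, m i + 1 ≤ x i ∧ x i ≤ m i + (R:ℤ) - 1) := by
        intro x hp
        induction hp with
        | refl => exact hstart
        | tail _ h2 ih => exact hstep _ _ ih h2.2.1 h2.2.2
      have hsub : A ⊆ {y : Fin d → ℤ | ∀ i, m i + 1 ≤ y i ∧ y i ≤ m i + (R:ℤ) - 1} :=
        fun x hx => hall x (hA.2.2.1 a ha x hx)
      have hfc := PCol.box_finite_ncard (fun i => m i + 1) (fun i => m i + (R:ℤ) - 1)
      refine ⟨hfc.1.subset hsub, ?_⟩
      have hK : ∀ i : Fin d, ((m i + (R:ℤ) - 1) + 1 - (m i + 1)).toNat ≤ R := by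
        intro i
        clear * - hRz
        omega
      have h10 := PCol.box_ncard_le (fun i => m i + 1) (fun i => m i + (R:ℤ) - 1) R hK
      exact le_trans (Set.ncard_le_ncard hsub hfc.1) h10
end

section
/- Let D ≥ 2 and let f : Z^2 → Z^D be a 1-Lipschitz injection (into the full lattice). Then for every (i, j) ∈ Z^2 one has f(i+1, j+1) − f(i, j+1) = f(i+1, j) − f(i, j) and f(i+1, j+1) − f(i+1, j) = f(i, j+1) − f(i, j); consequently, for any distinct i, i′ ∈ Z the images under f of the two vertical lines {(i, j) : j ∈ Z} and {(i′, j) : j ∈ Z} are disjoint self-avoiding paths that are translates of each other. -/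
/-- Integer dot product. -/
def dotZ {n : ℕ} (x y : Fin n → ℤ) : ℤ := ∑ i, x i * y i

lemma norm1_nonneg {n : ℕ} (x : Fin n → ℤ) : 0 ≤ norm1 x :=
  Finset.sum_nonneg fun _ _ => abs_nonneg _

lemma norm1_zero_iff {n : ℕ} {x : Fin n → ℤ} : norm1 x = 0 ↔ x = 0 := by
  constructor
  · intro h
    funext i
    have := (Finset.sum_eq_zero_iff_of_nonneg (fun i _ => abs_nonneg (x i))).mp h i
      (Finset.mem_univ i)
    simpa using abs_eq_zero.mp this
  · rintro rfl; simp [norm1]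

lemma abs_le_of_unit {n : ℕ} {x : Fin n → ℤ} (h : norm1 x = 1) (i : Fin n) : |x i| ≤ 1 :=
  h ▸ Finset.single_le_sum (fun j _ => abs_nonneg (x j)) (Finset.mem_univ i)

lemma dot_self_unit {n : ℕ} {x : Fin n → ℤ} (h : norm1 x = 1) : dotZ x x = 1 := by
  have key : ∀ i, x i * x i = |x i| := by
    intro i
    have h1 := abs_le_of_unit h i
    have h2 := abs_nonneg (x i)
    have h3 : x i * x i = |x i| * |x i| := (abs_mul_abs_self _).symm
    have : |x i| = 0 ∨ |x i| = 1 := by omega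
    rcases this with h4 | h4 <;> rw [h3, h4] <;> ring
  simp only [dotZ]
  rw [Finset.sum_congr rfl fun i _ => key i]
  exact h

lemma abs_dot_le {n : ℕ} {u v : Fin n → ℤ} (hu : norm1 u = 1) (hv : norm1 v = 1) :
    |dotZ u v| ≤ 1 := by
  calc |dotZ u v| ≤ ∑ i, |u i * v i| := Finset.abs_sum_le_sum_abs _ _
    _ ≤ ∑ i, |v i| := Finset.sum_le_sum fun i _ => by
        rw [abs_mul]
        exact mul_le_of_le_one_left (abs_nonneg _) (abs_le_of_unit hu i)
    _ = 1 := hv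

lemma dot_self_zero {n : ℕ} {x : Fin n → ℤ} (h : dotZ x x = 0) : x = 0 := by
  funext i
  have := (Finset.sum_eq_zero_iff_of_nonneg (fun i _ => mul_self_nonneg (x i))).mp h i
    (Finset.mem_univ i)
  simpa using mul_self_eq_zero.mp this

lemma dot_add_left {n : ℕ} (x y z : Fin n → ℤ) : dotZ (x + y) z = dotZ x z + dotZ y z := by
  simp only [dotZ, Pi.add_apply, add_mul, Finset.sum_add_distrib]

lemma dot_add_right {n : ℕ} (x y z : Fin n → ℤ) : dotZ x (y + z) = dotZ x y + dotZ x z := by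
  simp only [dotZ, Pi.add_apply, mul_add, Finset.sum_add_distrib]

lemma dot_comm {n : ℕ} (x y : Fin n → ℤ) : dotZ x y = dotZ y x := by
  simp only [dotZ, mul_comm]

lemma eq_of_dot_eq_one {n : ℕ} {u v : Fin n → ℤ} (hu : norm1 u = 1) (hv : norm1 v = 1)
    (h : dotZ u v = 1) : u = v := by
  have hz : dotZ (u - v) (u - v) = 0 := by
    have e : ∀ i ∈ Finset.univ, (u i - v i) * (u i - v i)
        = u i * u i - 2 * (u i * v i) + v i * v i := fun i _ => by ring
    have huu := dot_self_unit hu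
    have hvv := dot_self_unit hv
    simp only [dotZ] at huu hvv h ⊢
    simp only [Pi.sub_apply]
    rw [Finset.sum_congr rfl e, Finset.sum_add_distrib, Finset.sum_sub_distrib,
      ← Finset.mul_sum]
    omega
  have := dot_self_zero hz
  exact sub_eq_zero.mp this

lemma square_lemma {n : ℕ} {s t s' t' : Fin n → ℤ}
    (hs : norm1 s = 1) (ht : norm1 t = 1) (hs' : norm1 s' = 1) (ht' : norm1 t' = 1)
    (hsum : s + t = s' + t') (hne : s ≠ s') (hw : s + t ≠ 0) :
    t = s' ∧ t' = s := by
  have hww : dotZ (s + t) (s + t) = 2 + 2 * dotZ s t := by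
    rw [dot_add_left, dot_add_right, dot_add_right, dot_self_unit hs, dot_self_unit ht,
      dot_comm t s]
    ring
  have hww' : dotZ (s' + t') (s' + t') = 2 + 2 * dotZ s' t' := by
    rw [dot_add_left, dot_add_right, dot_add_right, dot_self_unit hs', dot_self_unit ht',
      dot_comm t' s']
    ring
  rw [hsum, hww'] at hww
  have hpp' : dotZ s t = dotZ s' t' := by omega
  have hb1 := abs_le.mp (abs_dot_le hs ht)
  have hp1 : dotZ s t ≠ 1 := by
    intro h
    have hst : s = t := eq_of_dot_eq_one hs ht h
    have hst' : s' = t' := eq_of_dot_eq_one hs' ht' (by omega)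
    have h2 := hsum
    rw [← hst, ← hst'] at h2
    exact hne (funext fun i => by
      have := congrFun h2 i; simp only [Pi.add_apply] at this; omega)
  have hpm1 : dotZ s t ≠ -1 := by
    intro h
    apply hw
    apply dot_self_zero
    rw [hsum, hww', ← hpp', h]
    ring
  have hp0 : dotZ s t = 0 := by omega
  have hp0' : dotZ s' t' = 0 := by omega
  have hAB : dotZ s s' + dotZ t s' = 1 := by
    have h2 : dotZ (s + t) s' = dotZ (s' + t') s' := by rw [hsum]
    rw [dot_add_left, dot_add_left, dot_self_unit hs', dot_comm t' s', hp0'] at h2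
    omega
  have hA1 : dotZ s s' ≠ 1 := fun h => hne (eq_of_dot_eq_one hs hs' h)
  have hAle := abs_le.mp (abs_dot_le hs hs')
  have hBle := abs_le.mp (abs_dot_le ht hs')
  have hB : dotZ t s' = 1 := by omega
  have hts' : t = s' := eq_of_dot_eq_one ht hs' hB
  refine ⟨hts', ?_⟩
  have h3 : s + s' = s' + t' := hts' ▸ hsum
  funext i
  have := congrFun h3 i
  simp only [Pi.add_apply] at this
  omega

/-- Rigidity of 1-Lipschitz injections of `ℤ²` into `ℤ^D`: the images of the four
edges of any unit square come in equal opposite pairs, and consequently the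
images of any two distinct vertical lines are disjoint self-avoiding paths that
are translates of each other. -/
theorem one_lipschitz_injection_rigidity (D : ℕ) (hD : 2 ≤ D)
    (f : ℤ × ℤ → (Fin D → ℤ)) (hinj : Function.Injective f)
    (hlip : ∀ x y : ℤ × ℤ, |x.1 - y.1| + |x.2 - y.2| = 1 →
      norm1 (f x - f y) ≤ 1) :
    (∀ i j : ℤ,
      f (i + 1, j + 1) - f (i, j + 1) = f (i + 1, j) - f (i, j) ∧
      f (i + 1, j + 1) - f (i + 1, j) = f (i, j + 1) - f (i, j)) ∧
    ∀ i i' : ℤ, i ≠ i' →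
      (Function.Injective fun j : ℤ => f (i, j)) ∧
      (∀ j : ℤ, norm1 (f (i, j + 1) - f (i, j)) = 1) ∧
      (∃ v : Fin D → ℤ, ∀ j : ℤ, f (i', j) = f (i, j) + v) ∧
      (∀ j j' : ℤ, f (i, j) ≠ f (i', j')) := by
  have step : ∀ x y : ℤ × ℤ, |x.1 - y.1| + |x.2 - y.2| = 1 → norm1 (f x - f y) = 1 := by
    intro x y h
    have hle := hlip x y h
    have hne : norm1 (f x - f y) ≠ 0 := by
      intro h0
      have hxy : f x = f y := sub_eq_zero.mp (norm1_zero_iff.mp h0)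
      have := hinj hxy
      rw [this] at h
      simp at h
    have := norm1_nonneg (f x - f y)
    omega
  have part1 : ∀ i j : ℤ,
      f (i + 1, j + 1) - f (i, j + 1) = f (i + 1, j) - f (i, j) ∧
      f (i + 1, j + 1) - f (i + 1, j) = f (i, j + 1) - f (i, j) := by
    intro i j
    have hs : norm1 (f (i + 1, j) - f (i, j)) = 1 := step _ _ (by norm_num)
    have ht : norm1 (f (i + 1, j + 1) - f (i + 1, j)) = 1 := step _ _ (by norm_num)
    have hs' : norm1 (f (i, j + 1) - f (i, j)) = 1 := step _ _ (by norm_num)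
    have ht' : norm1 (f (i + 1, j + 1) - f (i, j + 1)) = 1 := step _ _ (by norm_num)
    have hsum : (f (i + 1, j) - f (i, j)) + (f (i + 1, j + 1) - f (i + 1, j))
        = (f (i, j + 1) - f (i, j)) + (f (i + 1, j + 1) - f (i, j + 1)) := by abel
    have hne : (f (i + 1, j) - f (i, j)) ≠ (f (i, j + 1) - f (i, j)) := by
      intro h
      have hb : f (i + 1, j) = f (i, j + 1) := sub_left_inj.mp h
      have := hinj hb
      rw [Prod.ext_iff] at this
      simp at this
    have hw : (f (i + 1, j) - f (i, j)) + (f (i + 1, j + 1) - f (i + 1, j)) ≠ 0 := by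
      intro h
      have h' : f (i + 1, j + 1) - f (i, j) = 0 := by rw [← h]; abel
      have hb : f (i + 1, j + 1) = f (i, j) := sub_eq_zero.mp h'
      have := hinj hb
      rw [Prod.ext_iff] at this
      simp at this
    obtain ⟨h1, h2⟩ := square_lemma hs ht hs' ht' hsum hne hw
    exact ⟨h2, h1⟩
  refine ⟨part1, ?_⟩
  intro i i' hii'
  have hdconst : ∀ d : ℤ, ∀ a j : ℤ, f (a + d, j + 1) - f (a, j + 1) = f (a + d, j) - f (a, j) := by
    intro d
    induction d using Int.induction_on with
    | zero => simp
    | succ k ih =>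
      intro a j
      have h1 := (part1 (a + k) j).1
      have h2 := ih a j
      have hi : (a + ((k : ℤ) + 1)) = (a + k) + 1 := by ring
      rw [hi]
      funext x
      have e1 := congrFun h1 x
      have e2 := congrFun h2 x
      simp only [Pi.sub_apply] at e1 e2 ⊢
      omega
    | pred k ih =>
      intro a j
      have h1 := (part1 (a + (-(k : ℤ) - 1)) j).1
      have h2 := ih a j
      have hi : (a + (-(k : ℤ) - 1)) + 1 = a + (-(k : ℤ)) := by ring
      rw [hi] at h1
      funext x
      have e1 := congrFun h1 x
      have e2 := congrFun h2 x
      simp only [Pi.sub_apply] at e1 e2 ⊢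
      omega
  have key : ∀ j : ℤ, f (i', j + 1) - f (i, j + 1) = f (i', j) - f (i, j) := by
    intro j
    have := hdconst (i' - i) i j
    have hi : i + (i' - i) = i' := by ring
    rwa [hi] at this
  have const : ∀ j : ℤ, f (i', j) - f (i, j) = f (i', 0) - f (i, 0) := by
    intro j
    induction j using Int.induction_on with
    | zero => rfl
    | succ k ih => rw [key k, ih]
    | pred k ih =>
      have h1 := key (-(k : ℤ) - 1)
      have hi : (-(k : ℤ) - 1) + 1 = -(k : ℤ) := by ring
      rw [hi] at h1
      rw [← h1, ih]
  refine ⟨?_, ?_, ?_, ?_⟩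
  · intro j j' h
    exact (Prod.ext_iff.mp (hinj h)).2
  · intro j
    exact step _ _ (by norm_num)
  · refine ⟨f (i', 0) - f (i, 0), fun j => ?_⟩
    have := const j
    funext x
    have e := congrFun this x
    simp only [Pi.sub_apply, Pi.add_apply] at e ⊢
    omega
  · intro j j' h
    exact hii' (Prod.ext_iff.mp (hinj h)).1
end
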